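/- arXiv:2401.16491 — 3 statements merged into one kernel-verified Lean document; each statement's English description precedes it below -/
import Mathlib

section
/- Let 0 < ξ = γ+1 < ω₁ be a successor ordinal and let A ∈ MAX(S_ξ). Then there exist unique sets A_1, …, A_{min A} ∈ MAX(S_γ) such that A_1 < A_2 < ⋯ < A_{min A} and A = A_1 ∪ A_2 ∪ ⋯ ∪ A_{min A}. -/
noncomputable section

open scoped Classical

/-- The first uncountable ordinal. -/
def omegaOne : Ordinal := (Cardinal.aleph 1).ord

/-- `A < B` for finite sets of naturals: every element of `A` is smaller than every
element of `B` (i.e. `max A < min B`, with the conventions `∅ < B` and `A < ∅`). -/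
def finLT (A B : Finset ℕ) : Prop := ∀ a ∈ A, ∀ b ∈ B, a < b

/-- `n ≤ A`, i.e. `n ≤ min A` (with `min ∅ = ∞`). -/
def finLE (n : ℕ) (A : Finset ℕ) : Prop := ∀ a ∈ A, n ≤ a

/-- The successor step in the definition of the Schreier families:
unions `E_1 ∪ ⋯ ∪ E_n` with `n ≤ E_1 < E_2 < ⋯ < E_n` and each `E_i` a nonempty member
of `F` (the empty set arises from `n = 0`). -/
def succStep (F : Set (Finset ℕ)) : Set (Finset ℕ) :=
  {A | ∃ (n : ℕ) (E : Fin n → Finset ℕ),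
        (∀ i, E i ∈ F) ∧ (∀ i, (E i).Nonempty) ∧
        (∀ i j : Fin n, i < j → finLT (E i) (E j)) ∧
        (∀ i, finLE n (E i)) ∧ A = Finset.univ.biUnion E}

/-- A system of Schreier families `S ξ` for `ξ < ω₁`, together with the chosen
`ξ`-approximating sequences `α ξ ·` (indexed by `n ≥ 1`) for limit ordinals `ξ < ω₁`,
satisfying the standing assumptions:  each `α ξ n` is a successor ordinal in `[1, ξ)`,
the sequence strictly increases to `ξ`, `α ξ 1 = 1`, and whenever
`A, B ∈ S (α ξ n)` with `1 < A < B` then `A ∪ B ∈ S (α ξ (n+1))`. -/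
structure SchreierSystem where
  α : Ordinal → ℕ → Ordinal
  S : Ordinal → Set (Finset ℕ)
  S_zero : S 0 = {A : Finset ℕ | A = ∅ ∨ ∃ n : ℕ, A = {n}}
  S_succ : ∀ γ : Ordinal, S (γ + 1) = succStep (S γ)
  S_limit : ∀ ξ : Ordinal, Order.IsSuccLimit ξ → ξ < omegaOne →
    S ξ = {E : Finset ℕ | ∃ n : ℕ, 1 ≤ n ∧ finLE n E ∧ E ∈ S (α ξ n)}
  α_pos : ∀ ξ : Ordinal, Order.IsSuccLimit ξ → ξ < omegaOne → ∀ n : ℕ, 1 ≤ n → 1 ≤ α ξ n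
  α_lt : ∀ ξ : Ordinal, Order.IsSuccLimit ξ → ξ < omegaOne → ∀ n : ℕ, 1 ≤ n → α ξ n < ξ
  α_succOrd : ∀ ξ : Ordinal, Order.IsSuccLimit ξ → ξ < omegaOne → ∀ n : ℕ, 1 ≤ n →
    ∃ β : Ordinal, α ξ n = β + 1
  α_mono : ∀ ξ : Ordinal, Order.IsSuccLimit ξ → ξ < omegaOne → ∀ n : ℕ, 1 ≤ n → α ξ n < α ξ (n + 1)
  α_tendsto : ∀ ξ : Ordinal, Order.IsSuccLimit ξ → ξ < omegaOne → ∀ β : Ordinal, β < ξ →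
    ∃ n : ℕ, 1 ≤ n ∧ β < α ξ n
  α_one : ∀ ξ : Ordinal, Order.IsSuccLimit ξ → ξ < omegaOne → α ξ 1 = 1
  α_union : ∀ ξ : Ordinal, Order.IsSuccLimit ξ → ξ < omegaOne → ∀ n : ℕ, 1 ≤ n →
    ∀ A B : Finset ℕ, A ∈ S (α ξ n) → B ∈ S (α ξ n) → finLE 2 A → finLT A B →
      A ∪ B ∈ S (α ξ (n + 1))

/-- `A` is a maximal element of the family `F` (with respect to inclusion). -/
def MaxIn (F : Set (Finset ℕ)) (A : Finset ℕ) : Prop :=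
  A ∈ F ∧ ∀ B ∈ F, A ⊆ B → B = A

/-! ### Auxiliary lemmas -/

/-- Pieces of a decomposition are pairwise "disjoint": an element of `P i` is not in `P j`. -/
lemma pieces_not_mem {r : ℕ} {P : Fin r → Finset ℕ}
    (hlt : ∀ i j : Fin r, i < j → finLT (P i) (P j)) {i j : Fin r} (hij : i ≠ j)
    {x : ℕ} (hx : x ∈ P i) : x ∉ P j := by
  intro hxj
  rcases lt_or_gt_of_ne hij with h | h
  · exact lt_irrefl x (hlt i j h x hx x hxj)
  · exact lt_irrefl x (hlt j i h x hxj x hx)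

/-- Replacement property for a family `F`: any element `y` of a member `X` may be replaced
by any `m ≥ 1` exceeding all remaining elements of `X`. -/
def RepProp (F : Set (Finset ℕ)) : Prop :=
  ∀ X ∈ F, ∀ y ∈ X, ∀ m : ℕ, 1 ≤ m → (∀ x ∈ X.erase y, x < m) →
    (X.erase y ∪ {m}) ∈ F

section
variable (𝒮 : SchreierSystem)

lemma ord_lt_add_one (β : Ordinal) : β < β + 1 := by
  rw [Ordinal.add_one_eq_succ]; exact Order.lt_succ β

lemma singleton_succStep {F : Set (Finset ℕ)} {k : ℕ} (hk : 1 ≤ k)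
    (h : ({k} : Finset ℕ) ∈ F) : ({k} : Finset ℕ) ∈ succStep F := by
  refine ⟨1, fun _ => {k}, fun _ => h, fun _ => ⟨k, Finset.mem_singleton_self k⟩,
    ?_, ?_, ?_⟩
  · intro i j hij
    have := i.isLt; have := j.isLt
    have h2 := Fin.lt_iff_val_lt_val.mp hij
    omega
  · intro i a ha
    simp only [Finset.mem_singleton] at ha
    omega
  · simp

lemma singleton_mem' :
    ∀ γ : Ordinal, γ < omegaOne → ∀ k : ℕ, 1 ≤ k → ({k} : Finset ℕ) ∈ 𝒮.S γ := by
  intro γ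
  induction γ using Ordinal.induction with
  | h γ IH =>
    intro hγ k hk
    rcases Ordinal.zero_or_succ_or_isSuccLimit γ with h0 | ⟨β, hβ⟩ | hlim
    · subst h0
      rw [𝒮.S_zero]
      exact Or.inr ⟨k, rfl⟩
    · have hβ' : γ = β + 1 := by rw [← hβ, Ordinal.add_one_eq_succ]
      subst hβ'
      rw [𝒮.S_succ]
      exact singleton_succStep hk
        (IH β (ord_lt_add_one β) (lt_trans (ord_lt_add_one β) hγ) k hk)
    · rw [𝒮.S_limit γ hlim hγ]
      refine ⟨1, le_refl 1, ?_, ?_⟩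
      · intro a ha; simp only [Finset.mem_singleton] at ha; omega
      · rw [𝒮.α_one γ hlim hγ, show (1 : Ordinal) = 0 + 1 from (zero_add 1).symm,
          𝒮.S_succ]
        refine singleton_succStep hk ?_
        rw [𝒮.S_zero]
        exact Or.inr ⟨k, rfl⟩

end

section
variable (𝒮 : SchreierSystem)

lemma hereditary_succStep {F : Set (Finset ℕ)} (hF : ∀ X ∈ F, ∀ Y ⊆ X, Y ∈ F)
    {A : Finset ℕ} (hA : A ∈ succStep F) {B : Finset ℕ} (hBA : B ⊆ A) :
    B ∈ succStep F := by
  obtain ⟨r, P, hPF, hPne, hPlt, hPle, hAeq⟩ := hA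
  classical
  set T : Finset (Fin r) := Finset.univ.filter (fun j => (B ∩ P j).Nonempty) with hT
  set k := T.card with hk
  have hkr : k ≤ r := le_trans (Finset.card_le_card (Finset.filter_subset _ _)) (by simp)
  set iso := T.orderIsoOfFin rfl with hiso
  refine ⟨k, fun i => B ∩ P (iso i : Fin r), ?_, ?_, ?_, ?_, ?_⟩
  · intro i
    exact hF _ (hPF _) _ (Finset.inter_subset_right)
  · intro i
    exact (Finset.mem_filter.mp (iso i).2).2
  · intro i j hij a ha b hb
    have hij' : ((iso i : Fin r)) < ((iso j : Fin r)) := by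
      have := iso.strictMono hij
      exact this
    exact hPlt _ _ hij' a (Finset.mem_of_mem_inter_right ha)
      b (Finset.mem_of_mem_inter_right hb)
  · intro i x hx
    exact le_trans hkr (hPle _ x (Finset.mem_of_mem_inter_right hx))
  · apply Finset.ext
    intro x
    simp only [Finset.mem_biUnion, Finset.mem_univ, true_and]
    constructor
    · intro hxB
      have hxA : x ∈ A := hBA hxB
      rw [hAeq] at hxA
      simp only [Finset.mem_biUnion, Finset.mem_univ, true_and] at hxA
      obtain ⟨j, hj⟩ := hxA
      have hjT : j ∈ T := by
        rw [hT, Finset.mem_filter]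
        exact ⟨Finset.mem_univ _, ⟨x, Finset.mem_inter.mpr ⟨hxB, hj⟩⟩⟩
      obtain ⟨i, hi⟩ := iso.surjective ⟨j, hjT⟩
      exact ⟨i, Finset.mem_inter.mpr ⟨hxB, by rw [hi]; exact hj⟩⟩
    · rintro ⟨i, hi⟩
      exact Finset.mem_of_mem_inter_left hi

lemma hereditary' :
    ∀ γ : Ordinal, γ < omegaOne → ∀ A ∈ 𝒮.S γ, ∀ B ⊆ A, B ∈ 𝒮.S γ := by
  intro γ
  induction γ using Ordinal.induction with
  | h γ IH =>
    intro hγ A hA B hBA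
    rcases Ordinal.zero_or_succ_or_isSuccLimit γ with h0 | ⟨β, hβ⟩ | hlim
    · subst h0
      rw [𝒮.S_zero] at hA ⊢
      rcases hA with h | ⟨n, h⟩
      · subst h
        exact Or.inl (Finset.subset_empty.mp hBA)
      · subst h
        rcases Finset.subset_singleton_iff.mp hBA with h | h
        · exact Or.inl h
        · exact Or.inr ⟨n, h⟩
    · have hβ' : γ = β + 1 := by rw [← hβ, Ordinal.add_one_eq_succ]
      subst hβ'
      rw [𝒮.S_succ] at hA ⊢
      exact hereditary_succStep
        (fun X hX Y hY => IH β (ord_lt_add_one β) (lt_trans (ord_lt_add_one β) hγ) X hX Y hY)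
        hA hBA
    · rw [𝒮.S_limit γ hlim hγ] at hA ⊢
      obtain ⟨n, hn1, hnA, hmem⟩ := hA
      refine ⟨n, hn1, fun x hx => hnA x (hBA hx), ?_⟩
      exact IH _ (𝒮.α_lt γ hlim hγ n hn1) (lt_trans (𝒮.α_lt γ hlim hγ n hn1) hγ) A hmem B hBA

end

section

lemma casc' (F : Set (Finset ℕ)) (hREP : RepProp F)
    (r : ℕ) (P : Fin r → Finset ℕ) (hPF : ∀ j, P j ∈ F) (hPne : ∀ j, (P j).Nonempty)
    (hPlt : ∀ i j : Fin r, i < j → finLT (P i) (P j)) (hPle : ∀ j, finLE r (P j))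
    (j0 : Fin r) (M : ℕ) (hM : ∀ j : Fin r, j0 < j → ∀ x ∈ P j, x < M) (hM1 : 1 ≤ M)
    (c0 : ℕ)
    (hc0 : c0 = if h : (j0 : ℕ) + 1 < r then (P ⟨(j0 : ℕ) + 1, h⟩).min' (hPne _) else M)
    (Y : Finset ℕ) (hYF : Y ∈ F) (hc0Y : c0 ∈ Y) (hYle : ∀ v ∈ Y, v ≤ c0)
    (hYlow : ∀ j : Fin r, j < j0 → finLT (P j) Y) (hYr : finLE r Y) :
    ((Finset.univ.biUnion P \ P j0) ∪ Y ∪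
      (if (j0 : ℕ) + 1 < r then {M} else ∅)) ∈ succStep F := by
  classical
  have hr : 0 < r := j0.pos
  set cc : Fin r → ℕ := fun j =>
    if h : (j : ℕ) + 1 < r then (P ⟨(j : ℕ) + 1, h⟩).min' (hPne _) else M with hccdef
  have hc0cc : c0 = cc j0 := hc0
  -- min' is monotone along the pieces
  have hmin'_mono : ∀ i j : Fin r, i ≤ j → (P i).min' (hPne i) ≤ (P j).min' (hPne j) := by
    intro i j hij
    rcases lt_or_eq_of_le hij with h | h
    · exact le_of_lt (hPlt i j h _ (Finset.min'_mem _ _) _ (Finset.min'_mem _ _))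
    · subst h; exact le_refl _
  -- every element of P j (for j > j0) is < cc j
  have hcc_gt : ∀ j : Fin r, j0 < j → ∀ x ∈ P j, x < cc j := by
    intro j hj x hx
    rw [hccdef]
    dsimp only
    split
    · exact hPlt j _ (by rw [Fin.lt_def]; simp) x hx _ (Finset.min'_mem _ _)
    · exact hM j hj x hx
  -- cc j ≥ r for j ≥ j0
  have hcc_ge : ∀ j : Fin r, j0 ≤ j → r ≤ cc j := by
    intro j hj
    rw [hccdef]
    dsimp only
    split
    · exact hPle _ _ (Finset.min'_mem _ _)
    · rename_i h
      rcases lt_or_eq_of_le hj with h' | h'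
      · exact le_of_lt (lt_of_le_of_lt (hPle j _ (hPne j).choose_spec) (hM j h' _ (hPne j).choose_spec))
      · -- j = j0 is the last piece, cc j0 = M = c0 ∈ Y
        subst h'
        have : c0 = M := by rw [hc0]; simp [h]
        rw [← this]
        exact hYr c0 hc0Y
  have hcc1 : ∀ j : Fin r, j0 ≤ j → 1 ≤ cc j := fun j hj => le_trans hr (hcc_ge j hj)
  -- the new pieces
  set Q : Fin r → Finset ℕ := fun j =>
    if j < j0 then P j else if j = j0 then Y
    else ((P j).erase ((P j).min' (hPne j))) ∪ {cc j} with hQdef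
  have hQlt : ∀ j, j < j0 → Q j = P j := by
    intro j hj; rw [hQdef]; simp [hj]
  have hQ0 : Q j0 = Y := by rw [hQdef]; simp
  have hQgt : ∀ j, j0 < j → Q j = ((P j).erase ((P j).min' (hPne j))) ∪ {cc j} := by
    intro j hj
    rw [hQdef]
    simp [not_lt_of_gt hj, Fin.ne_of_gt hj]
  -- element bounds for the upper pieces
  have hQgt_mem : ∀ j (hj : j0 < j), ∀ x ∈ Q j,
      (P j).min' (hPne j) < x ∧ x ≤ cc j := by
    intro j hj x hx
    rw [hQgt j hj, Finset.mem_union, Finset.mem_singleton] at hx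
    rcases hx with hx | hx
    · exact ⟨Finset.min'_lt_of_mem_erase_min' _ _ hx,
        le_of_lt (hcc_gt j hj x (Finset.mem_of_mem_erase hx))⟩
    · subst hx
      exact ⟨hcc_gt j hj _ (Finset.min'_mem _ _), le_refl _⟩
  -- membership in F
  have hQF : ∀ j, Q j ∈ F := by
    intro j
    rcases lt_trichotomy j j0 with h | h | h
    · rw [hQlt j h]; exact hPF j
    · subst h; rw [hQ0]; exact hYF
    · rw [hQgt j h]
      exact hREP (P j) (hPF j) _ (Finset.min'_mem _ _) (cc j) (hcc1 j (le_of_lt h))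
        (fun x hx => hcc_gt j h x (Finset.mem_of_mem_erase hx))
  have hQne : ∀ j, (Q j).Nonempty := by
    intro j
    rcases lt_trichotomy j j0 with h | h | h
    · rw [hQlt j h]; exact hPne j
    · subst h; rw [hQ0]; exact ⟨c0, hc0Y⟩
    · rw [hQgt j h]
      exact ⟨cc j, Finset.mem_union_right _ (Finset.mem_singleton_self _)⟩
  -- the ordering
  have hQord : ∀ i j : Fin r, i < j → finLT (Q i) (Q j) := by
    intro i j hij x hx y hy
    rcases lt_trichotomy j j0 with hj | hj | hj
    · -- j < j0, hence i < j0
      have hi : i < j0 := lt_trans hij hj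
      rw [hQlt i hi] at hx; rw [hQlt j hj] at hy
      exact hPlt i j hij x hx y hy
    · -- j = j0 : i < j0
      subst hj
      rw [hQlt i hij] at hx; rw [hQ0] at hy
      exact hYlow i hij x hx y hy
    · -- j > j0
      have hy' := hQgt_mem j hj y hy
      rcases lt_trichotomy i j0 with hi | hi | hi
      · rw [hQlt i hi] at hx
        exact lt_of_le_of_lt (le_of_lt (hPlt i j (lt_trans hi hj) x hx _
          (Finset.min'_mem _ _))) hy'.1
      · -- i = j0 < j
        subst hi
        rw [hQ0] at hx
        have hsucc : (i : ℕ) + 1 < r := by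
          have := hj; rw [Fin.lt_def] at this
          have := j.isLt
          omega
        have h1 : x ≤ cc i := le_trans (hYle x hx) (le_of_eq hc0cc)
        have h2 : cc i = (P ⟨(i : ℕ) + 1, hsucc⟩).min' (hPne _) := by
          rw [hccdef]; simp [hsucc]
        have h3 : (P ⟨(i : ℕ) + 1, hsucc⟩).min' (hPne _) ≤ (P j).min' (hPne j) := by
          apply hmin'_mono
          rw [Fin.le_def]
          simp only []
          rw [Fin.lt_def] at hj
          omega
        calc x ≤ (P j).min' (hPne j) := by rw [h2] at h1; exact le_trans h1 h3
        _ < y := hy'.1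
      · -- j0 < i < j
        have hx' := hQgt_mem i hi x hx
        have hsucc : (i : ℕ) + 1 < r := by
          rw [Fin.lt_def] at hij
          have := j.isLt
          omega
        have h2 : cc i = (P ⟨(i : ℕ) + 1, hsucc⟩).min' (hPne _) := by
          rw [hccdef]; simp [hsucc]
        have h3 : (P ⟨(i : ℕ) + 1, hsucc⟩).min' (hPne _) ≤ (P j).min' (hPne j) := by
          apply hmin'_mono
          rw [Fin.le_def]
          simp only []
          rw [Fin.lt_def] at hij
          omega
        calc x ≤ (P j).min' (hPne j) := le_trans (le_trans hx'.2 (le_of_eq h2)) h3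
        _ < y := hy'.1
  -- the lower bound r
  have hQle : ∀ j, finLE r (Q j) := by
    intro j x hx
    rcases lt_trichotomy j j0 with h | h | h
    · rw [hQlt j h] at hx; exact hPle j x hx
    · subst h; rw [hQ0] at hx; exact hYr x hx
    · rw [hQgt j h, Finset.mem_union, Finset.mem_singleton] at hx
      rcases hx with hx | hx
      · exact hPle j x (Finset.mem_of_mem_erase hx)
      · subst hx; exact hcc_ge j (le_of_lt h)
  -- the union identity
  have hUnion : Finset.univ.biUnion Q =
      (Finset.univ.biUnion P \ P j0) ∪ Y ∪
        (if (j0 : ℕ) + 1 < r then {M} else ∅) := by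
    ext x
    simp only [Finset.mem_biUnion, Finset.mem_univ, true_and, Finset.mem_union,
      Finset.mem_sdiff]
    constructor
    · rintro ⟨j, hj⟩
      rcases lt_trichotomy j j0 with h | h | h
      · rw [hQlt j h] at hj
        exact Or.inl (Or.inl ⟨⟨j, hj⟩, pieces_not_mem hPlt (Fin.ne_of_lt h) hj⟩)
      · subst h; rw [hQ0] at hj; exact Or.inl (Or.inr hj)
      · rw [hQgt j h, Finset.mem_union, Finset.mem_singleton] at hj
        rcases hj with hj | hj
        · have hj' := Finset.mem_of_mem_erase hj
          exact Or.inl (Or.inl ⟨⟨j, hj'⟩, pieces_not_mem hPlt (Fin.ne_of_gt h) hj'⟩)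
        · subst hj
          rw [hccdef]
          dsimp only
          split
          · rename_i hlt
            refine Or.inl (Or.inl ⟨⟨_, Finset.min'_mem _ _⟩, ?_⟩)
            refine pieces_not_mem hPlt ?_ (Finset.min'_mem (P ⟨(j : ℕ) + 1, hlt⟩) _)
            intro hEq
            have := congrArg Fin.val hEq
            rw [Fin.lt_def] at h
            simp only [] at this
            omega
          · rename_i hnlt
            have hcond : (j0 : ℕ) + 1 < r := by
              rw [Fin.lt_def] at h
              have := j.isLt
              omega
            rw [if_pos hcond]
            exact Or.inr (Finset.mem_singleton_self M)
    · rintro ((⟨⟨j, hxj⟩, hxn0⟩ | hxY) | hxM)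
      ·
        have hjne : j ≠ j0 := fun hEq => hxn0 (hEq ▸ hxj)
        rcases lt_or_gt_of_ne hjne with h | h
        · exact ⟨j, by rw [hQlt j h]; exact hxj⟩
        · by_cases hmin : x = (P j).min' (hPne j)
          · -- x is the min of piece j; it reappears as cc (j-1)
            have hval : (j0 : ℕ) < (j : ℕ) := h
            have hj1 : 1 ≤ (j : ℕ) := by omega
            have hilt : (j : ℕ) - 1 < r := by have := j.isLt; omega
            set i : Fin r := ⟨(j : ℕ) - 1, hilt⟩ with hidef
            have hisucc : (i : ℕ) + 1 < r := by
              simp only [hidef]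
              have := j.isLt
              omega
            have hfin : (⟨(i : ℕ) + 1, hisucc⟩ : Fin r) = j := by
              apply Fin.ext
              simp only [hidef]
              omega
            have hcci : cc i = x := by
              rw [hccdef]
              dsimp only
              rw [dif_pos hisucc]
              rw [hmin]
              congr 1
              exact congrArg P hfin
            have hij0 : j0 ≤ i := by
              rw [Fin.le_def]
              have : (i : ℕ) = (j : ℕ) - 1 := rfl
              omega
            rcases lt_or_eq_of_le hij0 with h' | h'
            · exact ⟨i, by
                rw [hQgt i h', Finset.mem_union, Finset.mem_singleton]
                exact Or.inr hcci.symm⟩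
            · refine ⟨j0, ?_⟩
              rw [hQ0]
              have : c0 = x := by rw [hc0cc, h']; exact hcci
              exact this ▸ hc0Y
          · exact ⟨j, by
              rw [hQgt j h, Finset.mem_union]
              exact Or.inl (Finset.mem_erase.mpr ⟨hmin, hxj⟩)⟩
      · exact ⟨j0, by rw [hQ0]; exact hxY⟩
      · by_cases hcond : (j0 : ℕ) + 1 < r
        · rw [if_pos hcond, Finset.mem_singleton] at hxM
          subst hxM
          have hlast : r - 1 < r := by omega
          set l : Fin r := ⟨r - 1, hlast⟩ with hldef
          have hl : j0 < l := by
            rw [Fin.lt_def]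
            simp only [hldef]
            omega
          refine ⟨l, ?_⟩
          rw [hQgt l hl, Finset.mem_union, Finset.mem_singleton]
          right
          rw [hccdef]
          dsimp only
          rw [dif_neg (by have hlv : (l : ℕ) = r - 1 := rfl; omega)]
        · rw [if_neg hcond] at hxM
          exact absurd hxM (Finset.notMem_empty x)
  exact ⟨r, Q, hQF, hQne, hQord, hQle, hUnion.symm⟩
end

section
variable (𝒮 : SchreierSystem)

lemma rep' : ∀ γ : Ordinal, γ < omegaOne → RepProp (𝒮.S γ) := by
  intro γ
  induction γ using Ordinal.induction with
  | h γ IH =>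
    intro hγ X hX y hy m hm1 hbound
    by_cases herase : X.erase y = ∅
    · -- X = {y} : the result is the singleton {m}
      have hXy : X = {y} := by
        apply Finset.eq_singleton_iff_unique_mem.mpr
        refine ⟨hy, fun x hx => ?_⟩
        by_contra hne
        exact (Finset.notMem_empty x) (herase ▸ Finset.mem_erase.mpr ⟨hne, hx⟩)
      rw [herase, Finset.empty_union]
      exact singleton_mem' 𝒮 γ hγ m hm1
    by_cases hmy : m = y
    · subst hmy
      have : X.erase m ∪ {m} = X := by
        rw [Finset.union_comm, ← Finset.insert_eq, Finset.insert_erase hy]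
      rw [this]
      exact hX
    have herase' : (X.erase y).Nonempty := Finset.nonempty_iff_ne_empty.mpr herase
    rcases Ordinal.zero_or_succ_or_isSuccLimit γ with h0 | ⟨β, hβ⟩ | hlim
    · -- impossible : X would be a singleton or empty
      exfalso
      subst h0
      rw [𝒮.S_zero] at hX
      rcases hX with h | ⟨k, h⟩
      · subst h; exact Finset.notMem_empty y hy
      · subst h
        have : y = k := Finset.mem_singleton.mp hy
        subst this
        simp at herase
    · -- successor case : the cascade
      have hβ' : γ = β + 1 := by rw [← hβ, Ordinal.add_one_eq_succ]
      subst hβ'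
      have hβω : β < omegaOne := lt_trans (ord_lt_add_one β) hγ
      have IHrep : RepProp (𝒮.S β) := IH β (ord_lt_add_one β) hβω
      rw [𝒮.S_succ] at hX ⊢
      obtain ⟨r, P, hPF, hPne, hPlt, hPle, hXeq⟩ := hX
      have hyX : ∃ j0 : Fin r, y ∈ P j0 := by
        have := hy
        rw [hXeq] at this
        simpa using this
      obtain ⟨j0, hyj0⟩ := hyX
      -- elements of X other than y are < m
      have hbound' : ∀ (j : Fin r), ∀ x ∈ P j, x ≠ y → x < m := by
        intro j x hx hne
        apply hbound
        refine Finset.mem_erase.mpr ⟨hne, ?_⟩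
        rw [hXeq]
        exact Finset.mem_biUnion.mpr ⟨j, Finset.mem_univ j, hx⟩
      have hrm : r ≤ m := by
        obtain ⟨x, hx⟩ := herase'
        have hxX : x ∈ X := Finset.mem_of_mem_erase hx
        rw [hXeq] at hxX
        obtain ⟨j, _, hxj⟩ := Finset.mem_biUnion.mp hxX
        exact le_of_lt (lt_of_le_of_lt (hPle j x hxj) (hbound x hx))
      set c0 : ℕ :=
        if h : (j0 : ℕ) + 1 < r then (P ⟨(j0 : ℕ) + 1, h⟩).min' (hPne _) else m with hc0def
      have hc0_gt : ∀ x ∈ P j0, x ≠ y → x < c0 := by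
        intro x hx hne
        rw [hc0def]
        split
        · exact hPlt j0 _ (by rw [Fin.lt_def]; simp) x hx _ (Finset.min'_mem _ _)
        · exact hbound' j0 x hx hne
      have hc0r : r ≤ c0 := by
        rw [hc0def]
        split
        · exact hPle _ _ (Finset.min'_mem _ _)
        · exact hrm
      set Y : Finset ℕ := (P j0).erase y ∪ {c0} with hYdef
      have hYF : Y ∈ 𝒮.S β := by
        apply IHrep (P j0) (hPF j0) y hyj0 c0 (le_trans j0.pos hc0r)
        intro x hx
        exact hc0_gt x (Finset.mem_of_mem_erase hx) (Finset.ne_of_mem_erase hx)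
      have hc0Y : c0 ∈ Y := Finset.mem_union_right _ (Finset.mem_singleton_self _)
      have hYle : ∀ v ∈ Y, v ≤ c0 := by
        intro v hv
        rcases Finset.mem_union.mp hv with h | h
        · exact le_of_lt (hc0_gt v (Finset.mem_of_mem_erase h) (Finset.ne_of_mem_erase h))
        · exact le_of_eq (Finset.mem_singleton.mp h)
      have hYlow : ∀ j : Fin r, j < j0 → finLT (P j) Y := by
        intro j hj x hx v hv
        rcases Finset.mem_union.mp hv with h | h
        · exact hPlt j j0 hj x hx v (Finset.mem_of_mem_erase h)
        · have hveq : v = c0 := Finset.mem_singleton.mp h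
          subst hveq
          rw [hc0def]
          split
          · exact hPlt j _ (by rw [Fin.lt_def]; have := Fin.lt_def.mp hj; simp; omega)
              x hx _ (Finset.min'_mem _ _)
          · exact hbound' j x hx (fun hEq =>
              (pieces_not_mem hPlt (Fin.ne_of_lt hj) hx) (by rw [hEq]; exact hyj0))
      have hYr : finLE r Y := by
        intro v hv
        rcases Finset.mem_union.mp hv with h | h
        · exact hPle j0 v (Finset.mem_of_mem_erase h)
        · exact (Finset.mem_singleton.mp h) ▸ hc0r
      have hM : ∀ j : Fin r, j0 < j → ∀ x ∈ P j, x < m := by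
        intro j hj x hx
        exact hbound' j x hx (fun hEq => pieces_not_mem hPlt (Fin.ne_of_gt hj) hx (hEq ▸ hyj0))
      have hcasc := casc' (𝒮.S β) IHrep r P hPF hPne hPlt hPle j0 m hM hm1 c0 hc0def
        Y hYF hc0Y hYle hYlow hYr
      -- identify the resulting set with `X.erase y ∪ {m}`
      have hsets : (Finset.univ.biUnion P \ P j0) ∪ Y ∪
          (if (j0 : ℕ) + 1 < r then {m} else ∅) = X.erase y ∪ {m} := by
        ext z
        simp only [Finset.mem_union, Finset.mem_sdiff, Finset.mem_erase,
          Finset.mem_singleton, Finset.mem_biUnion, Finset.mem_univ, true_and]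
        constructor
        · rintro ((⟨⟨j, hzj⟩, hzn0⟩ | hzY) | hzM)
          · refine Or.inl ⟨?_, by rw [hXeq]; exact Finset.mem_biUnion.mpr ⟨j, Finset.mem_univ j, hzj⟩⟩
            intro hEq
            exact hzn0 (hEq ▸ hyj0)
          · rcases Finset.mem_union.mp hzY with h | h
            · refine Or.inl ⟨Finset.ne_of_mem_erase h, ?_⟩
              rw [hXeq]
              exact Finset.mem_biUnion.mpr ⟨j0, Finset.mem_univ j0, Finset.mem_of_mem_erase h⟩
            · have hzc : z = c0 := Finset.mem_singleton.mp h
              subst hzc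
              rw [hc0def]
              split
              · rename_i hcond
                refine Or.inl ⟨?_, ?_⟩
                · intro hEq
                  exact pieces_not_mem hPlt
                    (by intro hEq2; have := congrArg Fin.val hEq2; simp at this)
                    (Finset.min'_mem (P ⟨(j0 : ℕ) + 1, hcond⟩) _) (hEq ▸ hyj0)
                · rw [hXeq]
                  exact Finset.mem_biUnion.mpr ⟨_, Finset.mem_univ _, Finset.min'_mem _ _⟩
              · exact Or.inr rfl
          · split at hzM
            · exact Or.inr (Finset.mem_singleton.mp hzM)
            · exact absurd hzM (Finset.notMem_empty z)
        · rintro (⟨hzy, hzX⟩ | hzm)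
          · rw [hXeq] at hzX
            obtain ⟨j, _, hzj⟩ := Finset.mem_biUnion.mp hzX
            by_cases hj : j = j0
            · subst hj
              exact Or.inl (Or.inr (Finset.mem_union_left _ (Finset.mem_erase.mpr ⟨hzy, hzj⟩)))
            · exact Or.inl (Or.inl ⟨⟨j, hzj⟩, pieces_not_mem hPlt hj hzj⟩)
          · by_cases hcond : (j0 : ℕ) + 1 < r
            · rw [if_pos hcond]
              exact Or.inr (by rw [hzm]; exact Finset.mem_singleton_self m)
            · refine Or.inl (Or.inr ?_)
              have hcm : c0 = m := by rw [hc0def]; simp [hcond]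
              rw [hzm, ← hcm]
              exact hc0Y
      rw [← hsets]
      exact hcasc
    · -- limit case
      rw [𝒮.S_limit γ hlim hγ] at hX ⊢
      obtain ⟨n, hn1, hnX, hmem⟩ := hX
      have hαω : 𝒮.α γ n < omegaOne := lt_trans (𝒮.α_lt γ hlim hγ n hn1) hγ
      refine ⟨n, hn1, ?_, ?_⟩
      · intro x hx
        rcases Finset.mem_union.mp hx with h | h
        · exact hnX x (Finset.mem_of_mem_erase h)
        · obtain ⟨w, hw⟩ := herase'
          have : n ≤ w := hnX w (Finset.mem_of_mem_erase hw)
          have : w < m := hbound w hw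
          have := hnX w (Finset.mem_of_mem_erase hw)
          rw [Finset.mem_singleton.mp h]
          omega
      · exact IH _ (𝒮.α_lt γ hlim hγ n hn1) hαω X hmem y hy m hm1 hbound

end

section

/-- Uniqueness of decompositions into maximal, nonempty, increasing pieces. -/
lemma decomp_unique (F : Set (Finset ℕ)) (k : ℕ) (E G : Fin k → Finset ℕ)
    (hEmax : ∀ i, MaxIn F (E i)) (hGmax : ∀ i, MaxIn F (G i))
    (hElt : ∀ i j : Fin k, i < j → finLT (E i) (E j))
    (hGlt : ∀ i j : Fin k, i < j → finLT (G i) (G j))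
    (hunion : Finset.univ.biUnion E = Finset.univ.biUnion G) : E = G := by
  have key : ∀ v : ℕ, ∀ hv : v < k, E ⟨v, hv⟩ = G ⟨v, hv⟩ := by
    intro v
    induction v using Nat.strong_induction_on with
    | _ v IH =>
      intro hv
      set i : Fin k := ⟨v, hv⟩ with hidef
      -- an element of E i missing from G i dominates G i
      have claim1 : ∀ x ∈ E i, x ∉ G i → ∀ y ∈ G i, y < x := by
        intro x hx hxG y hy
        have hxU : x ∈ Finset.univ.biUnion G := by
          rw [← hunion]
          exact Finset.mem_biUnion.mpr ⟨i, Finset.mem_univ i, hx⟩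
        obtain ⟨j, _, hxj⟩ := Finset.mem_biUnion.mp hxU
        rcases lt_trichotomy j i with h | h | h
        · exfalso
          have hEG : E j = G j := by
            have hji := IH (j : ℕ) (by rw [Fin.lt_def] at h; exact h) j.isLt
            have : (⟨(j : ℕ), j.isLt⟩ : Fin k) = j := rfl
            rw [this] at hji
            exact hji
          have hxEj : x ∈ E j := by rw [hEG]; exact hxj
          exact pieces_not_mem hElt (Fin.ne_of_lt h) hxEj hx
        · exact absurd (h ▸ hxj) hxG
        · exact hGlt i j h y hy x hxj
      have claim2 : ∀ y ∈ G i, y ∉ E i → ∀ x ∈ E i, x < y := by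
        intro y hy hyE x hx
        have hyU : y ∈ Finset.univ.biUnion E := by
          rw [hunion]
          exact Finset.mem_biUnion.mpr ⟨i, Finset.mem_univ i, hy⟩
        obtain ⟨j, _, hyj⟩ := Finset.mem_biUnion.mp hyU
        rcases lt_trichotomy j i with h | h | h
        · exfalso
          have hEG : E j = G j := by
            have hji := IH (j : ℕ) (by rw [Fin.lt_def] at h; exact h) j.isLt
            have : (⟨(j : ℕ), j.isLt⟩ : Fin k) = j := rfl
            rw [this] at hji
            exact hji
          have hyGj : y ∈ G j := by rw [← hEG]; exact hyj
          exact pieces_not_mem hGlt (Fin.ne_of_lt h) hyGj hy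
        · exact absurd (h ▸ hyj) hyE
        · exact hElt i j h x hx y hyj
      -- comparability
      have hsub : G i ⊆ E i := by
        by_contra hGE
        obtain ⟨y, hyG, hyE⟩ := Finset.not_subset.mp hGE
        have hEG : E i ⊆ G i := by
          by_contra hEGn
          obtain ⟨x, hxE, hxG⟩ := Finset.not_subset.mp hEGn
          have h1 := claim1 x hxE hxG y hyG
          have h2 := claim2 y hyG hyE x hxE
          omega
        -- E i ⊆ G i, so by maximality G i = E i, contradicting y ∉ E i
        have := (hEmax i).2 (G i) (hGmax i).1 hEG
        exact hyE (this ▸ hyG)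
      exact (hGmax i).2 (E i) (hEmax i).1 hsub
  funext i
  have := key (i : ℕ) i.isLt
  have hi : (⟨(i : ℕ), i.isLt⟩ : Fin k) = i := rfl
  rw [hi] at this
  exact this

end

section

lemma exists_decomp (𝒮 : SchreierSystem) (γ : Ordinal)
    (hγ : γ + 1 < omegaOne) (A : Finset ℕ) (hA : MaxIn (𝒮.S (γ + 1)) A)
    (hAne : A.Nonempty) :
    ∃ P : Fin (A.min' hAne) → Finset ℕ,
      (∀ i, MaxIn (𝒮.S γ) (P i)) ∧ (∀ i, (P i).Nonempty) ∧
      (∀ i j, i < j → finLT (P i) (P j)) ∧ A = Finset.univ.biUnion P := by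
  classical
  have hγω : γ < omegaOne := lt_trans (ord_lt_add_one γ) hγ
  have hA1 := hA.1
  rw [𝒮.S_succ] at hA1
  obtain ⟨n, P, hPF, hPne, hPlt, hPle, hAeq⟩ := hA1
  set m := A.min' hAne with hmdef
  set Mx := A.max' hAne with hMxdef
  set M := Mx + 1 with hMdef
  have hxMx : ∀ x ∈ A, x ≤ Mx := fun x hx => Finset.le_max' A x hx
  have hMA : M ∉ A := fun h => by have := hxMx M h; omega
  have hxM : ∀ x ∈ A, x < M := fun x hx => by have := hxMx x hx; omega
  have hmx : ∀ x ∈ A, m ≤ x := fun x hx => Finset.min'_le A x hx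
  have hn1 : 1 ≤ n := by
    obtain ⟨a, ha⟩ := hAne
    rw [hAeq] at ha
    obtain ⟨j, _, _⟩ := Finset.mem_biUnion.mp ha
    exact j.pos
  have hmemA : ∀ (j : Fin n), ∀ x ∈ P j, x ∈ A := by
    intro j x hx
    rw [hAeq]
    exact Finset.mem_biUnion.mpr ⟨j, Finset.mem_univ j, hx⟩
  have hnm : n ≤ m := by
    have hmA : m ∈ A := A.min'_mem hAne
    rw [hAeq] at hmA
    obtain ⟨j, _, hj⟩ := Finset.mem_biUnion.mp hmA
    exact hPle j m hj
  have hmMx : m ≤ Mx := hmx Mx (A.max'_mem hAne)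
  have hM1 : 1 ≤ M := by omega
  -- step 1 : n = min A
  have hmn : m ≤ n := by
    by_contra hlt
    push_neg at hlt
    set P' : Fin (n + 1) → Finset ℕ :=
      fun i => if h : (i : ℕ) < n then P ⟨(i : ℕ), h⟩ else {M} with hP'def
    have hmem' : A ∪ {M} ∈ succStep (𝒮.S γ) := by
      refine ⟨n + 1, P', ?_, ?_, ?_, ?_, ?_⟩
      · intro i
        rw [hP'def]; dsimp only; split
        · exact hPF _
        · exact singleton_mem' 𝒮 γ hγω M hM1
      · intro i
        rw [hP'def]; dsimp only; split
        · exact hPne _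
        · exact ⟨M, Finset.mem_singleton_self M⟩
      · intro i j hij x hx y hy
        rw [hP'def] at hx hy; dsimp only at hx hy
        by_cases hj : (j : ℕ) < n
        · rw [dif_pos hj] at hy
          have hi : (i : ℕ) < n := lt_trans (Fin.lt_def.mp hij) hj
          rw [dif_pos hi] at hx
          exact hPlt _ _ (by rw [Fin.lt_def]; exact Fin.lt_def.mp hij) x hx y hy
        · rw [dif_neg hj] at hy
          have hyM : y = M := Finset.mem_singleton.mp hy
          by_cases hi : (i : ℕ) < n
          · rw [dif_pos hi] at hx
            subst hyM
            exact hxM x (hmemA _ x hx)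
          · exfalso
            have := Fin.lt_def.mp hij
            have := j.isLt
            omega
      · intro i x hx
        rw [hP'def] at hx; dsimp only at hx
        split at hx
        · have := hmx x (hmemA _ x hx); omega
        · have := Finset.mem_singleton.mp hx; omega
      · ext x
        simp only [Finset.mem_union, Finset.mem_singleton, Finset.mem_biUnion,
          Finset.mem_univ, true_and]
        constructor
        · rintro (hx | hx)
          · rw [hAeq] at hx
            obtain ⟨j, _, hj⟩ := Finset.mem_biUnion.mp hx
            refine ⟨⟨(j : ℕ), by omega⟩, ?_⟩
            rw [hP'def]; dsimp only
            rw [dif_pos j.isLt]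
            exact hj
          · refine ⟨⟨n, by omega⟩, ?_⟩
            rw [hP'def]; dsimp only
            rw [dif_neg (by omega)]
            exact Finset.mem_singleton.mpr hx
        · rintro ⟨i, hi⟩
          rw [hP'def] at hi; dsimp only at hi
          split at hi
          · exact Or.inl (hmemA _ x hi)
          · exact Or.inr (Finset.mem_singleton.mp hi)
    have hcontra : A ∪ {M} = A :=
      hA.2 (A ∪ {M}) (by rw [𝒮.S_succ]; exact hmem') Finset.subset_union_left
    exact hMA (by rw [← hcontra]; exact Finset.mem_union_right _ (Finset.mem_singleton_self M))
  have hcast : m = n := le_antisymm hmn hnm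
  -- step 2 : every piece is maximal
  have hPmax : ∀ j0 : Fin n, MaxIn (𝒮.S γ) (P j0) := by
    intro j0
    refine ⟨hPF j0, ?_⟩
    intro B hB hsub
    by_contra hBne
    have hss : P j0 ⊂ B := Finset.ssubset_iff_subset_ne.mpr ⟨hsub, fun h => hBne h.symm⟩
    obtain ⟨b, hbB, hbP⟩ := Finset.exists_of_ssubset hss
    have hins : insert b (P j0) ∈ 𝒮.S γ :=
      hereditary' 𝒮 γ hγω B hB _ (Finset.insert_subset hbB hsub)
    set c0 : ℕ :=
      if h : (j0 : ℕ) + 1 < n then (P ⟨(j0 : ℕ) + 1, h⟩).min' (hPne _) else M with hc0def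
    have hc0gt : ∀ x ∈ P j0, x < c0 := by
      intro x hx
      rw [hc0def]; split
      · exact hPlt j0 _ (by rw [Fin.lt_def]; simp) x hx _ (Finset.min'_mem _ _)
      · exact hxM x (hmemA j0 x hx)
    have hc0n : n ≤ c0 := by
      rw [hc0def]; split
      · exact hPle _ _ (Finset.min'_mem _ _)
      · omega
    have hc01 : 1 ≤ c0 := le_trans hn1 hc0n
    set Y : Finset ℕ := P j0 ∪ {c0} with hYdef
    have hYF : Y ∈ 𝒮.S γ := by
      have hrep := rep' 𝒮 γ hγω (insert b (P j0)) hins b (Finset.mem_insert_self b _)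
        c0 hc01 (by
          intro x hx
          rw [Finset.erase_insert hbP] at hx
          exact hc0gt x hx)
      rw [Finset.erase_insert hbP] at hrep
      exact hrep
    have hc0Y : c0 ∈ Y := Finset.mem_union_right _ (Finset.mem_singleton_self _)
    have hYle : ∀ v ∈ Y, v ≤ c0 := by
      intro v hv
      rcases Finset.mem_union.mp hv with h | h
      · exact le_of_lt (hc0gt v h)
      · exact le_of_eq (Finset.mem_singleton.mp h)
    have hYlow : ∀ j : Fin n, j < j0 → finLT (P j) Y := by
      intro j hj x hx v hv
      rcases Finset.mem_union.mp hv with h | h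
      · exact hPlt j j0 hj x hx v h
      · rw [Finset.mem_singleton.mp h, hc0def]
        split
        · exact hPlt j _ (by rw [Fin.lt_def]; have := Fin.lt_def.mp hj; simp; omega)
            x hx _ (Finset.min'_mem _ _)
        · exact hxM x (hmemA j x hx)
    have hYr : finLE n Y := by
      intro v hv
      rcases Finset.mem_union.mp hv with h | h
      · exact hPle j0 v h
      · exact (Finset.mem_singleton.mp h) ▸ hc0n
    have hcasc := casc' (𝒮.S γ) (rep' 𝒮 γ hγω) n P hPF hPne hPlt hPle j0 M
      (fun j _ x hx => hxM x (hmemA j x hx)) hM1 c0 hc0def Y hYF hc0Y hYle hYlow hYr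
    have hsets : (Finset.univ.biUnion P \ P j0) ∪ Y ∪
        (if (j0 : ℕ) + 1 < n then {M} else ∅) = A ∪ {M} := by
      ext z
      simp only [Finset.mem_union, Finset.mem_sdiff, Finset.mem_singleton,
        Finset.mem_biUnion, Finset.mem_univ, true_and]
      constructor
      · rintro ((⟨⟨j, hzj⟩, _⟩ | hzY) | hzM)
        · exact Or.inl (hmemA j z hzj)
        · rcases Finset.mem_union.mp hzY with h | h
          · exact Or.inl (hmemA j0 z h)
          · rw [Finset.mem_singleton.mp h, hc0def]
            split
            · exact Or.inl (hmemA _ _ (Finset.min'_mem _ _))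
            · exact Or.inr rfl
        · split at hzM
          · exact Or.inr (Finset.mem_singleton.mp hzM)
          · exact absurd hzM (Finset.notMem_empty z)
      · rintro (hzA | hzM)
        · have hzA' := hzA
          rw [hAeq] at hzA'
          obtain ⟨j, _, hzj⟩ := Finset.mem_biUnion.mp hzA'
          by_cases hj : j = j0
          · subst hj
            exact Or.inl (Or.inr (Finset.mem_union_left _ hzj))
          · exact Or.inl (Or.inl ⟨⟨j, hzj⟩, pieces_not_mem hPlt hj hzj⟩)
        · by_cases hcond : (j0 : ℕ) + 1 < n
          · rw [if_pos hcond]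
            exact Or.inr (by rw [hzM]; exact Finset.mem_singleton_self M)
          · refine Or.inl (Or.inr ?_)
            have hcm : c0 = M := by rw [hc0def]; simp [hcond]
            rw [hzM, ← hcm]
            exact hc0Y
    rw [hsets] at hcasc
    have hcontra : A ∪ {M} = A :=
      hA.2 (A ∪ {M}) (by rw [𝒮.S_succ]; exact hcasc) Finset.subset_union_left
    exact hMA (by rw [← hcontra]; exact Finset.mem_union_right _ (Finset.mem_singleton_self M))
  -- assemble via reindexing
  refine ⟨fun i => P (Fin.cast hcast i), fun i => hPmax _, fun i => hPne _, ?_, ?_⟩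
  · intro i j hij
    exact hPlt _ _ (by rw [Fin.lt_def]; exact Fin.lt_def.mp hij)
  · rw [hAeq]
    ext x
    simp only [Finset.mem_biUnion, Finset.mem_univ, true_and]
    constructor
    · rintro ⟨j, hj⟩
      refine ⟨Fin.cast hcast.symm j, ?_⟩
      have : Fin.cast hcast (Fin.cast hcast.symm j) = j := rfl
      rw [this]
      exact hj
    · rintro ⟨i, hi⟩
      exact ⟨Fin.cast hcast i, hi⟩

end

/-- If `0 < ξ = γ+1 < ω₁` and `A ∈ MAX(S_ξ)`, then there are unique
elements `A_1 < A_2 < ⋯ < A_{min A}` of `MAX(S_γ)` whose union is `A`. -/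
theorem maximal_decomposition (𝒮 : SchreierSystem) (γ : Ordinal)
    (hγ : γ + 1 < omegaOne) (A : Finset ℕ) (hA : MaxIn (𝒮.S (γ + 1)) A)
    (hAne : A.Nonempty) :
    ∃! E : Fin (A.min' hAne) → Finset ℕ,
      (∀ i, MaxIn (𝒮.S γ) (E i)) ∧ (∀ i, (E i).Nonempty) ∧
      (∀ i j, i < j → finLT (E i) (E j)) ∧ A = Finset.univ.biUnion E := by
  obtain ⟨P, hmax, hne, hlt, heq⟩ := exists_decomp 𝒮 γ hγ A hA hAne
  refine ⟨P, ⟨hmax, hne, hlt, heq⟩, ?_⟩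
  rintro G ⟨hGmax, hGne, hGlt, hGeq⟩
  exact decomp_unique (𝒮.S γ) _ G P hGmax hmax hGlt hlt (by rw [← hGeq, ← heq])
end
end

section
/- (Replacement lemma) Let ξ < ω₁, A ∈ MAX(S_ξ), and a ∈ A with a > min A. Put m₁ = max{max D : D ∈ T(ξ,A), D < D_{ξ,A}(a)} and m₂ = min{min D : D ∈ T(ξ,A), D > D_{ξ,A}(a)} (with m₂ = ∞ if no node of T(ξ,A) lies after D_{ξ,A}(a)). Let E be the immediate predecessor of D_{ξ,A}(a) in T(ξ,A) and write order_{ξ,A}(E) = γ + 1. Then for every D̃ ∈ MAX(S_γ) with D̃ ⊆ (m₁, m₂), the set (A \ D_{ξ,A}(a)) ∪ D̃ belongs to MAX(S_ξ). -/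
noncomputable section

open scoped Classical

/-- Membership `(D, β) ∈ T(ξ, A)`: `D` is a node of the `ξ`-analysis tree of the
maximal `S_ξ` set `A`, and `β` is its order `order_{ξ,A}(D)`.  The clauses follow the
recursive definition of the `ξ`-analysis: for `ξ = 0` the tree of `{a}` is `{{a}}` with
order `0`; for `ξ = γ+1` the tree consists of the root `A` (of order `ξ`) together with
the trees of the members of the (unique) decomposition of `A` into `min A` consecutive
maximal `S_γ` sets; for `ξ` a limit ordinal, `T(ξ,A) = T(α(ξ, min A), A)`. -/
inductive AnalysisMem (𝒮 : SchreierSystem) : Ordinal → Finset ℕ → Finset ℕ → Ordinal → Prop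
  | zero (a : ℕ) : AnalysisMem 𝒮 0 {a} {a} 0
  | succRoot (γ : Ordinal) (A : Finset ℕ) (hA : MaxIn (𝒮.S (γ + 1)) A) :
      AnalysisMem 𝒮 (γ + 1) A A (γ + 1)
  | succChild (γ : Ordinal) (A : Finset ℕ) (hA : MaxIn (𝒮.S (γ + 1)) A)
      (k : ℕ) (E : Fin k → Finset ℕ)
      (hkmem : k ∈ A) (hkmin : finLE k A)
      (hE : ∀ i, MaxIn (𝒮.S γ) (E i)) (hne : ∀ i, (E i).Nonempty)
      (hlt : ∀ i j : Fin k, i < j → finLT (E i) (E j))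
      (hU : A = Finset.univ.biUnion E)
      (i : Fin k) (D : Finset ℕ) (β : Ordinal)
      (h : AnalysisMem 𝒮 γ (E i) D β) :
      AnalysisMem 𝒮 (γ + 1) A D β
  | limit (ξ : Ordinal) (hξ : Order.IsSuccLimit ξ) (A : Finset ℕ) (hA : MaxIn (𝒮.S ξ) A)
      (hne : A.Nonempty) (D : Finset ℕ) (β : Ordinal)
      (h : AnalysisMem 𝒮 (𝒮.α ξ (A.min' hne)) A D β) :
      AnalysisMem 𝒮 ξ A D β

/-- `D` is a node of the `ξ`-analysis tree `T(ξ, A)`. -/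
def IsNode (𝒮 : SchreierSystem) (ξ : Ordinal) (A D : Finset ℕ) : Prop :=
  ∃ β : Ordinal, AnalysisMem 𝒮 ξ A D β

namespace SchreierAux

open Finset

variable (𝒮 : SchreierSystem)

theorem ord_cases (β : Ordinal) : β = 0 ∨ (∃ γ, β = γ + 1) ∨ Order.IsSuccLimit β := by
  rcases Ordinal.zero_or_succ_or_isSuccLimit β with h | ⟨γ, h⟩ | h
  · exact Or.inl h
  · exact Or.inr (Or.inl ⟨γ, by rw [← h, Ordinal.add_one_eq_succ]⟩)
  · exact Or.inr (Or.inr h)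

theorem lt_add_one (γ : Ordinal) : γ < γ + 1 := Order.lt_add_one_iff.mpr le_rfl

theorem finLT_subset {A B A' B' : Finset ℕ} (h : finLT A B) (hA : A' ⊆ A) (hB : B' ⊆ B) :
    finLT A' B' := fun a ha b hb => h a (hA ha) b (hB hb)

theorem finLT_disjoint {A B : Finset ℕ} (h : finLT A B) {x : ℕ} (hx : x ∈ A) (hx' : x ∈ B) :
    False := lt_irrefl x (h x hx x hx')

/-- ∅ ∈ S β for β < ω₁. -/
theorem empty_mem {β : Ordinal} (hβ : β < omegaOne) : ∅ ∈ 𝒮.S β := by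
  rcases ord_cases β with h0 | ⟨γ, rfl⟩ | hlim
  · subst h0; rw [𝒮.S_zero]; exact Or.inl rfl
  · rw [𝒮.S_succ]
    exact ⟨0, (fun i => ∅), (fun i => i.elim0), (fun i => i.elim0), (fun i j _ => i.elim0),
      (fun i => i.elim0), by simp⟩
  · rw [𝒮.S_limit β hlim hβ]
    refine ⟨1, le_rfl, fun a ha => absurd ha (Finset.notMem_empty a), ?_⟩
    rw [𝒮.α_one β hlim hβ]
    have : (0:Ordinal) + 1 = 1 := by simp
    rw [← this, 𝒮.S_succ]
    exact ⟨0, (fun i => ∅), (fun i => i.elim0), (fun i => i.elim0), (fun i j _ => i.elim0),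
      (fun i => i.elim0), by simp⟩

/-- singletons {m}, m ≥ 1, belong to every S β, β < ω₁. -/
theorem singleton_mem {β : Ordinal} (hβ : β < omegaOne) {m : ℕ} (hm : 1 ≤ m) :
    ({m} : Finset ℕ) ∈ 𝒮.S β := by
  induction β using Ordinal.induction with
  | _ β IH =>
    rcases ord_cases β with h0 | ⟨γ, rfl⟩ | hlim
    · subst h0; rw [𝒮.S_zero]; exact Or.inr ⟨m, rfl⟩
    · rw [𝒮.S_succ]
      have hγ : γ < omegaOne := lt_trans (lt_add_one γ) hβ
      refine ⟨1, (fun _ => {m}), (fun _ => IH γ (lt_add_one γ) hγ),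
        (fun _ => ⟨m, mem_singleton_self m⟩), (fun i j h => absurd (Subsingleton.elim i j) h.ne),
        (fun i x hx => ?_), by simp⟩
      · rw [mem_singleton] at hx; omega
    · rw [𝒮.S_limit β hlim hβ]
      refine ⟨1, le_rfl, (fun x hx => by rw [mem_singleton] at hx; omega), ?_⟩
      have h1 : 𝒮.α β 1 < β := 𝒮.α_lt β hlim hβ 1 le_rfl
      exact IH _ h1 (lt_trans h1 hβ)

/-- S β is hereditary for β < ω₁. -/
theorem hered {β : Ordinal} (hβ : β < omegaOne) :
    ∀ {B : Finset ℕ}, B ∈ 𝒮.S β → ∀ {A : Finset ℕ}, A ⊆ B → A ∈ 𝒮.S β := by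
  induction β using Ordinal.induction with
  | _ β IH =>
    intro B hB A hAB
    rcases ord_cases β with h0 | ⟨γ, rfl⟩ | hlim
    · subst h0; rw [𝒮.S_zero] at hB ⊢
      rcases hB with h | ⟨n, rfl⟩
      · subst h; exact Or.inl (Finset.subset_empty.mp hAB)
      · rcases Finset.subset_singleton_iff.mp hAB with h | h
        · exact Or.inl h
        · exact Or.inr ⟨n, h⟩
    · rw [𝒮.S_succ] at hB ⊢
      obtain ⟨n, E, hmem, hne, hlt, hge, hU⟩ := hB
      have hγ : γ < omegaOne := lt_trans (lt_add_one γ) hβ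
      classical
      have key : ∀ j : Fin ((Finset.univ.filter (fun i => (A ∩ E i).Nonempty)).card),
          ((Finset.univ.filter (fun i => (A ∩ E i).Nonempty)).orderIsoOfFin rfl j : Fin n) ∈
            Finset.univ.filter (fun i => (A ∩ E i).Nonempty) := fun j =>
        ((Finset.univ.filter (fun i => (A ∩ E i).Nonempty)).orderIsoOfFin rfl j).2
      set s := Finset.univ.filter (fun i => (A ∩ E i).Nonempty) with hs
      have hcard : s.card ≤ n := by
        simpa using Finset.card_filter_le (Finset.univ : Finset (Fin n)) _
      refine ⟨s.card, (fun j => A ∩ E (s.orderIsoOfFin rfl j)), ?_, ?_, ?_, ?_, ?_⟩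
      · intro j
        exact IH γ (lt_add_one γ) hγ (hmem _) (Finset.inter_subset_right)
      · intro j
        have := key j
        rw [Finset.mem_filter] at this
        exact this.2
      · intro i j hij
        have : ((s.orderIsoOfFin rfl) i : Fin n) < ((s.orderIsoOfFin rfl) j : Fin n) := by
          exact_mod_cast (OrderIso.lt_iff_lt _).mpr hij
        exact finLT_subset (hlt _ _ this) Finset.inter_subset_right Finset.inter_subset_right
      · intro j x hx
        exact le_trans hcard (hge _ x (Finset.mem_inter.mp hx).2)
      · ext x
        simp only [Finset.mem_biUnion, Finset.mem_univ, true_and, Finset.mem_inter]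
        constructor
        · intro hx
          have hxB : x ∈ B := hAB hx
          rw [hU] at hxB
          simp only [Finset.mem_biUnion, Finset.mem_univ, true_and] at hxB
          obtain ⟨i, hi⟩ := hxB
          have his : i ∈ s := by
            rw [hs, Finset.mem_filter]
            exact ⟨Finset.mem_univ i, ⟨x, Finset.mem_inter.mpr ⟨hx, hi⟩⟩⟩
          refine ⟨(s.orderIsoOfFin rfl).symm ⟨i, his⟩, hx, ?_⟩
          simpa using hi
        · rintro ⟨j, hx, _⟩
          exact hx
    · rw [𝒮.S_limit β hlim hβ] at hB ⊢
      obtain ⟨n, hn1, hnle, hmem⟩ := hB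
      have h1 : 𝒮.α β n < β := 𝒮.α_lt β hlim hβ n hn1
      exact ⟨n, hn1, (fun x hx => hnle x (hAB hx)),
        IH _ h1 (lt_trans h1 hβ) hmem hAB⟩

/-- S β is spreading. -/
theorem spread {β : Ordinal} (hβ : β < omegaOne) :
    ∀ {A : Finset ℕ}, A ∈ 𝒮.S β → ∀ (f : ℕ → ℕ),
      (∀ x ∈ A, ∀ y ∈ A, x < y → f x < f y) → (∀ x ∈ A, x ≤ f x) →
      A.image f ∈ 𝒮.S β := by
  induction β using Ordinal.induction with
  | _ β IH =>
    intro A hA f hmono hle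
    rcases ord_cases β with h0 | ⟨γ, rfl⟩ | hlim
    · subst h0; rw [𝒮.S_zero] at hA ⊢
      rcases hA with h | ⟨n, rfl⟩
      · subst h; exact Or.inl (by simp)
      · exact Or.inr ⟨f n, by simp⟩
    · rw [𝒮.S_succ] at hA ⊢
      obtain ⟨n, E, hmem, hne, hlt, hge, hU⟩ := hA
      have hγ : γ < omegaOne := lt_trans (lt_add_one γ) hβ
      have hsub : ∀ i, E i ⊆ A := by
        intro i
        rw [hU]; exact Finset.subset_biUnion_of_mem E (Finset.mem_univ i)
      refine ⟨n, (fun i => (E i).image f), ?_, ?_, ?_, ?_, ?_⟩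
      · intro i
        exact IH γ (lt_add_one γ) hγ (hmem i) f
          (fun x hx y hy => hmono x (hsub i hx) y (hsub i hy)) (fun x hx => hle x (hsub i hx))
      · intro i; exact (hne i).image f
      · intro i j hij x hx y hy
        simp only [Finset.mem_image] at hx hy
        obtain ⟨x', hx', rfl⟩ := hx
        obtain ⟨y', hy', rfl⟩ := hy
        exact hmono x' (hsub i hx') y' (hsub j hy') (hlt i j hij x' hx' y' hy')
      · intro i x hx
        simp only [Finset.mem_image] at hx
        obtain ⟨x', hx', rfl⟩ := hx
        exact le_trans (hge i x' hx') (hle x' (hsub i hx'))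
      · rw [hU]
        ext u
        simp only [Finset.mem_image, Finset.mem_biUnion, Finset.mem_univ, true_and]
        tauto
    · rw [𝒮.S_limit β hlim hβ] at hA ⊢
      obtain ⟨n, hn1, hnle, hmem⟩ := hA
      have h1 : 𝒮.α β n < β := 𝒮.α_lt β hlim hβ n hn1
      refine ⟨n, hn1, ?_, IH _ h1 (lt_trans h1 hβ) hmem f hmono hle⟩
      intro x hx
      simp only [Finset.mem_image] at hx
      obtain ⟨x', hx', rfl⟩ := hx
      exact le_trans (hnle x' hx') (hle x' hx')

/-- extension lemma: if `X ∪ {z} ∈ S β` then the `z` can be moved past `max`. -/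
theorem ext_max {β : Ordinal} (hβ : β < omegaOne) {X : Finset ℕ} {z : ℕ} (hz : z ∉ X)
    (h : X ∪ {z} ∈ 𝒮.S β) {M : ℕ} (hM : ∀ x ∈ X ∪ {z}, x < M) : X ∪ {M} ∈ 𝒮.S β := by
  classical
  set T : Finset ℕ := X ∪ {z} with hT
  have hzT : z ∈ T := by simp [hT]
  have hXT : X ⊆ T := Finset.subset_union_left
  set f : ℕ → ℕ := fun x => if x < z then x else
    (if h : (X.filter (fun w => x < w)).Nonempty then (X.filter (fun w => x < w)).min' h else M)
    with hf
  have hfgt : ∀ x ∈ T, ¬ x < z → x < f x := by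
    intro x hxT hx
    rw [hf]; simp only [if_neg hx]
    split
    · next h' => exact (Finset.mem_filter.mp ((X.filter (fun w => x < w)).min'_mem h')).2
    · next h' => exact hM x hxT
  have hle : ∀ x ∈ T, x ≤ f x := by
    intro x hxT
    by_cases hx : x < z
    · rw [hf]; simp [if_pos hx]
    · exact le_of_lt (hfgt x hxT hx)
  have hmono : ∀ x ∈ T, ∀ y ∈ T, x < y → f x < f y := by
    intro x hx y hy hxy
    by_cases hx' : x < z
    · have hfx : f x = x := by rw [hf]; simp [if_pos hx']
      by_cases hy' : y < z
      · rw [hfx, hf]; simp only [if_pos hy']; exact hxy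
      · exact lt_of_le_of_lt (le_of_eq hfx) (lt_of_lt_of_le hxy (le_of_lt (hfgt y hy hy')))
    · have hyX : y ∈ X := by
        have : y ≠ z := by omega
        rcases Finset.mem_union.mp hy with h' | h'
        · exact h'
        · exact absurd (Finset.mem_singleton.mp h') this
      have hyf : y ∈ X.filter (fun w => x < w) := Finset.mem_filter.mpr ⟨hyX, hxy⟩
      have hne' : (X.filter (fun w => x < w)).Nonempty := ⟨y, hyf⟩
      have hfx : f x = (X.filter (fun w => x < w)).min' hne' := by
        rw [hf]; simp only [if_neg hx', dif_pos hne']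
      have : f x ≤ y := by rw [hfx]; exact Finset.min'_le _ y hyf
      have hy'' : ¬ y < z := by omega
      exact lt_of_le_of_lt this (hfgt y hy hy'')
  have himg : T.image f = X ∪ {M} := by
    apply Finset.Subset.antisymm
    · intro u hu
      simp only [Finset.mem_image] at hu
      obtain ⟨x, hx, rfl⟩ := hu
      by_cases hx' : x < z
      · have hxX : x ∈ X := by
          rcases Finset.mem_union.mp hx with h' | h'
          · exact h'
          · exact absurd (Finset.mem_singleton.mp h') (by omega)
        rw [hf]; simp only [if_pos hx']
        exact Finset.mem_union_left _ hxX
      · rw [hf]; simp only [if_neg hx']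
        split
        · next h' =>
          exact Finset.mem_union_left _ (Finset.mem_of_mem_filter _ ((X.filter _).min'_mem h'))
        · next h' => simp
    · intro u hu
      rcases Finset.mem_union.mp hu with huX | huM
      · by_cases hu' : u < z
        · refine Finset.mem_image.mpr ⟨u, hXT huX, ?_⟩
          rw [hf]; simp [if_pos hu']
        · -- u ∈ X, u > z (u ≠ z since u ∈ X, z ∉ X)
          have huz : z < u := by
            have : u ≠ z := fun h => hz (h ▸ huX)
            omega
          set P : Finset ℕ := T.filter (fun w => z ≤ w ∧ w < u) with hP
          have hzP : z ∈ P := by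
            rw [hP, Finset.mem_filter]; exact ⟨hzT, le_rfl, huz⟩
          have hPne : P.Nonempty := ⟨z, hzP⟩
          set p := P.max' hPne with hp
          have hpP : p ∈ P := P.max'_mem hPne
          rw [hP, Finset.mem_filter] at hpP
          obtain ⟨hpT, hpz, hpu⟩ := hpP
          refine Finset.mem_image.mpr ⟨p, hpT, ?_⟩
          have hpz' : ¬ p < z := by omega
          have huf : u ∈ X.filter (fun w => p < w) := Finset.mem_filter.mpr ⟨huX, hpu⟩
          have hne' : (X.filter (fun w => p < w)).Nonempty := ⟨u, huf⟩
          rw [hf]; simp only [if_neg hpz', dif_pos hne']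
          have hmin_le : (X.filter (fun w => p < w)).min' hne' ≤ u := Finset.min'_le _ u huf
          have hmin_mem := (X.filter (fun w => p < w)).min'_mem hne'
          rw [Finset.mem_filter] at hmin_mem
          obtain ⟨hwX, hwp⟩ := hmin_mem
          by_contra hcon
          have hwu : (X.filter (fun w => p < w)).min' hne' < u := lt_of_le_of_ne hmin_le hcon
          have : (X.filter (fun w => p < w)).min' hne' ∈ P := by
            rw [hP, Finset.mem_filter]
            exact ⟨hXT hwX, by omega, hwu⟩
          have := Finset.le_max' P _ this
          omega
      · -- u = M
        rw [Finset.mem_singleton] at huM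
        subst huM
        have hTne : T.Nonempty := ⟨z, hzT⟩
        set t := T.max' hTne with ht
        have htT : t ∈ T := T.max'_mem hTne
        refine Finset.mem_image.mpr ⟨t, htT, ?_⟩
        have htz : ¬ t < z := by
          have := Finset.le_max' T z hzT
          omega
        have hempty : ¬ (X.filter (fun w => t < w)).Nonempty := by
          rintro ⟨w, hw⟩
          rw [Finset.mem_filter] at hw
          have := Finset.le_max' T w (hXT hw.1)
          omega
        rw [hf]; simp only [if_neg htz, dif_neg hempty]
  have := spread 𝒮 hβ h f hmono hle
  rw [hT] at himg
  rw [← himg]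
  exact this

/-- a maximal set of `S β` cannot be enlarged by any new element. -/
theorem max_add_not_mem {β : Ordinal} (hβ : β < omegaOne) {G : Finset ℕ}
    (hG : MaxIn (𝒮.S β) G) {z : ℕ} (hz : z ∉ G) : G ∪ {z} ∉ 𝒮.S β := by
  intro h
  have hne : (G ∪ {z}).Nonempty := ⟨z, by simp⟩
  set M := (G ∪ {z}).max' hne + 1 with hM
  have hMgt : ∀ x ∈ G ∪ {z}, x < M := by
    intro x hx
    have := Finset.le_max' _ x hx
    omega
  have hGM : G ∪ {M} ∈ 𝒮.S β := ext_max 𝒮 hβ hz h hMgt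
  have := hG.2 _ hGM Finset.subset_union_left
  have hMG : M ∈ G := by
    rw [← this]; simp
  have := hMgt M (Finset.mem_union_left _ hMG)
  omega

/-- bumping along the approximating sequence. -/
theorem bump {ξ : Ordinal} (hlim : Order.IsSuccLimit ξ) (hξ : ξ < omegaOne) {X : Finset ℕ} {n m : ℕ}
    (h1 : 1 ≤ n) (hnm : n ≤ m) (hX : X ∈ 𝒮.S (𝒮.α ξ n)) (hm : finLE m X) :
    X ∈ 𝒮.S (𝒮.α ξ m) := by
  induction m with
  | zero => omega
  | succ m IH =>
    rcases Nat.lt_or_ge n (m+1) with hlt | hge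
    · have hnm' : n ≤ m := by omega
      have hXm : X ∈ 𝒮.S (𝒮.α ξ m) := IH hnm' (fun x hx => by have := hm x hx; omega)
      have hm1 : 1 ≤ m := by omega
      have h2 : finLE 2 X := by
        intro x hx; have := hm x hx; omega
      have := 𝒮.α_union ξ hlim hξ m hm1 X ∅ hXm
        (empty_mem 𝒮 (lt_trans (𝒮.α_lt ξ hlim hξ m hm1) hξ)) h2
        (fun a _ b hb => absurd hb (Finset.notMem_empty b))
      simpa using this
    · have : n = m + 1 := by omega
      subst this
      exact hX

/-- a maximal `S ξ` set (`ξ` limit) is maximal in `S (α ξ (min X))`. -/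
theorem max_limit_down {ξ : Ordinal} (hlim : Order.IsSuccLimit ξ) (hξ : ξ < omegaOne) {X : Finset ℕ}
    (hX : MaxIn (𝒮.S ξ) X) (hne : X.Nonempty) :
    MaxIn (𝒮.S (𝒮.α ξ (X.min' hne))) X := by
  set m := X.min' hne with hm
  have hmX : m ∈ X := X.min'_mem hne
  have hminX : finLE m X := fun x hx => X.min'_le x hx
  obtain ⟨n, hn1, hnle, hmem⟩ := (𝒮.S_limit ξ hlim hξ) ▸ hX.1
  have hnm : n ≤ m := hnle m hmX
  have h1m : 1 ≤ m := le_trans hn1 hnm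
  have hαω : 𝒮.α ξ m < omegaOne := lt_trans (𝒮.α_lt ξ hlim hξ m h1m) hξ
  constructor
  · exact bump 𝒮 hlim hξ hn1 hnm hmem hminX
  · intro B hB hXB
    by_contra hBX
    have : ∃ z, z ∈ B ∧ z ∉ X := by
      by_contra hc
      push_neg at hc
      exact hBX (Finset.Subset.antisymm hc hXB)
    obtain ⟨z, hzB, hzX⟩ := this
    have hXz : X ∪ {z} ∈ 𝒮.S (𝒮.α ξ m) := by
      refine hered 𝒮 hαω hB ?_
      intro x hx
      rcases Finset.mem_union.mp hx with h' | h'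
      · exact hXB h'
      · rw [Finset.mem_singleton] at h'; subst h'; exact hzB
    rcases Nat.lt_or_ge z m with hzm | hzm
    · -- z < m : push z beyond max
      have hune : (X ∪ {z}).Nonempty := ⟨z, by simp⟩
      set M := (X ∪ {z}).max' hune + 1 with hM
      have hMgt : ∀ x ∈ X ∪ {z}, x < M := fun x hx => by
        have := Finset.le_max' _ x hx; omega
      have hXM : X ∪ {M} ∈ 𝒮.S (𝒮.α ξ m) := ext_max 𝒮 hαω hzX hXz hMgt
      have hMm : m ≤ M := by
        have := Finset.le_max' (X ∪ {z}) m (Finset.mem_union_left _ hmX)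
        omega
      have hXMξ : X ∪ {M} ∈ 𝒮.S ξ := by
        rw [𝒮.S_limit ξ hlim hξ]
        refine ⟨m, h1m, ?_, hXM⟩
        intro x hx
        rcases Finset.mem_union.mp hx with h' | h'
        · exact hminX x h'
        · rw [Finset.mem_singleton] at h'; omega
      have := hX.2 _ hXMξ Finset.subset_union_left
      have hMX : M ∈ X := by rw [← this]; simp
      have := hMgt M (Finset.mem_union_left _ hMX)
      omega
    · -- m ≤ z
      have hXzξ : X ∪ {z} ∈ 𝒮.S ξ := by
        rw [𝒮.S_limit ξ hlim hξ]
        refine ⟨m, h1m, ?_, hXz⟩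
        intro x hx
        rcases Finset.mem_union.mp hx with h' | h'
        · exact hminX x h'
        · rw [Finset.mem_singleton] at h'; omega
      have := hX.2 _ hXzξ Finset.subset_union_left
      have : z ∈ X := by rw [← this]; simp
      exact hzX this

/-- conversely, maximality at level `α ξ m` lifts to level `ξ`. -/
theorem max_limit_up {ξ : Ordinal} (hlim : Order.IsSuccLimit ξ) (hξ : ξ < omegaOne) {X : Finset ℕ} {m : ℕ}
    (hmX : m ∈ X) (hminX : finLE m X) (h1m : 1 ≤ m)
    (hX : MaxIn (𝒮.S (𝒮.α ξ m)) X) : MaxIn (𝒮.S ξ) X := by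
  constructor
  · rw [𝒮.S_limit ξ hlim hξ]
    exact ⟨m, h1m, hminX, hX.1⟩
  · intro B hB hXB
    by_contra hBX
    have : ∃ z, z ∈ B ∧ z ∉ X := by
      by_contra hc
      push_neg at hc
      exact hBX (Finset.Subset.antisymm hc hXB)
    obtain ⟨z, hzB, hzX⟩ := this
    rw [𝒮.S_limit ξ hlim hξ] at hB
    obtain ⟨n, hn1, hnle, hmem⟩ := hB
    have hαω : 𝒮.α ξ n < omegaOne := lt_trans (𝒮.α_lt ξ hlim hξ n hn1) hξ
    have hnm : n ≤ m := hnle m (hXB hmX)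
    have hXz : X ∪ {z} ∈ 𝒮.S (𝒮.α ξ n) := by
      refine hered 𝒮 hαω hmem ?_
      intro x hx
      rcases Finset.mem_union.mp hx with h' | h'
      · exact hXB h'
      · rw [Finset.mem_singleton] at h'; subst h'; exact hzB
    rcases Nat.lt_or_ge z m with hzm | hzm
    · have hune : (X ∪ {z}).Nonempty := ⟨z, by simp⟩
      set M := (X ∪ {z}).max' hune + 1 with hM
      have hMgt : ∀ x ∈ X ∪ {z}, x < M := fun x hx => by
        have := Finset.le_max' _ x hx; omega
      have hXM : X ∪ {M} ∈ 𝒮.S (𝒮.α ξ n) := ext_max 𝒮 hαω hzX hXz hMgt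
      have hMm : m ≤ M := by
        have := Finset.le_max' (X ∪ {z}) m (Finset.mem_union_left _ hmX)
        omega
      have hfin : finLE m (X ∪ {M}) := by
        intro x hx
        rcases Finset.mem_union.mp hx with h' | h'
        · exact hminX x h'
        · rw [Finset.mem_singleton] at h'; omega
      have hXMm : X ∪ {M} ∈ 𝒮.S (𝒮.α ξ m) := bump 𝒮 hlim hξ hn1 hnm hXM hfin
      have := hX.2 _ hXMm Finset.subset_union_left
      have hMX : M ∈ X := by rw [← this]; simp
      have := hMgt M (Finset.mem_union_left _ hMX)
      omega
    · have hfin : finLE m (X ∪ {z}) := by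
        intro x hx
        rcases Finset.mem_union.mp hx with h' | h'
        · exact hminX x h'
        · rw [Finset.mem_singleton] at h'; omega
      have hXzm : X ∪ {z} ∈ 𝒮.S (𝒮.α ξ m) := bump 𝒮 hlim hξ hn1 hnm hXz hfin
      have := hX.2 _ hXzm Finset.subset_union_left
      have : z ∈ X := by rw [← this]; simp
      exact hzX this
/-- nodes of the analysis tree are subsets of the root. -/
theorem node_subset {ξ : Ordinal} {A D : Finset ℕ} {β : Ordinal}
    (h : AnalysisMem 𝒮 ξ A D β) : D ⊆ A := by
  induction h with
  | zero a => exact Finset.Subset.refl _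
  | succRoot γ A hA => exact Finset.Subset.refl _
  | succChild γ A hA k E hkmem hkmin hE hne hlt hU i D β h ih =>
    refine ih.trans ?_
    rw [hU]
    exact Finset.subset_biUnion_of_mem E (Finset.mem_univ i)
  | limit ξ hξ A hA hne D β h ih => exact ih

/-- the root of the analysis tree is a node. -/
theorem root_node {ξ : Ordinal} (hξ : ξ < omegaOne) :
    ∀ {X : Finset ℕ}, MaxIn (𝒮.S ξ) X → X.Nonempty → ∃ δ, AnalysisMem 𝒮 ξ X X δ := by
  induction ξ using Ordinal.induction with
  | _ ξ IH =>
    intro X hX hne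
    rcases ord_cases ξ with h0 | ⟨γ, rfl⟩ | hlim
    · subst h0
      have := hX.1
      rw [𝒮.S_zero] at this
      rcases this with h | ⟨n, rfl⟩
      · subst h; exact absurd hne (by simp)
      · exact ⟨0, AnalysisMem.zero n⟩
    · exact ⟨γ + 1, AnalysisMem.succRoot γ X hX⟩
    · have hα : 𝒮.α ξ (X.min' hne) < ξ := by
        apply 𝒮.α_lt ξ hlim hξ
        -- 1 ≤ min X
        obtain ⟨n, hn1, hnle, _⟩ := (𝒮.S_limit ξ hlim hξ) ▸ hX.1
        exact le_trans hn1 (hnle _ (X.min'_mem hne))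
      obtain ⟨δ, hδ⟩ := IH _ hα (lt_trans hα hξ) (max_limit_down 𝒮 hlim hξ hX hne) hne
      exact ⟨δ, AnalysisMem.limit ξ hlim X hX hne X δ hδ⟩

/-- a maximal set containing an element `≤ 1` is a singleton. -/
theorem small_max {ξ : Ordinal} (hξ : ξ < omegaOne) :
    ∀ {X : Finset ℕ}, MaxIn (𝒮.S ξ) X → ∀ x ∈ X, x ≤ 1 → X = {x} := by
  induction ξ using Ordinal.induction with
  | _ ξ IH =>
    intro X hX x hxX hx1
    rcases ord_cases ξ with h0 | ⟨γ, rfl⟩ | hlim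
    · subst h0
      have := hX.1
      rw [𝒮.S_zero] at this
      rcases this with h | ⟨n, rfl⟩
      · subst h; exact absurd hxX (by simp)
      · rw [Finset.mem_singleton] at hxX; rw [hxX]
    · have hγ : γ < omegaOne := lt_trans (lt_add_one γ) hξ
      have hXm := hX.1
      rw [𝒮.S_succ] at hXm
      obtain ⟨n, E, hmem, hne, hlt, hge, hU⟩ := hXm
      have hxE : ∃ i, x ∈ E i := by
        rw [hU] at hxX
        simpa using hxX
      obtain ⟨i, hi⟩ := hxE
      have hn1 : n = 1 := by
        have := hge i x hi
        have : 0 < n := i.pos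
        omega
      subst hn1
      have hXE : X = E 0 := by
        rw [hU]
        ext u
        simp only [Finset.mem_biUnion, Finset.mem_univ, true_and]
        constructor
        · rintro ⟨j, hj⟩; rwa [Subsingleton.elim j 0] at hj
        · intro h; exact ⟨0, h⟩
      have hfin1 : finLE 1 X := by
        rw [hXE]; exact hge 0
      -- X is maximal in S γ
      have hXmax : MaxIn (𝒮.S γ) X := by
        constructor
        · rw [hXE]; exact hmem 0
        · intro B hB hXB
          by_contra hBX
          have : ∃ z, z ∈ B ∧ z ∉ X := by
            by_contra hc
            push_neg at hc
            exact hBX (Finset.Subset.antisymm hc hXB)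
          obtain ⟨z, hzB, hzX⟩ := this
          have hXz : X ∪ {z} ∈ 𝒮.S γ := by
            refine hered 𝒮 hγ hB ?_
            intro u hu
            rcases Finset.mem_union.mp hu with h' | h'
            · exact hXB h'
            · rw [Finset.mem_singleton] at h'; subst h'; exact hzB
          -- produce a superset of X in S (γ+1)
          have key : ∀ w : ℕ, w ∉ X → X ∪ {w} ∈ 𝒮.S γ → 1 ≤ w → False := by
            intro w hwX hw hw1
            have : X ∪ {w} ∈ 𝒮.S (γ + 1) := by
              rw [𝒮.S_succ]
              refine ⟨1, (fun _ => X ∪ {w}), (fun _ => hw), (fun _ => ⟨w, by simp⟩),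
                (fun i j h => absurd (Subsingleton.elim i j) h.ne), ?_, by simp⟩
              intro j u hu
              rcases Finset.mem_union.mp hu with h' | h'
              · exact hfin1 u h'
              · rw [Finset.mem_singleton] at h'; omega
            have := hX.2 _ this Finset.subset_union_left
            have : w ∈ X := by rw [← this]; simp
            exact hwX this
          rcases Nat.lt_or_ge z 1 with hz1 | hz1
          · -- z = 0 : move it beyond max
            have hune : (X ∪ {z}).Nonempty := ⟨z, by simp⟩
            set M := (X ∪ {z}).max' hune + 1 with hM
            have hMgt : ∀ u ∈ X ∪ {z}, u < M := fun u hu => by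
              have := Finset.le_max' _ u hu; omega
            have hXM : X ∪ {M} ∈ 𝒮.S γ := ext_max 𝒮 hγ hzX hXz hMgt
            have hMX : M ∉ X := by
              intro h
              have := hMgt M (Finset.mem_union_left _ h)
              omega
            exact key M hMX hXM (by omega)
          · exact key z hzX hXz hz1
      exact IH γ (lt_add_one γ) hγ hXmax x hxX hx1
    · have hXm := hX.1
      rw [𝒮.S_limit ξ hlim hξ] at hXm
      obtain ⟨n, hn1, hnle, hmem⟩ := hXm
      have hn : n = 1 := by
        have := hnle x hxX
        omega
      subst hn
      rw [𝒮.α_one ξ hlim hξ] at hmem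
      have h01 : (1 : Ordinal) = 0 + 1 := by simp
      rw [h01, 𝒮.S_succ] at hmem
      obtain ⟨n', E, hmem', hne, hlt, hge, hU⟩ := hmem
      have hxE : ∃ i, x ∈ E i := by
        rw [hU] at hxX
        simpa using hxX
      obtain ⟨i, hi⟩ := hxE
      have hn1' : n' = 1 := by
        have := hge i x hi
        have : 0 < n' := i.pos
        omega
      subst hn1'
      have hXE : X = E 0 := by
        rw [hU]
        ext u
        simp only [Finset.mem_biUnion, Finset.mem_univ, true_and]
        constructor
        · rintro ⟨j, hj⟩; rwa [Subsingleton.elim j 0] at hj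
        · intro h; exact ⟨0, h⟩
      have := hmem' 0
      rw [𝒮.S_zero] at this
      rcases this with h | ⟨p, hp⟩
      · exact absurd (hne 0) (by rw [h]; simp)
      · rw [hXE, hp] at hxX ⊢
        rw [Finset.mem_singleton] at hxX
        rw [hxX]
/-- uniqueness of the decomposition of a set into consecutive maximal blocks. -/
theorem decomp_unique {β : Ordinal} {A : Finset ℕ} {k : ℕ} {E F : Fin k → Finset ℕ}
    (hEmax : ∀ i, MaxIn (𝒮.S β) (E i))
    (hElt : ∀ i j, i < j → finLT (E i) (E j)) (hEU : A = Finset.univ.biUnion E)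
    (hFmax : ∀ i, MaxIn (𝒮.S β) (F i))
    (hFlt : ∀ i j, i < j → finLT (F i) (F j)) (hFU : A = Finset.univ.biUnion F) :
    ∀ i, E i = F i := by
  have main : ∀ m : ℕ, ∀ i : Fin k, (i : ℕ) = m → E i = F i := by
    intro m
    induction m using Nat.strong_induction_on with
    | _ m IHm =>
      intro i him
      have IH : ∀ j : Fin k, j < i → E j = F j := by
        intro j hj
        exact IHm j (by omega) j rfl
      -- initial segment property for E
      have claimE : ∀ x : ℕ, x ∈ A → (∀ j : Fin k, j < i → x ∉ E j) →
          (∃ y ∈ E i, x ≤ y) → x ∈ E i := by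
        intro x hxA hnot ⟨y, hy, hxy⟩
        rw [hEU] at hxA
        simp only [Finset.mem_biUnion, Finset.mem_univ, true_and] at hxA
        obtain ⟨j, hj⟩ := hxA
        rcases lt_trichotomy j i with h | h | h
        · exact absurd hj (hnot j h)
        · subst h; exact hj
        · exact absurd hxy (by have := hElt i j h y hy x hj; omega)
      have claimF : ∀ x : ℕ, x ∈ A → (∀ j : Fin k, j < i → x ∉ F j) →
          (∃ y ∈ F i, x ≤ y) → x ∈ F i := by
        intro x hxA hnot ⟨y, hy, hxy⟩
        rw [hFU] at hxA
        simp only [Finset.mem_biUnion, Finset.mem_univ, true_and] at hxA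
        obtain ⟨j, hj⟩ := hxA
        rcases lt_trichotomy j i with h | h | h
        · exact absurd hj (hnot j h)
        · subst h; exact hj
        · exact absurd hxy (by have := hFlt i j h y hy x hj; omega)
      by_cases hEF : E i ⊆ F i
      · exact ((hEmax i).2 _ (hFmax i).1 hEF).symm
      · have hx : ∃ x, x ∈ E i ∧ x ∉ F i := by
          by_contra hc
          push_neg at hc
          exact hEF hc
        obtain ⟨x, hxE, hxF⟩ := hx
        have hxA : x ∈ A := by
          rw [hEU]
          simp only [Finset.mem_biUnion, Finset.mem_univ, true_and]
          exact ⟨i, hxE⟩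
        have hxnotF : ∀ j : Fin k, j < i → x ∉ F j := by
          intro j hj hmem
          rw [← IH j hj] at hmem
          exact finLT_disjoint (hElt j i hj) hmem hxE
        have hFlt_x : ∀ y ∈ F i, y < x := by
          intro y hy
          by_contra hc
          push_neg at hc
          exact hxF (claimF x hxA hxnotF ⟨y, hy, hc⟩)
        have hFE : F i ⊆ E i := by
          intro y hy
          have hyA : y ∈ A := by
            rw [hFU]
            simp only [Finset.mem_biUnion, Finset.mem_univ, true_and]
            exact ⟨i, hy⟩
          have hynotE : ∀ j : Fin k, j < i → y ∉ E j := by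
            intro j hj hmem
            rw [IH j hj] at hmem
            exact finLT_disjoint (hFlt j i hj) hmem hy
          exact claimE y hyA hynotE ⟨x, hxE, le_of_lt (hFlt_x y hy)⟩
        exact (hFmax i).2 _ (hEmax i).1 hFE
  intro i
  exact main i i rfl

/-- a union of `k` consecutive maximal `S β` blocks, all `≥ k` and with `k` present,
is maximal in `S (β+1)`. -/
theorem tile {β : Ordinal} (hβ : β < omegaOne) {k : ℕ} {G : Fin k → Finset ℕ}
    (hmax : ∀ i, MaxIn (𝒮.S β) (G i)) (hGne : ∀ i, (G i).Nonempty)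
    (hGlt : ∀ i j : Fin k, i < j → finLT (G i) (G j)) (hGge : ∀ i, finLE k (G i))
    (hkmem : ∃ i, k ∈ G i) :
    MaxIn (𝒮.S (β + 1)) (Finset.univ.biUnion G) := by
  classical
  set A' := Finset.univ.biUnion G with hA'
  constructor
  · rw [𝒮.S_succ]
    exact ⟨k, G, (fun i => (hmax i).1), hGne, hGlt, hGge, rfl⟩
  intro B hB hsub
  rw [𝒮.S_succ] at hB
  obtain ⟨n, F, hFmem, hFne, hFlt, hFge, hFU⟩ := hB
  set G' : ℕ → Finset ℕ := fun l => if h : l < k then G ⟨l, h⟩ else ∅ with hG'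
  set F' : ℕ → Finset ℕ := fun l => if h : l < n then F ⟨l, h⟩ else ∅ with hF'
  have hG'eq : ∀ (l : ℕ) (h : l < k), G' l = G ⟨l, h⟩ := fun l h => by
    rw [hG']; simp [dif_pos h]
  have hF'eq : ∀ (l : ℕ) (h : l < n), F' l = F ⟨l, h⟩ := fun l h => by
    rw [hF']; simp [dif_pos h]
  have hF'mem : ∀ (l : ℕ), ∀ x ∈ F' l, l < n := by
    intro l x hx
    by_contra hc
    rw [hF'] at hx
    simp only [dif_neg hc] at hx
    exact absurd hx (Finset.notMem_empty x)
  have hG'mem : ∀ (l : ℕ), ∀ x ∈ G' l, l < k := by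
    intro l x hx
    by_contra hc
    rw [hG'] at hx
    simp only [dif_neg hc] at hx
    exact absurd hx (Finset.notMem_empty x)
  have hF'lt : ∀ l l' : ℕ, l < l' → finLT (F' l) (F' l') := by
    intro l l' hll x hx y hy
    have hl := hF'mem l x hx
    have hl' := hF'mem l' y hy
    rw [hF'eq l hl] at hx
    rw [hF'eq l' hl'] at hy
    exact hFlt ⟨l, hl⟩ ⟨l', hl'⟩ (by simpa using hll) x hx y hy
  have hG'lt : ∀ l l' : ℕ, l < l' → finLT (G' l) (G' l') := by
    intro l l' hll x hx y hy
    have hl := hG'mem l x hx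
    have hl' := hG'mem l' y hy
    rw [hG'eq l hl] at hx
    rw [hG'eq l' hl'] at hy
    exact hGlt ⟨l, hl⟩ ⟨l', hl'⟩ (by simpa using hll) x hx y hy
  have hBU : ∀ x : ℕ, x ∈ B ↔ ∃ l, x ∈ F' l := by
    intro x
    rw [hFU]
    simp only [Finset.mem_biUnion, Finset.mem_univ, true_and]
    constructor
    · rintro ⟨j, hj⟩
      exact ⟨j, by rw [hF'eq j j.2]; simpa using hj⟩
    · rintro ⟨l, hl⟩
      have h := hF'mem l x hl
      rw [hF'eq l h] at hl
      exact ⟨⟨l, h⟩, hl⟩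
  have hA'U : ∀ x : ℕ, x ∈ A' ↔ ∃ l, x ∈ G' l := by
    intro x
    rw [hA']
    simp only [Finset.mem_biUnion, Finset.mem_univ, true_and]
    constructor
    · rintro ⟨j, hj⟩
      exact ⟨j, by rw [hG'eq j j.2]; simpa using hj⟩
    · rintro ⟨l, hl⟩
      have h := hG'mem l x hl
      rw [hG'eq l h] at hl
      exact ⟨⟨l, h⟩, hl⟩
  set cov : ℕ → Finset ℕ := fun l => (Finset.range l).biUnion F' with hcov
  have hcovmem : ∀ (l : ℕ) (x : ℕ), x ∈ cov l ↔ ∃ l' < l, x ∈ F' l' := by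
    intro l x
    rw [hcov]
    simp [Finset.mem_biUnion]
  -- n ≤ k
  have hkB : k ∈ B := by
    obtain ⟨i, hi⟩ := hkmem
    apply hsub
    rw [hA'U]
    exact ⟨i, by rw [hG'eq i i.2]; simpa using hi⟩
  have hnk : n ≤ k := by
    obtain ⟨l, hl⟩ := (hBU k).mp hkB
    have h := hF'mem l k hl
    rw [hF'eq l h] at hl
    exact hFge ⟨l, h⟩ k hl
  -- the key step
  have step : ∀ l : ℕ, l < k → (∀ x ∈ cov l, ∀ y ∈ G' l, x < y) →
      ∀ z ∈ F' l, ∃ y ∈ G' l, z ≤ y := by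
    intro l hlk hP z hz
    by_contra hc
    push_neg at hc
    -- G' l ⊆ F' l
    have hGsub : G' l ⊆ F' l := by
      intro y hy
      have hyB : y ∈ B := hsub ((hA'U y).mpr ⟨l, hy⟩)
      obtain ⟨j, hj⟩ := (hBU y).mp hyB
      rcases lt_trichotomy j l with h | h | h
      · have : y ∈ cov l := (hcovmem l y).mpr ⟨j, h, hj⟩
        exact absurd (hP y this y hy) (lt_irrefl y)
      · subst h; exact hj
      · have hzy := hF'lt l j h z hz y hj
        have := hc y hy
        omega
    have hzG : z ∉ G' l := by
      intro h
      exact absurd le_rfl (not_le.mpr (hc z h))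
    have hGz : G' l ∪ {z} ⊆ F' l := by
      intro u hu
      rcases Finset.mem_union.mp hu with h | h
      · exact hGsub h
      · rw [Finset.mem_singleton] at h; subst h; exact hz
    have hln := hF'mem l z hz
    have hFS : F' l ∈ 𝒮.S β := by
      rw [hF'eq l hln]; exact hFmem ⟨l, hln⟩
    have hGzS : G' l ∪ {z} ∈ 𝒮.S β := hered 𝒮 hβ hFS hGz
    rw [hG'eq l hlk] at hGzS hzG
    exact max_add_not_mem 𝒮 hβ (hmax ⟨l, hlk⟩) hzG hGzS
  -- upward invariant
  have upward : ∀ l : ℕ, l ≤ k → ∀ x ∈ cov l, ∀ y ∈ G' l, x < y := by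
    intro l
    induction l with
    | zero =>
      intro _ x hx
      rw [hcovmem] at hx
      obtain ⟨l', hl', _⟩ := hx
      omega
    | succ l IHl =>
      intro hl1 x hx y hy
      have hlk : l < k := by omega
      have hP := IHl (by omega)
      have hl1k : l + 1 < k := hG'mem (l+1) y hy
      have hGlne : (G' l).Nonempty := by
        rw [hG'eq l hlk]; exact hGne _
      rw [hcovmem] at hx
      obtain ⟨l', hl', hx'⟩ := hx
      rcases Nat.lt_or_ge l' l with h | h
      · have : x ∈ cov l := (hcovmem l x).mpr ⟨l', h, hx'⟩
        obtain ⟨y', hy'⟩ := hGlne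
        have h1 := hP x this y' hy'
        have h2 := hG'lt l (l+1) (by omega) y' hy' y hy
        omega
      · have heq : l' = l := by omega
        rw [heq] at hx'
        obtain ⟨y', hy', hzy'⟩ := step l hlk hP x hx'
        have h2 := hG'lt l (l+1) (by omega) y' hy' y hy
        omega
  -- n = k
  have hnk' : n = k := by
    by_contra hc
    have hn_lt : n < k := by omega
    have hGnne : (G' n).Nonempty := by
      rw [hG'eq n hn_lt]; exact hGne _
    obtain ⟨y, hy⟩ := hGnne
    have hyB : y ∈ B := hsub ((hA'U y).mpr ⟨n, hy⟩)
    obtain ⟨l, hl⟩ := (hBU y).mp hyB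
    have hln := hF'mem l y hl
    have : y ∈ cov n := (hcovmem n y).mpr ⟨l, hln, hl⟩
    exact absurd (upward n (by omega) y this y hy) (lt_irrefl y)
  subst hnk'
  -- downward: F' j = G' j for all j < n
  have downward : ∀ d : ℕ, ∀ j : ℕ, j < n → n - d ≤ j → F' j = G' j := by
    intro d
    induction d with
    | zero => intro j hj hj'; omega
    | succ d IHd =>
      intro j hj hj'
      rcases Nat.lt_or_ge j (n - d) with hcase | hcase
      · -- j = n - d - 1 exactly; show F' j = G' j
        have hjk : j < n := hj
        have hGsub : G' j ⊆ F' j := by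
          intro y hy
          have hyB : y ∈ B := hsub ((hA'U y).mpr ⟨j, hy⟩)
          obtain ⟨l, hl⟩ := (hBU y).mp hyB
          rcases lt_trichotomy l j with h | h | h
          · have : y ∈ cov j := (hcovmem j y).mpr ⟨l, h, hl⟩
            exact absurd (upward j (by omega) y this y hy) (lt_irrefl y)
          · subst h; exact hl
          · have hln := hF'mem l y hl
            have : F' l = G' l := IHd l hln (by omega)
            rw [this] at hl
            exact absurd (hG'lt j l h y hy y hl) (lt_irrefl y)
        have hFsub : F' j ⊆ G' j := by
          intro z hz
          by_contra hzG
          have hGz : G' j ∪ {z} ⊆ F' j := by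
            intro u hu
            rcases Finset.mem_union.mp hu with h | h
            · exact hGsub h
            · rw [Finset.mem_singleton] at h; subst h; exact hz
          have hFS : F' j ∈ 𝒮.S β := by
            rw [hF'eq j hj]; exact hFmem ⟨j, hj⟩
          have hGzS : G' j ∪ {z} ∈ 𝒮.S β := hered 𝒮 hβ hFS hGz
          rw [hG'eq j hjk] at hGzS hzG
          exact max_add_not_mem 𝒮 hβ (hmax ⟨j, hjk⟩) hzG hGzS
        exact Finset.Subset.antisymm hFsub hGsub
      · exact IHd j hj hcase
  -- conclude B = A'
  ext x
  constructor
  · intro hx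
    obtain ⟨l, hl⟩ := (hBU x).mp hx
    have hln := hF'mem l x hl
    rw [downward n l hln (by omega)] at hl
    exact (hA'U x).mpr ⟨l, hl⟩
  · intro hx
    exact hsub hx
theorem succ_ne_zero' (γ : Ordinal) : γ + 1 ≠ 0 := by
  rw [Ordinal.add_one_eq_succ]; exact Order.succ_ne_bot γ

theorem succ_inj' {γ γ' : Ordinal} (h : γ + 1 = γ' + 1) : γ = γ' := by
  rw [Ordinal.add_one_eq_succ, Ordinal.add_one_eq_succ] at h
  exact Order.succ_injective h

theorem not_isLimit_succ' (γ : Ordinal) : ¬ Order.IsSuccLimit (γ + 1) := by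
  rw [Ordinal.add_one_eq_succ]; exact Order.not_isSuccLimit_succ γ

/-- inversion for a non-root node at a successor level. -/
theorem node_inversion_succ {γ : Ordinal} {A D : Finset ℕ} {β : Ordinal}
    (h : AnalysisMem 𝒮 (γ + 1) A D β) (hDA : D ≠ A) :
    ∃ (k : ℕ), k ∈ A ∧ finLE k A ∧ ∃ (C : Fin k → Finset ℕ), (∀ i, MaxIn (𝒮.S γ) (C i)) ∧
      (∀ i, (C i).Nonempty) ∧ (∀ i j, i < j → finLT (C i) (C j)) ∧
      A = Finset.univ.biUnion C ∧ ∃ i, AnalysisMem 𝒮 γ (C i) D β := by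
  generalize hgen : γ + 1 = ξ' at h
  cases h with
  | zero a => exact absurd hgen (succ_ne_zero' γ)
  | succRoot γ' A hA => exact absurd rfl hDA
  | succChild γ' A hA k E hkmem hkmin hE hne' hlt hU i D' β' h' =>
    have hγ : γ = γ' := succ_inj' hgen
    subst hγ
    exact ⟨k, hkmem, hkmin, E, hE, hne', hlt, hU, i, h'⟩
  | limit ξ hξ A hA hne' D' β' h' => exact absurd (hgen ▸ hξ) (not_isLimit_succ' γ)

/-- inversion at a limit level. -/
theorem node_inversion_limit {ξ : Ordinal} (hlim : Order.IsSuccLimit ξ) {A D : Finset ℕ} {β : Ordinal}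
    (h : AnalysisMem 𝒮 ξ A D β) (hne : A.Nonempty) :
    AnalysisMem 𝒮 (𝒮.α ξ (A.min' hne)) A D β := by
  cases h with
  | zero a => exact absurd hlim Ordinal.not_isSuccLimit_zero
  | succRoot γ' A hA => exact absurd hlim (not_isLimit_succ' γ')
  | succChild γ' A hA k E hkmem hkmin hE hne' hlt hU i D' β' h' =>
    exact absurd hlim (not_isLimit_succ' γ')
  | limit ξ hξ A hA hne' D' β' h' => exact h'

/-- a maximal set in `S γ`, `γ < ω₁`, is nonempty. -/
theorem max_nonempty {γ : Ordinal} (hγ : γ < omegaOne) {D : Finset ℕ}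
    (hD : MaxIn (𝒮.S γ) D) : D.Nonempty := by
  by_contra hc
  rw [Finset.not_nonempty_iff_eq_empty] at hc
  subst hc
  have h1 : ({1} : Finset ℕ) ∈ 𝒮.S γ := singleton_mem 𝒮 hγ le_rfl
  have := hD.2 _ h1 (Finset.empty_subset _)
  simp at this
/-- the main induction for the replacement lemma. -/
theorem key {ξ : Ordinal} {A E : Finset ℕ} {δ : Ordinal} (hord : AnalysisMem 𝒮 ξ A E δ) :
    ∀ γ : Ordinal, δ = γ + 1 → ξ < omegaOne → finLE 2 A →
    ∀ (a : ℕ) (D₀ : Finset ℕ), a ∈ D₀ → finLE a D₀ →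
    (∃ β, AnalysisMem 𝒮 ξ A D₀ β) → D₀ ⊂ E →
    (∀ D : Finset ℕ, (∃ β, AnalysisMem 𝒮 ξ A D β) → a ∈ D → finLE a D → D ⊆ D₀) →
    (∀ D : Finset ℕ, (∃ β, AnalysisMem 𝒮 ξ A D β) → D₀ ⊂ D → ¬ D ⊂ E) →
    ∀ D' : Finset ℕ, MaxIn (𝒮.S γ) D' →
    (∀ D : Finset ℕ, (∃ β, AnalysisMem 𝒮 ξ A D β) → finLT D D₀ → finLT D D') →
    (∀ D : Finset ℕ, (∃ β, AnalysisMem 𝒮 ξ A D β) → finLT D₀ D → finLT D' D) →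
    (∃ (D : Finset ℕ) (β : Ordinal), AnalysisMem 𝒮 ξ A D β ∧ D.Nonempty ∧ finLT D D₀ ∧ D ⊆ E) ∧
    ((∀ b ∈ A, (∀ c ∈ A, b ≤ c) → finLE b D') → MaxIn (𝒮.S ξ) ((A \ D₀) ∪ D')) := by
  induction hord with
  | zero a' =>
    intro γ hγ
    exact absurd hγ.symm (succ_ne_zero' γ)
  | succRoot γ₀ A hA =>
    intro γ hγ hξω h2 a D₀ haD haLE hD₀n hsub hD₀top hEimm D' hD' hleft hright
    have hγ₀ : γ₀ = γ := succ_inj' hγ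
    subst hγ₀
    have hγω : γ₀ < omegaOne := lt_trans (lt_add_one γ₀) hξω
    -- decomposition of A from the derivation of D₀
    obtain ⟨β₀, hd⟩ := hD₀n
    obtain ⟨k, hkmem, hkmin, C, hC, hCne, hClt, hCU, i₀, hd'⟩ :=
      node_inversion_succ 𝒮 hd hsub.ne
    have hk2 : 2 ≤ k := h2 k hkmem
    have hpos : 0 < k := by omega
    have hCsub : ∀ p : Fin k, C p ⊆ A := by
      intro p
      rw [hCU]
      exact Finset.subset_biUnion_of_mem C (Finset.mem_univ p)
    have hdisjC : ∀ (p q : Fin k), p ≠ q → ∀ x, x ∈ C p → x ∈ C q → False := by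
      intro p q hpq x hp hq
      rcases lt_or_gt_of_ne hpq with h | h
      · exact absurd (hClt p q h x hp x hq) (lt_irrefl x)
      · exact absurd (hClt q p h x hq x hp) (lt_irrefl x)
    have hD₀C : D₀ ⊆ C i₀ := node_subset 𝒮 hd'
    -- every block is a node
    have hCnode : ∀ p : Fin k, ∃ δ', AnalysisMem 𝒮 (γ₀+1) A (C p) δ' := by
      intro p
      obtain ⟨δ', hδ'⟩ := root_node 𝒮 hγω (hC p) (hCne p)
      exact ⟨δ', AnalysisMem.succChild γ₀ A hA k C hkmem hkmin hC hCne hClt hCU p (C p) δ' hδ'⟩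
    -- pick a block different from i₀
    have hq : ∃ q : Fin k, q ≠ i₀ := by
      by_cases h : (⟨0, hpos⟩ : Fin k) = i₀
      · refine ⟨⟨1, by omega⟩, ?_⟩
        rw [← h]
        intro hc
        simpa using congrArg Fin.val hc
      · exact ⟨⟨0, hpos⟩, h⟩
    obtain ⟨q, hqi⟩ := hq
    obtain ⟨xq, hxq⟩ := hCne q
    have hxqA : xq ∈ A := hCsub q hxq
    have hxqCi : xq ∉ C i₀ := fun h => hdisjC q i₀ hqi xq hxq h
    have hCiA : C i₀ ⊂ A := by
      refine Finset.ssubset_iff_of_subset (hCsub i₀) |>.mpr ⟨xq, hxqA, hxqCi⟩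
    -- D₀ coincides with the block C i₀
    have hD₀eq : D₀ = C i₀ := by
      by_contra hc
      exact hEimm (C i₀) (hCnode i₀) (Finset.ssubset_iff_subset_ne.mpr ⟨hD₀C, hc⟩) hCiA
    -- k belongs to the first block
    have hkC0 : k ∈ C ⟨0, hpos⟩ := by
      have hkA : k ∈ A := hkmem
      rw [hCU] at hkA
      simp only [Finset.mem_biUnion, Finset.mem_univ, true_and] at hkA
      obtain ⟨j, hj⟩ := hkA
      by_cases hj0 : j = ⟨0, hpos⟩
      · rwa [hj0] at hj
      · have hjv : 0 < j.val := Nat.pos_of_ne_zero (fun h => hj0 (Fin.ext h))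
        have hjpos : (⟨0, hpos⟩ : Fin k) < j := by
          rw [Fin.lt_def]; simpa using hjv
        obtain ⟨y, hy⟩ := hCne ⟨0, hpos⟩
        have h1 := hClt _ j hjpos y hy k hj
        have h2 := hkmin y (hCsub _ hy)
        omega
    -- i₀ is not the first block
    have hi₀pos : 0 < i₀.val := by
      by_contra hc
      have h0 : i₀ = ⟨0, hpos⟩ := Fin.ext (by simp only [Fin.val_mk]; omega)
      have hkD₀ : k ∈ D₀ := by rw [hD₀eq, h0]; exact hkC0
      have hak : a ≤ k := haLE k hkD₀
      have haA : finLE a A := fun x hx => le_trans hak (hkmin x hx)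
      have haAm : a ∈ A := hCsub i₀ (hD₀C haD)
      have hAD₀ := hD₀top A ⟨γ₀+1, AnalysisMem.succRoot γ₀ A hA⟩ haAm haA
      exact hxqCi (hD₀eq ▸ hAD₀ hxqA)
    have h0i₀ : (⟨0, hpos⟩ : Fin k) < i₀ := by
      rw [Fin.lt_def]; simpa using hi₀pos
    constructor
    · -- witness node
      obtain ⟨δ', hδ'⟩ := hCnode ⟨0, hpos⟩
      refine ⟨C ⟨0, hpos⟩, δ', hδ', hCne _, ?_, hCsub _⟩
      rw [hD₀eq]
      exact hClt _ i₀ h0i₀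
    · intro hge
      have hD'ne : D'.Nonempty := max_nonempty 𝒮 hγω hD'
      set G : Fin k → Finset ℕ := fun p => if p = i₀ then D' else C p with hG
      have hGmax : ∀ p, MaxIn (𝒮.S γ₀) (G p) := by
        intro p; by_cases hp : p = i₀
        · simp only [hG, if_pos hp]; exact hD'
        · simp only [hG, if_neg hp]; exact hC p
      have hGne' : ∀ p, (G p).Nonempty := by
        intro p; by_cases hp : p = i₀
        · simp only [hG, if_pos hp]; exact hD'ne
        · simp only [hG, if_neg hp]; exact hCne p
      have hfinD' : finLE k D' := hge k hkmem hkmin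
      have hGge : ∀ p, finLE k (G p) := by
        intro p; by_cases hp : p = i₀
        · simp only [hG, if_pos hp]; exact hfinD'
        · simp only [hG, if_neg hp]; exact fun x hx => hkmin x (hCsub p hx)
      have hGlt : ∀ p q' : Fin k, p < q' → finLT (G p) (G q') := by
        intro p q' hpq
        by_cases hp : p = i₀
        · subst hp
          simp only [hG, if_pos rfl, if_neg hpq.ne']
          exact hright (C q') (hCnode q') (by rw [hD₀eq]; exact hClt p q' hpq)
        · by_cases hq2 : q' = i₀
          · subst hq2
            simp only [hG, if_neg hp, if_pos rfl]
            exact hleft (C p) (hCnode p) (by rw [hD₀eq]; exact hClt p q' hpq)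
          · simp only [hG, if_neg hp, if_neg hq2]
            exact hClt p q' hpq
      have hne0 : (⟨0, hpos⟩ : Fin k) ≠ i₀ := ne_of_lt h0i₀
      have hGkmem : ∃ p, k ∈ G p :=
        ⟨⟨0, hpos⟩, by simp only [hG, if_neg hne0]; exact hkC0⟩
      have htile := tile 𝒮 hγω hGmax hGne' hGlt hGge hGkmem
      have hGU : Finset.univ.biUnion G = (A \ D₀) ∪ D' := by
        ext x
        simp only [Finset.mem_biUnion, Finset.mem_univ, true_and, Finset.mem_union,
          Finset.mem_sdiff]
        constructor
        · rintro ⟨p, hp⟩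
          by_cases hpi : p = i₀
          · subst hpi
            simp only [hG, if_pos rfl] at hp
            exact Or.inr hp
          · simp only [hG, if_neg hpi] at hp
            refine Or.inl ⟨hCsub p hp, ?_⟩
            rw [hD₀eq]
            exact fun h => hdisjC p i₀ hpi x hp h
        · rintro (⟨hxA, hxD₀⟩ | hxD')
          · rw [hCU] at hxA
            simp only [Finset.mem_biUnion, Finset.mem_univ, true_and] at hxA
            obtain ⟨p, hp⟩ := hxA
            have hpi : p ≠ i₀ := fun h => hxD₀ (by rw [hD₀eq, ← h]; exact hp)
            exact ⟨p, by simp only [hG, if_neg hpi]; exact hp⟩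
          · exact ⟨i₀, by simp only [hG, if_pos rfl]; exact hxD'⟩
      rw [← hGU]
      exact htile
  | succChild γ₁ A hA k Ed hkmem hkmin hEd hned hltd hUd i E δ h IH =>
    intro γ hγ hξω h2 a D₀ haD haLE hD₀n hsub hD₀top hEimm D' hD' hleft hright
    have hγ₁ω : γ₁ < omegaOne := lt_trans (lt_add_one γ₁) hξω
    have hk2 : 2 ≤ k := h2 k hkmem
    have hpos : 0 < k := by omega
    have hEdsub : ∀ p : Fin k, Ed p ⊆ A := fun p => by
      rw [hUd]; exact Finset.subset_biUnion_of_mem Ed (Finset.mem_univ p)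
    have hdisj : ∀ (p q : Fin k), p ≠ q → ∀ x, x ∈ Ed p → x ∈ Ed q → False := by
      intro p q hpq x hp hq
      rcases lt_or_gt_of_ne hpq with h' | h'
      · exact absurd (hltd p q h' x hp x hq) (lt_irrefl x)
      · exact absurd (hltd q p h' x hq x hp) (lt_irrefl x)
    have hlift : ∀ (p : Fin k) (D : Finset ℕ) (β : Ordinal),
        AnalysisMem 𝒮 γ₁ (Ed p) D β → AnalysisMem 𝒮 (γ₁+1) A D β := by
      intro p D β hb
      exact AnalysisMem.succChild γ₁ A hA k Ed hkmem hkmin hEd hned hltd hUd p D β hb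
    have hEnode : ∀ p : Fin k, ∃ δ', AnalysisMem 𝒮 (γ₁+1) A (Ed p) δ' := by
      intro p
      obtain ⟨δ', hδ'⟩ := root_node 𝒮 hγ₁ω (hEd p) (hned p)
      exact ⟨δ', hlift p _ _ hδ'⟩
    have hEsub : E ⊆ Ed i := node_subset 𝒮 h
    have hD₀Ei : D₀ ⊆ Ed i := hsub.subset.trans hEsub
    have hq : ∃ q : Fin k, q ≠ i := by
      by_cases h' : (⟨0, hpos⟩ : Fin k) = i
      · refine ⟨⟨1, by omega⟩, ?_⟩
        rw [← h']
        intro hc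
        simpa using congrArg Fin.val hc
      · exact ⟨⟨0, hpos⟩, h'⟩
    obtain ⟨q, hqi⟩ := hq
    obtain ⟨xq, hxq⟩ := hned q
    have hxqA : xq ∈ A := hEdsub q hxq
    have hxqEi : xq ∉ Ed i := fun h' => hdisj q i hqi xq hxq h'
    obtain ⟨β₀, hd⟩ := hD₀n
    have hD₀A : D₀ ≠ A := by
      intro h'
      exact hxqEi (hD₀Ei (h' ▸ hxqA))
    obtain ⟨k', hk'mem, hk'min, C, hC, hCne, hClt, hCU, j, hd'⟩ :=
      node_inversion_succ 𝒮 hd hD₀A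
    have hkk' : k = k' := le_antisymm (hkmin k' hk'mem) (hk'min k hkmem)
    subst hkk'
    have huniq : ∀ p, Ed p = C p :=
      decomp_unique 𝒮 hEd hltd hUd hC hClt hCU
    have hD₀Cj : D₀ ⊆ C j := node_subset 𝒮 hd'
    have hij : j = i := by
      by_contra hc
      rw [← huniq j] at hD₀Cj
      exact hdisj j i hc a (hD₀Cj haD) (hD₀Ei haD)
    subst hij
    rw [← huniq j] at hd'
    have h2' : finLE 2 (Ed j) := fun x hx => h2 x (hEdsub j hx)
    have hD₀top' : ∀ D, (∃ β, AnalysisMem 𝒮 γ₁ (Ed j) D β) → a ∈ D → finLE a D → D ⊆ D₀ :=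
      fun D hb haD' haLE' => hD₀top D ⟨Classical.choose hb, hlift j D _ (Classical.choose_spec hb)⟩ haD' haLE'
    have hEimm' : ∀ D, (∃ β, AnalysisMem 𝒮 γ₁ (Ed j) D β) → D₀ ⊂ D → ¬ D ⊂ E :=
      fun D hb => hEimm D ⟨Classical.choose hb, hlift j D _ (Classical.choose_spec hb)⟩
    have hleft' : ∀ D, (∃ β, AnalysisMem 𝒮 γ₁ (Ed j) D β) → finLT D D₀ → finLT D D' :=
      fun D hb => hleft D ⟨Classical.choose hb, hlift j D _ (Classical.choose_spec hb)⟩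
    have hright' : ∀ D, (∃ β, AnalysisMem 𝒮 γ₁ (Ed j) D β) → finLT D₀ D → finLT D' D :=
      fun D hb => hright D ⟨Classical.choose hb, hlift j D _ (Classical.choose_spec hb)⟩
    obtain ⟨⟨D, βD, hDmem, hDne, hDlt, hDsubE⟩, himp⟩ :=
      IH γ hγ hγ₁ω h2' a D₀ haD haLE ⟨β₀, hd'⟩ hsub hD₀top' hEimm' D' hD' hleft' hright'
    constructor
    · exact ⟨D, βD, hlift j D βD hDmem, hDne, hDlt, hDsubE⟩
    · intro hge
      have hgechild : ∀ b ∈ Ed j, (∀ c ∈ Ed j, b ≤ c) → finLE b D' := by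
        intro b hb hbmin y hy
        obtain ⟨x, hx⟩ := hDne
        have hxE : x ∈ Ed j := hEsub (hDsubE hx)
        have hbx : b ≤ x := hbmin x hxE
        have hlt' : finLT D D' := hleft D ⟨βD, hlift j D βD hDmem⟩ hDlt
        have := hlt' x hx y hy
        omega
      have hmaxchild := himp hgechild
      obtain ⟨xe, hxe, hxeD₀⟩ := Finset.exists_of_ssubset hsub
      have hblockne : ((Ed j \ D₀) ∪ D').Nonempty :=
        ⟨xe, Finset.mem_union_left _ (Finset.mem_sdiff.mpr ⟨hEsub hxe, hxeD₀⟩)⟩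
      set G : Fin k → Finset ℕ := fun p => if p = j then (Ed j \ D₀) ∪ D' else Ed p with hG
      have hGmax : ∀ p, MaxIn (𝒮.S γ₁) (G p) := by
        intro p; by_cases hp : p = j
        · subst hp; simp only [hG, if_pos rfl]; exact hmaxchild
        · simp only [hG, if_neg hp]; exact hEd p
      have hGne' : ∀ p, (G p).Nonempty := by
        intro p; by_cases hp : p = j
        · subst hp; simp only [hG, if_pos rfl]; exact hblockne
        · simp only [hG, if_neg hp]; exact hned p
      have hGge : ∀ p, finLE k (G p) := by
        intro p; by_cases hp : p = j
        · subst hp; simp only [hG, if_pos rfl]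
          intro x hx
          rcases Finset.mem_union.mp hx with h' | h'
          · exact hkmin x (hEdsub p (Finset.mem_sdiff.mp h').1)
          · exact hge k hkmem hkmin x h'
        · simp only [hG, if_neg hp]; exact fun x hx => hkmin x (hEdsub p hx)
      have hGlt : ∀ p q' : Fin k, p < q' → finLT (G p) (G q') := by
        intro p q' hpq x hx y hy
        by_cases hp : p = j
        · subst hp
          simp only [hG, if_pos rfl] at hx
          simp only [hG, if_neg hpq.ne'] at hy
          rcases Finset.mem_union.mp hx with h' | h'
          · exact hltd p q' hpq x (Finset.mem_sdiff.mp h').1 y hy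
          · exact hright (Ed q') (hEnode q')
              (fun u hu v hv => hltd p q' hpq u (hD₀Ei hu) v hv) x h' y hy
        · by_cases hq2 : q' = j
          · subst hq2
            simp only [hG, if_neg hp] at hx
            simp only [hG, if_pos rfl] at hy
            rcases Finset.mem_union.mp hy with h' | h'
            · exact hltd p q' hpq x hx y (Finset.mem_sdiff.mp h').1
            · exact hleft (Ed p) (hEnode p)
                (fun u hu v hv => hltd p q' hpq u hu v (hD₀Ei hv)) x hx y h'
          · simp only [hG, if_neg hp] at hx
            simp only [hG, if_neg hq2] at hy
            exact hltd p q' hpq x hx y hy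
      have hkE0 : k ∈ Ed ⟨0, hpos⟩ := by
        have hkA : k ∈ A := hkmem
        rw [hUd] at hkA
        simp only [Finset.mem_biUnion, Finset.mem_univ, true_and] at hkA
        obtain ⟨p, hp⟩ := hkA
        by_cases hp0 : p = ⟨0, hpos⟩
        · rwa [hp0] at hp
        · have hpv : 0 < p.val := Nat.pos_of_ne_zero (fun h' => hp0 (Fin.ext h'))
          have hppos : (⟨0, hpos⟩ : Fin k) < p := by
            rw [Fin.lt_def]; simpa using hpv
          obtain ⟨y, hy⟩ := hned ⟨0, hpos⟩
          have h1 := hltd _ p hppos y hy k hp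
          have h2'' := hkmin y (hEdsub _ hy)
          omega
      have hGkmem : ∃ p, k ∈ G p := by
        by_cases h0j : (⟨0, hpos⟩ : Fin k) = j
        · refine ⟨j, ?_⟩
          simp only [hG, if_pos rfl]
          apply Finset.mem_union_left
          rw [Finset.mem_sdiff]
          refine ⟨h0j ▸ hkE0, ?_⟩
          intro hkD₀
          have hak : a ≤ k := haLE k hkD₀
          have haA : finLE a A := fun x hx => le_trans hak (hkmin x hx)
          have haAm : a ∈ A := hEdsub j (hD₀Ei haD)
          have hAD₀ := hD₀top A ⟨γ₁+1, AnalysisMem.succRoot γ₁ A hA⟩ haAm haA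
          exact hxqEi (hD₀Ei (hAD₀ hxqA))
        · exact ⟨⟨0, hpos⟩, by simp only [hG, if_neg h0j]; exact hkE0⟩
      have htile := tile 𝒮 hγ₁ω hGmax hGne' hGlt hGge hGkmem
      have hGU : Finset.univ.biUnion G = (A \ D₀) ∪ D' := by
        ext x
        simp only [Finset.mem_biUnion, Finset.mem_univ, true_and, Finset.mem_union,
          Finset.mem_sdiff]
        constructor
        · rintro ⟨p, hp⟩
          by_cases hpj : p = j
          · subst hpj
            simp only [hG, if_pos rfl] at hp
            rcases Finset.mem_union.mp hp with h' | h'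
            · obtain ⟨h1, h2''⟩ := Finset.mem_sdiff.mp h'
              exact Or.inl ⟨hEdsub p h1, h2''⟩
            · exact Or.inr h'
          · simp only [hG, if_neg hpj] at hp
            refine Or.inl ⟨hEdsub p hp, ?_⟩
            exact fun h' => hdisj p j hpj x hp (hD₀Ei h')
        · rintro (⟨hxA, hxD₀⟩ | hxD')
          · rw [hUd] at hxA
            simp only [Finset.mem_biUnion, Finset.mem_univ, true_and] at hxA
            obtain ⟨p, hp⟩ := hxA
            by_cases hpj : p = j
            · subst hpj
              refine ⟨p, ?_⟩
              simp only [hG, if_pos rfl]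
              exact Finset.mem_union_left _ (Finset.mem_sdiff.mpr ⟨hp, hxD₀⟩)
            · exact ⟨p, by simp only [hG, if_neg hpj]; exact hp⟩
          · exact ⟨j, by simp only [hG, if_pos rfl]; exact Finset.mem_union_right _ hxD'⟩
      rw [← hGU]
      exact htile
  | limit ξ hlim A hA hne E δ h IH =>
    intro γ hγ hξω h2 a D₀ haD haLE hD₀n hsub hD₀top hEimm D' hD' hleft hright
    have hmA : A.min' hne ∈ A := A.min'_mem hne
    have hm2 : 2 ≤ A.min' hne := h2 _ hmA
    have hm1 : 1 ≤ A.min' hne := by omega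
    have hα : 𝒮.α ξ (A.min' hne) < ξ := 𝒮.α_lt ξ hlim hξω _ hm1
    have hαω : 𝒮.α ξ (A.min' hne) < omegaOne := lt_trans hα hξω
    have hA' : MaxIn (𝒮.S (𝒮.α ξ (A.min' hne))) A := max_limit_down 𝒮 hlim hξω hA hne
    have hlift : ∀ (D : Finset ℕ) (β : Ordinal),
        AnalysisMem 𝒮 (𝒮.α ξ (A.min' hne)) A D β → AnalysisMem 𝒮 ξ A D β := by
      intro D β hb
      exact AnalysisMem.limit ξ hlim A hA hne D β hb
    obtain ⟨β₀, hd⟩ := hD₀n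
    have hd' : AnalysisMem 𝒮 (𝒮.α ξ (A.min' hne)) A D₀ β₀ :=
      node_inversion_limit 𝒮 hlim hd hne
    have hD₀top' : ∀ D, (∃ β, AnalysisMem 𝒮 (𝒮.α ξ (A.min' hne)) A D β) →
        a ∈ D → finLE a D → D ⊆ D₀ :=
      fun D hb => hD₀top D ⟨Classical.choose hb, hlift D _ (Classical.choose_spec hb)⟩
    have hEimm' : ∀ D, (∃ β, AnalysisMem 𝒮 (𝒮.α ξ (A.min' hne)) A D β) → D₀ ⊂ D → ¬ D ⊂ E :=
      fun D hb => hEimm D ⟨Classical.choose hb, hlift D _ (Classical.choose_spec hb)⟩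
    have hleft' : ∀ D, (∃ β, AnalysisMem 𝒮 (𝒮.α ξ (A.min' hne)) A D β) →
        finLT D D₀ → finLT D D' :=
      fun D hb => hleft D ⟨Classical.choose hb, hlift D _ (Classical.choose_spec hb)⟩
    have hright' : ∀ D, (∃ β, AnalysisMem 𝒮 (𝒮.α ξ (A.min' hne)) A D β) →
        finLT D₀ D → finLT D' D :=
      fun D hb => hright D ⟨Classical.choose hb, hlift D _ (Classical.choose_spec hb)⟩
    obtain ⟨⟨D, βD, hDmem, hDne, hDlt, hDsubE⟩, himp⟩ :=
      IH γ hγ hαω h2 a D₀ haD haLE ⟨β₀, hd'⟩ hsub hD₀top' hEimm' D' hD' hleft' hright'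
    constructor
    · exact ⟨D, βD, hlift D βD hDmem, hDne, hDlt, hDsubE⟩
    · intro hge
      have hmaxα := himp hge
      have hmD₀ : A.min' hne ∉ D₀ := by
        intro hmem
        have hak : a ≤ A.min' hne := haLE _ hmem
        have haA : finLE a A := fun x hx => le_trans hak (A.min'_le x hx)
        obtain ⟨δ₀, hroot⟩ := root_node 𝒮 hξω hA hne
        have haAm : a ∈ A := (node_subset 𝒮 hd) haD
        have hAD₀ := hD₀top A ⟨δ₀, hroot⟩ haAm haA
        obtain ⟨xe, hxe, hxeD₀⟩ := Finset.exists_of_ssubset hsub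
        have hEA : E ⊆ A := node_subset 𝒮 (hlift E δ h)
        exact hxeD₀ (hAD₀ (hEA hxe))
      have hmmem : A.min' hne ∈ (A \ D₀) ∪ D' :=
        Finset.mem_union_left _ (Finset.mem_sdiff.mpr ⟨hmA, hmD₀⟩)
      have hminX : finLE (A.min' hne) ((A \ D₀) ∪ D') := by
        intro x hx
        rcases Finset.mem_union.mp hx with h' | h'
        · exact A.min'_le x (Finset.mem_sdiff.mp h').1
        · exact hge _ hmA (fun c hc => A.min'_le c hc) x h'
      exact max_limit_up 𝒮 hlim hξω hmmem hminX hm1 hmaxα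
end SchreierAux

/-- **the replacement lemma.**  Let `ξ < ω₁`, `A ∈ MAX(S_ξ)` and `a ∈ A`
with `a > min A`.  Let `D₀ = D_{ξ,A}(a)` be the node of `T(ξ,A)` with `min D₀ = a`
closest to the root (it contains every node whose minimum is `a`), let `E` be the
immediate predecessor of `D₀` in `T(ξ,A)` and let `γ + 1 = order_{ξ,A}(E)`.  Then for
every `D' ∈ MAX(S_γ)` contained in the interval `(m₁, m₂)` — i.e. lying strictly to the
right of every node preceding `D₀` and strictly to the left of every node following
`D₀` — the set `(A \ D₀) ∪ D'` is again in `MAX(S_ξ)`. -/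
theorem replacement_lemma (𝒮 : SchreierSystem) (ξ : Ordinal) (hξ : ξ < omegaOne)
    (A : Finset ℕ) (hA : MaxIn (𝒮.S ξ) A)
    (a : ℕ) (ha : a ∈ A) (hgt : ∃ b ∈ A, b < a)
    (D₀ : Finset ℕ) (hD₀ : IsNode 𝒮 ξ A D₀)
    (hD₀min : a ∈ D₀ ∧ finLE a D₀)
    (hD₀top : ∀ D : Finset ℕ, IsNode 𝒮 ξ A D → a ∈ D → finLE a D → D ⊆ D₀)
    (E : Finset ℕ) (hE : IsNode 𝒮 ξ A E) (hD₀E : D₀ ⊂ E)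
    (hEimm : ∀ D : Finset ℕ, IsNode 𝒮 ξ A D → D₀ ⊂ D → ¬ D ⊂ E)
    (γ : Ordinal) (hord : AnalysisMem 𝒮 ξ A E (γ + 1))
    (D' : Finset ℕ) (hD' : MaxIn (𝒮.S γ) D')
    (hleft : ∀ D : Finset ℕ, IsNode 𝒮 ξ A D → finLT D D₀ → finLT D D')
    (hright : ∀ D : Finset ℕ, IsNode 𝒮 ξ A D → finLT D₀ D → finLT D' D) :
    MaxIn (𝒮.S ξ) ((A \ D₀) ∪ D') := by
  classical
  obtain ⟨b, hbA, hba⟩ := hgt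
  have h2 : finLE 2 A := by
    intro x hx
    by_contra hc
    push_neg at hc
    have hx1 : x ≤ 1 := by omega
    have hXx := SchreierAux.small_max 𝒮 hξ hA x hx hx1
    rw [hXx, Finset.mem_singleton] at ha hbA
    omega
  obtain ⟨⟨D, βD, hDmem, hDne, hDlt, _⟩, himp⟩ :=
    SchreierAux.key 𝒮 hord γ rfl hξ h2 a D₀ hD₀min.1 hD₀min.2 hD₀ hD₀E hD₀top hEimm
      D' hD' hleft hright
  apply himp
  intro b' hb' hb'min y hy
  obtain ⟨x, hx⟩ := hDne
  have hxA : x ∈ A := SchreierAux.node_subset 𝒮 hDmem hx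
  have h1 : b' ≤ x := hb'min x hxA
  have h2' := hleft D ⟨βD, hDmem⟩ hDlt x hx y hy
  omega
end
end

section
/- For every countable ordinal ξ with 1 ≤ ξ < ω₁, the Schreier family equals its modified version: S_ξ = S^M_ξ. -/
noncomputable section

open scoped Classical

/-- The successor step in the definition of the modified Schreier families:
unions `E_1 ∪ ⋯ ∪ E_n` of pairwise disjoint nonempty members of `F` with `n ≤ E_i`
for each `i`. -/
def succStepM (F : Set (Finset ℕ)) : Set (Finset ℕ) :=
  {A | ∃ (n : ℕ) (E : Fin n → Finset ℕ),
        (∀ i, E i ∈ F) ∧ (∀ i, (E i).Nonempty) ∧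
        (∀ i j : Fin n, i ≠ j → Disjoint (E i) (E j)) ∧
        (∀ i, finLE n (E i)) ∧ A = Finset.univ.biUnion E}

/-- A Schreier system together with the modified Schreier families `S^M ξ`,
defined by the analogous recursion (using the same approximating sequences `α`). -/
structure ModSchreierSystem extends SchreierSystem where
  SM : Ordinal → Set (Finset ℕ)
  SM_zero : SM 0 = {A : Finset ℕ | A = ∅ ∨ ∃ n : ℕ, A = {n}}
  SM_succ : ∀ γ : Ordinal, SM (γ + 1) = succStepM (SM γ)
  SM_limit : ∀ ξ : Ordinal, Order.IsSuccLimit ξ → ξ < omegaOne →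
    SM ξ = {E : Finset ℕ | ∃ n : ℕ, 1 ≤ n ∧ finLE n E ∧ E ∈ SM (α ξ n)}

/-- Sorted lists (ported helper). -/
def List.Sorted {α : Type*} (r : α → α → Prop) (l : List α) : Prop := l.Pairwise r

-- ===== basics =====

def usum (l : List (Finset ℕ)) : Finset ℕ := l.foldr (· ∪ ·) ∅

@[simp] lemma usum_nil : usum [] = ∅ := rfl
@[simp] lemma usum_cons (b : Finset ℕ) (l : List (Finset ℕ)) :
    usum (b :: l) = b ∪ usum l := rfl

lemma usum_append (l₁ l₂ : List (Finset ℕ)) :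
    usum (l₁ ++ l₂) = usum l₁ ∪ usum l₂ := by
  induction l₁ with
  | nil => simp
  | cons b t ih => simp [ih, Finset.union_assoc]

lemma mem_usum {e : ℕ} {l : List (Finset ℕ)} : e ∈ usum l ↔ ∃ b ∈ l, e ∈ b := by
  induction l with
  | nil => simp
  | cons b t ih => simp [ih]

def mn (A : Finset ℕ) : ℕ := sInf (↑A : Set ℕ)

lemma mn_mem {A : Finset ℕ} (h : A.Nonempty) : mn A ∈ A := by
  have : sInf (↑A : Set ℕ) ∈ (↑A : Set ℕ) := Nat.sInf_mem (by exact_mod_cast h)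
  exact_mod_cast this

lemma mn_le {A : Finset ℕ} {a : ℕ} (h : a ∈ A) : mn A ≤ a :=
  Nat.sInf_le (by exact_mod_cast h)

lemma le_mn {A : Finset ℕ} {c : ℕ} (hne : A.Nonempty) (h : ∀ a ∈ A, c ≤ a) : c ≤ mn A :=
  h _ (mn_mem hne)

lemma mn_subset {A B : Finset ℕ} (h : A ⊆ B) (hA : A.Nonempty) : mn B ≤ mn A :=
  mn_le (h (mn_mem hA))

lemma finLE_iff_le_mn {A : Finset ℕ} {c : ℕ} (hne : A.Nonempty) : finLE c A ↔ c ≤ mn A :=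
  ⟨fun h => le_mn hne h, fun h a ha => le_trans h (mn_le ha)⟩

lemma finLT.disjoint {A B : Finset ℕ} (h : finLT A B) : Disjoint A B := by
  rw [Finset.disjoint_left]
  intro a ha hb
  exact lt_irrefl a (h a ha a hb)

lemma finLT_usum_right {A : Finset ℕ} {l : List (Finset ℕ)} (h : ∀ b ∈ l, finLT A b) :
    finLT A (usum l) := by
  intro a ha e he
  rcases mem_usum.1 he with ⟨b, hb, heb⟩
  exact h b hb a ha e heb

lemma finLT_usum_left {B : Finset ℕ} {l : List (Finset ℕ)} (h : ∀ b ∈ l, finLT b B) :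
    finLT (usum l) B := by
  intro a ha e he
  rcases mem_usum.1 ha with ⟨b, hb, hab⟩
  exact h b hb a hab e he

lemma finLT_trans_ne {A B C : Finset ℕ} (hB : B.Nonempty) (h1 : finLT A B) (h2 : finLT B C) :
    finLT A C := by
  intro a ha c hc
  obtain ⟨b, hb⟩ := hB
  exact lt_trans (h1 a ha b hb) (h2 b hb c hc)

lemma chain'_pairwise {l : List (Finset ℕ)} (hne : ∀ b ∈ l, b.Nonempty)
    (hc : l.IsChain finLT) : l.Pairwise finLT := by
  induction l with
  | nil => exact List.Pairwise.nil
  | cons a t ih =>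
    have hct : t.IsChain finLT := hc.tail
    have hpt : t.Pairwise finLT := ih (fun b hb => hne b (List.mem_cons_of_mem _ hb)) hct
    refine List.Pairwise.cons ?_ hpt
    intro b hb
    -- a is finLT every member of t
    induction t with
    | nil => simp at hb
    | cons c t' _ =>
      have hac : finLT a c := (List.isChain_cons_cons.1 hc).1
      rcases List.mem_cons.1 hb with rfl | hb'
      · exact hac
      · have hcb : finLT c b := List.rel_of_pairwise_cons hpt hb'
        exact finLT_trans_ne (hne c (by simp)) hac hcb

lemma usum_nonempty {l : List (Finset ℕ)} (hl : l ≠ []) (hne : ∀ b ∈ l, b.Nonempty) :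
    (usum l).Nonempty := by
  cases l with
  | nil => simp at hl
  | cons b t =>
    obtain ⟨e, he⟩ := hne b (by simp)
    exact ⟨e, by simp [he]⟩

lemma mn_usum_head {b : Finset ℕ} {l : List (Finset ℕ)}
    (hne : ∀ c ∈ b :: l, c.Nonempty) (hc : (b :: l).IsChain finLT) :
    mn (usum (b :: l)) = mn b := by
  have hp := chain'_pairwise hne hc
  apply le_antisymm
  · exact mn_subset (by simp [usum_cons, Finset.subset_union_left]) (hne b (by simp))
  · apply le_mn (usum_nonempty (by simp) hne)
    intro a ha
    rcases mem_usum.1 ha with ⟨c, hcl, hac⟩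
    rcases List.mem_cons.1 hcl with rfl | hcl'
    · exact mn_le hac
    · have : finLT b c := List.rel_of_pairwise_cons hp hcl'
      exact le_of_lt (this _ (mn_mem (hne b (by simp))) _ hac)

-- list-form characterisation of succStep

lemma usum_ofFn {n : ℕ} (E : Fin n → Finset ℕ) :
    usum (List.ofFn E) = Finset.univ.biUnion E := by
  ext e
  simp only [mem_usum, List.mem_ofFn, Finset.mem_biUnion, Finset.mem_univ, true_and]
  constructor
  · rintro ⟨b, ⟨i, rfl⟩, h⟩; exact ⟨i, h⟩
  · rintro ⟨i, h⟩; exact ⟨E i, ⟨i, rfl⟩, h⟩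

lemma mem_succStep_list {F : Set (Finset ℕ)} {A : Finset ℕ} :
    A ∈ succStep F ↔ ∃ l : List (Finset ℕ),
      (∀ b ∈ l, b ∈ F) ∧ (∀ b ∈ l, b.Nonempty) ∧ l.IsChain finLT ∧
      (∀ b ∈ l, finLE l.length b) ∧ A = usum l := by
  constructor
  · rintro ⟨n, E, hF, hne, hlt, hle, rfl⟩
    refine ⟨List.ofFn E, ?_, ?_, ?_, ?_, (usum_ofFn E).symm⟩
    · intro b hb; rcases (List.mem_ofFn).1 hb with ⟨i, rfl⟩; exact hF i
    · intro b hb; rcases (List.mem_ofFn).1 hb with ⟨i, rfl⟩; exact hne i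
    · exact (List.pairwise_ofFn.2 (fun i j hij => hlt i j hij)).isChain
    · intro b hb; rcases (List.mem_ofFn).1 hb with ⟨i, rfl⟩
      simpa [List.length_ofFn] using hle i
  · rintro ⟨l, hF, hne, hc, hle, rfl⟩
    refine ⟨l.length, l.get, fun i => hF _ (l.get_mem i), fun i => hne _ (l.get_mem i),
      ?_, fun i => hle _ (l.get_mem i), ?_⟩
    · intro i j hij
      exact List.pairwise_iff_get.1 (chain'_pairwise hne hc) i j hij
    · rw [← usum_ofFn]
      congr 1
      exact (List.ofFn_get l).symm


-- ===== S lemmas =====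

namespace SchreierSystem

variable (𝒮 : SchreierSystem)

lemma empty_mem : ∀ γ : Ordinal, γ < omegaOne → ∅ ∈ 𝒮.S γ := by
  intro γ
  induction γ using Ordinal.induction with
  | _ γ IH =>
    intro hγ
    rcases Ordinal.zero_or_succ_or_isSuccLimit γ with h0 | ⟨β, hβ⟩ | hlim
    · subst h0; rw [𝒮.S_zero]; exact Or.inl rfl
    · subst hβ
      rw [← Ordinal.add_one_eq_succ] at *
      rw [𝒮.S_succ]
      exact ⟨0, Fin.elim0, fun i => i.elim0, fun i => i.elim0, fun i => i.elim0,
        fun i => i.elim0, by simp⟩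
    · rw [𝒮.S_limit γ hlim hγ]
      refine ⟨1, le_refl 1, fun a ha => by simp at ha, ?_⟩
      have h1 : 𝒮.α γ 1 < γ := 𝒮.α_lt γ hlim hγ 1 le_rfl
      exact IH _ h1 (lt_trans h1 hγ)

lemma hered : ∀ γ : Ordinal, γ < omegaOne → ∀ A B : Finset ℕ, A ∈ 𝒮.S γ → B ⊆ A → B ∈ 𝒮.S γ := by
  intro γ
  induction γ using Ordinal.induction with
  | _ γ IH =>
    intro hγ A B hA hBA
    rcases Ordinal.zero_or_succ_or_isSuccLimit γ with h0 | ⟨β, hβ⟩ | hlim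
    · subst h0; rw [𝒮.S_zero] at *
      rcases hA with rfl | ⟨n, rfl⟩
      · left; exact Finset.subset_empty.1 hBA
      · rcases Finset.subset_singleton_iff.1 hBA with rfl | rfl
        · left; rfl
        · right; exact ⟨n, rfl⟩
    · subst hβ
      rw [← Ordinal.add_one_eq_succ] at *
      have hβlt : β < β + 1 := by
        rw [Ordinal.add_one_eq_succ]; exact Order.lt_succ β
      have hβ1 : β < omegaOne := lt_trans hβlt hγ
      rw [𝒮.S_succ] at *
      rcases mem_succStep_list.1 hA with ⟨l, hF, hne, hc, hle, rfl⟩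
      apply mem_succStep_list.2
      set l' := (l.map (fun b => b ∩ B)).filter (fun b => b ≠ ∅) with hl'
      have hmem : ∀ b ∈ l', ∃ c ∈ l, b = c ∩ B ∧ b ≠ ∅ := by
        intro b hb
        simp only [hl', List.mem_filter, List.mem_map, decide_eq_true_eq] at hb
        rcases hb with ⟨⟨c, hc', rfl⟩, h2⟩
        exact ⟨c, hc', rfl, h2⟩
      have hlen : l'.length ≤ l.length := le_trans (List.length_filter_le _ _) (by simp)
      refine ⟨l', ?_, ?_, ?_, ?_, ?_⟩
      · intro b hb
        rcases hmem b hb with ⟨c, hc', rfl, _⟩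
        exact IH β hβlt hβ1 c _ (hF c hc') Finset.inter_subset_left
      · intro b hb
        rcases hmem b hb with ⟨c, _, _, h2⟩
        exact Finset.nonempty_iff_ne_empty.2 h2
      · apply List.Pairwise.isChain
        apply List.Pairwise.filter
        apply List.Pairwise.map (R := finLT)
        · intro c d hcd a ha e he
          exact hcd a (Finset.mem_of_mem_inter_left ha) e (Finset.mem_of_mem_inter_left he)
        · exact chain'_pairwise hne hc
      · intro b hb a ha
        rcases hmem b hb with ⟨c, hc', rfl, _⟩
        calc l'.length ≤ l.length := hlen
        _ ≤ a := hle c hc' a (Finset.mem_of_mem_inter_left ha)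
      · ext e
        simp only [mem_usum]
        constructor
        · intro heB
          have heA : e ∈ usum l := hBA heB
          rcases mem_usum.1 heA with ⟨c, hc', hec⟩
          refine ⟨c ∩ B, ?_, Finset.mem_inter.2 ⟨hec, heB⟩⟩
          simp only [hl', List.mem_filter, List.mem_map, decide_eq_true_eq]
          refine ⟨⟨c, hc', rfl⟩, ?_⟩
          intro h
          have : e ∈ (∅ : Finset ℕ) := h ▸ Finset.mem_inter.2 ⟨hec, heB⟩
          simp at this
        · rintro ⟨b, hb, heb⟩
          rcases hmem b hb with ⟨c, _, rfl, _⟩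
          exact Finset.mem_of_mem_inter_right heb
    · rw [𝒮.S_limit γ hlim hγ] at *
      rcases hA with ⟨n, hn1, hnle, hA⟩
      have h1 : 𝒮.α γ n < γ := 𝒮.α_lt γ hlim hγ n hn1
      exact ⟨n, hn1, fun a ha => hnle a (hBA ha),
        IH _ h1 (lt_trans h1 hγ) A B hA hBA⟩



lemma singleton_mem : ∀ γ : Ordinal, γ < omegaOne → ∀ x : ℕ, 1 ≤ x → {x} ∈ 𝒮.S γ := by
  intro γ
  induction γ using Ordinal.induction with
  | _ γ IH =>
    intro hγ x hx
    rcases Ordinal.zero_or_succ_or_isSuccLimit γ with h0 | ⟨β, hβ⟩ | hlim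
    · subst h0; rw [𝒮.S_zero]; exact Or.inr ⟨x, rfl⟩
    · subst hβ
      rw [← Ordinal.add_one_eq_succ] at *
      have hβlt : β < β + 1 := by rw [Ordinal.add_one_eq_succ]; exact Order.lt_succ β
      rw [𝒮.S_succ]
      apply mem_succStep_list.2
      refine ⟨[{x}], ?_, ?_, ?_, ?_, by simp⟩
      · intro b hb; simp only [List.mem_singleton] at hb; subst hb
        exact IH β hβlt (lt_trans hβlt hγ) x hx
      · intro b hb; simp only [List.mem_singleton] at hb; subst hb; simp
      · simp
      · intro b hb; simp only [List.mem_singleton] at hb; subst hb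
        intro a ha; simp only [Finset.mem_singleton] at ha; subst ha; simpa using hx
    · rw [𝒮.S_limit γ hlim hγ]
      have h1 : 𝒮.α γ 1 < γ := 𝒮.α_lt γ hlim hγ 1 le_rfl
      refine ⟨1, le_rfl, ?_, IH _ h1 (lt_trans h1 hγ) x hx⟩
      intro a ha; simp only [Finset.mem_singleton] at ha; subst ha; exact hx

lemma raise (ξ : Ordinal) (hlim : Order.IsSuccLimit ξ) (hξ : ξ < omegaOne) {A : Finset ℕ}
    (h2 : finLE 2 A) {k k' : ℕ} (hk1 : 1 ≤ k) (hkk : k ≤ k')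
    (hA : A ∈ 𝒮.S (𝒮.α ξ k)) : A ∈ 𝒮.S (𝒮.α ξ k') := by
  induction k', hkk using Nat.le_induction with
  | base => exact hA
  | succ m hm ih =>
    have hm1 : 1 ≤ m := le_trans hk1 hm
    have := 𝒮.α_union ξ hlim hξ m hm1 A ∅ ih
      (𝒮.empty_mem _ (lt_trans (𝒮.α_lt ξ hlim hξ m hm1) hξ)) h2
      (by intro a ha b hb; simp at hb)
    simpa using this

end SchreierSystem

lemma length_le_card_usum {l : List (Finset ℕ)} (hne : ∀ b ∈ l, b.Nonempty)
    (hp : l.Pairwise finLT) : l.length ≤ (usum l).card := by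
  induction l with
  | nil => simp
  | cons b t ih =>
    have hd : Disjoint b (usum t) := by
      apply finLT.disjoint
      apply finLT_usum_right
      intro c hc
      exact List.rel_of_pairwise_cons hp hc
    rw [usum_cons, Finset.card_union_of_disjoint hd, List.length_cons]
    have h1 : 1 ≤ b.card := Finset.card_pos.2 (hne b (by simp))
    have h2 := ih (fun c hc => hne c (List.mem_cons_of_mem _ hc)) hp.of_cons
    omega

lemma tailswap_blocks (F : Set (Finset ℕ)) (x : ℕ)
    (Hswap : ∀ b ∈ F, x ∉ b → (∃ e ∈ b, x < e) → (b.filter (· < x) ∪ {x}) ∈ F) :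
    ∀ l : List (Finset ℕ), (∀ b ∈ l, b ∈ F) → (∀ b ∈ l, b.Nonempty) → l.IsChain finLT →
    x ∉ usum l → (∃ a ∈ usum l, x < a) →
    ∃ l' : List (Finset ℕ), l'.length ≤ l.length ∧ (∀ b ∈ l', b ∈ F) ∧
      (∀ b ∈ l', b.Nonempty) ∧ l'.IsChain finLT ∧
      usum l' = (usum l).filter (· < x) ∪ {x} := by
  intro l
  induction l with
  | nil => intro _ _ _ _ hex; simp at hex
  | cons b rest ih =>
    intro hF hne hc hx hex
    have hpair := chain'_pairwise hne hc
    by_cases hb : ∃ e ∈ b, x < e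
    · -- swap inside b, drop the rest
      have hxb : x ∉ b := fun h => hx (mem_usum.2 ⟨b, by simp, h⟩)
      have hb' := Hswap b (hF b (by simp)) hxb hb
      refine ⟨[b.filter (· < x) ∪ {x}], by simp, ?_, ?_, by simp, ?_⟩
      · intro c hcmem; simp only [List.mem_singleton] at hcmem; subst hcmem; exact hb'
      · intro c hcmem; simp only [List.mem_singleton] at hcmem; subst hcmem
        exact ⟨x, by simp⟩
      · -- usum [..] = (b ∪ usum rest).filter (<x) ∪ {x}
        obtain ⟨e₀, he₀, hxe₀⟩ := hb
        have hrest : (usum rest).filter (· < x) = ∅ := by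
          apply Finset.filter_eq_empty_iff.2
          intro a ha
          rcases mem_usum.1 ha with ⟨c, hcl, hac⟩
          have : finLT b c := List.rel_of_pairwise_cons hpair hcl
          have : x < a := lt_trans hxe₀ (this e₀ he₀ a hac)
          omega
        rw [usum_cons, usum_cons, usum_nil, Finset.filter_union, hrest]
        simp
    · -- b is entirely below x; keep it and recurse
      push_neg at hb
      have hbx : ∀ e ∈ b, e < x := by
        intro e he
        have hne' : e ≠ x := fun h => hx (mem_usum.2 ⟨b, by simp, h ▸ he⟩)
        exact lt_of_le_of_ne (hb e he) hne'
      have hexr : ∃ a ∈ usum rest, x < a := by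
        rcases hex with ⟨a, ha, hxa⟩
        rcases mem_usum.1 ha with ⟨c, hcl, hac⟩
        rcases List.mem_cons.1 hcl with rfl | hcl'
        · exact absurd hxa (by have := hbx a hac; omega)
        · exact ⟨a, mem_usum.2 ⟨c, hcl', hac⟩, hxa⟩
      have hxr : x ∉ usum rest := fun h => hx (by
        rcases mem_usum.1 h with ⟨c, hcl, hxc⟩
        exact mem_usum.2 ⟨c, List.mem_cons_of_mem _ hcl, hxc⟩)
      obtain ⟨l'', hlen, hF'', hne'', hc'', husum⟩ :=
        ih (fun c hc' => hF c (List.mem_cons_of_mem _ hc'))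
          (fun c hc' => hne c (List.mem_cons_of_mem _ hc')) hc.tail hxr hexr
      refine ⟨b :: l'', by simpa using hlen, ?_, ?_, ?_, ?_⟩
      · intro c hcmem
        rcases List.mem_cons.1 hcmem with rfl | h'
        · exact hF c (by simp)
        · exact hF'' c h'
      · intro c hcmem
        rcases List.mem_cons.1 hcmem with rfl | h'
        · exact hne c (by simp)
        · exact hne'' c h'
      · -- chain'
        apply List.Pairwise.isChain
        refine List.Pairwise.cons ?_ (chain'_pairwise hne'' hc'')
        intro c hcl' a ha e he
        have hememb : e ∈ usum l'' := mem_usum.2 ⟨c, hcl', he⟩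
        rw [husum] at hememb
        rcases Finset.mem_union.1 hememb with hh | hh
        · rcases Finset.mem_filter.1 hh with ⟨heA, _⟩
          rcases mem_usum.1 heA with ⟨d, hdl, hed⟩
          exact (List.rel_of_pairwise_cons hpair hdl) a ha e hed
        · simp only [Finset.mem_singleton] at hh; subst hh
          exact hbx a ha
      · rw [usum_cons, usum_cons, husum, Finset.filter_union]
        have : b.filter (· < x) = b := Finset.filter_eq_self.2 (fun e he => by
          simpa using hbx e he)
        rw [this, Finset.union_assoc]

namespace SchreierSystem
variable (𝒮 : SchreierSystem)

lemma tailswap : ∀ γ : Ordinal, γ < omegaOne → ∀ A : Finset ℕ, A ∈ 𝒮.S γ →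
    ∀ x : ℕ, 1 ≤ x → x ∉ A → (∃ a ∈ A, x < a) →
    A.filter (· < x) ∪ {x} ∈ 𝒮.S γ := by
  intro γ
  induction γ using Ordinal.induction with
  | _ γ IH =>
    intro hγ A hA x hx hxA hex
    by_cases hfe : A.filter (· < x) = ∅
    · rw [hfe]
      simpa using 𝒮.singleton_mem γ hγ x hx
    · rcases Ordinal.zero_or_succ_or_isSuccLimit γ with h0 | ⟨β, hβ⟩ | hlim
      · -- γ = 0 : A is ∅ or a singleton; filter nonempty & ∃ bigger elt: impossible
        subst h0
        rw [𝒮.S_zero] at hA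
        rcases hA with rfl | ⟨n, rfl⟩
        · simp at hex
        · rcases hex with ⟨a, ha, hxa⟩
          simp only [Finset.mem_singleton] at ha; subst ha
          exfalso
          apply hfe
          apply Finset.filter_eq_empty_iff.2
          intro e he
          simp only [Finset.mem_singleton] at he; subst he
          omega
      · subst hβ
        rw [← Ordinal.add_one_eq_succ] at *
        have hβlt : β < β + 1 := by rw [Ordinal.add_one_eq_succ]; exact Order.lt_succ β
        have hβ1 : β < omegaOne := lt_trans hβlt hγ
        rw [𝒮.S_succ] at *
        rcases mem_succStep_list.1 hA with ⟨l, hF, hne, hc, hle, rfl⟩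
        obtain ⟨l', hlen, hF', hne', hc', husum⟩ :=
          tailswap_blocks (𝒮.S β) x
            (fun b hb hxb hexb => IH β hβlt hβ1 b hb x hx hxb hexb)
            l hF hne hc hxA hex
        apply mem_succStep_list.2
        refine ⟨l', hF', hne', hc', ?_, husum.symm⟩
        -- finLE l'.length for each block
        have hall_le_x : ∀ e ∈ usum l', e ≤ x := by
          intro e he
          rw [husum] at he
          rcases Finset.mem_union.1 he with hh | hh
          · exact le_of_lt (Finset.mem_filter.1 hh).2
          · simp only [Finset.mem_singleton] at hh; omega
        intro b hb a ha
        have hab : a ∈ usum l' := mem_usum.2 ⟨b, hb, ha⟩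
        rcases le_or_gt l'.length 1 with h1 | h1
        · -- l' has at most one block
          have : 1 ≤ a := by
            rw [husum] at hab
            rcases Finset.mem_union.1 hab with hh | hh
            · rcases Finset.mem_filter.1 hh with ⟨haA, _⟩
              rcases mem_usum.1 haA with ⟨c, hcl, hac⟩
              have := hle c hcl a hac
              have hl1 : 1 ≤ l.length := by
                rcases hex with ⟨a₀, ha₀, _⟩
                rcases mem_usum.1 ha₀ with ⟨c₀, hc₀, _⟩
                exact List.length_pos_iff.2 (List.ne_nil_of_mem hc₀)
              omega
            · simp only [Finset.mem_singleton] at hh; omega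
          omega
        · -- at least two blocks: the filtered part is nonempty, so l.length < x
          obtain ⟨e₀, he₀⟩ := Finset.nonempty_iff_ne_empty.2 hfe
          rcases Finset.mem_filter.1 he₀ with ⟨he₀A, he₀x⟩
          rcases mem_usum.1 he₀A with ⟨c₀, hc₀l, he₀c⟩
          have hnx : l.length ≤ e₀ := hle c₀ hc₀l e₀ he₀c
          have hlx : l.length < x := lt_of_le_of_lt hnx he₀x
          rw [husum] at hab
          rcases Finset.mem_union.1 hab with hh | hh
          · rcases Finset.mem_filter.1 hh with ⟨haA, _⟩
            rcases mem_usum.1 haA with ⟨c, hcl, hac⟩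
            exact le_trans hlen (hle c hcl a hac)
          · simp only [Finset.mem_singleton] at hh; subst hh
            omega
      · rw [𝒮.S_limit γ hlim hγ] at *
        rcases hA with ⟨p, hp1, hple, hpA⟩
        have hαlt : 𝒮.α γ p < γ := 𝒮.α_lt γ hlim hγ p hp1
        refine ⟨p, hp1, ?_, IH _ hαlt (lt_trans hαlt hγ) A hpA x hx hxA hex⟩
        intro a ha
        rcases Finset.mem_union.1 ha with hh | hh
        · exact hple a (Finset.mem_filter.1 hh).1
        · simp only [Finset.mem_singleton] at hh; subst hh
          obtain ⟨e₀, he₀⟩ := Finset.nonempty_iff_ne_empty.2 hfe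
          rcases Finset.mem_filter.1 he₀ with ⟨he₀A, he₀x⟩
          have := hple e₀ he₀A
          omega

end SchreierSystem

-- ===== more list helpers =====

lemma usum_perm {l l' : List (Finset ℕ)} (h : l.Perm l') : usum l = usum l' := by
  ext e
  simp only [mem_usum]
  constructor
  · rintro ⟨b, hb, he⟩; exact ⟨b, h.mem_iff.1 hb, he⟩
  · rintro ⟨b, hb, he⟩; exact ⟨b, h.mem_iff.2 hb, he⟩

lemma getD_drop' (l : List (Finset ℕ)) (i j : ℕ) :
    (l.drop i).getD j ∅ = l.getD (i + j) ∅ := by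
  rw [List.getD_eq_getElem?_getD, List.getD_eq_getElem?_getD, List.getElem?_drop]

lemma getD_dropN (l : List ℕ) (i j : ℕ) :
    (l.drop i).getD j 0 = l.getD (i + j) 0 := by
  rw [List.getD_eq_getElem?_getD, List.getD_eq_getElem?_getD, List.getElem?_drop]

lemma sortedN_mergeSort (l : List ℕ) : List.Sorted (· ≤ ·) (l.mergeSort (· ≤ ·)) := by
  have := List.pairwise_mergeSort (le := fun a b : ℕ => decide (a ≤ b))
    (by intro a b c; simp; omega) (by intro a b; simp; omega) l
  unfold List.Sorted
  convert this using 2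
  simp

lemma sorted_getD_le {V : List ℕ} (hs : List.Sorted (· ≤ ·) V) {i j : ℕ}
    (hij : i ≤ j) (hj : j < V.length) : V.getD i 0 ≤ V.getD j 0 := by
  rcases eq_or_lt_of_le hij with rfl | hlt
  · exact le_refl _
  · have h := hs.rel_get_of_lt (a := ⟨i, lt_trans hlt hj⟩) (b := ⟨j, hj⟩) hlt
    rw [List.getD_eq_getElem?_getD, List.getD_eq_getElem?_getD,
      List.getElem?_eq_getElem (lt_trans hlt hj), List.getElem?_eq_getElem hj]
    simpa using h

-- counting in a sorted list
lemma sorted_countP_ge {W : List ℕ} (hs : List.Sorted (· ≤ ·) W) {i c : ℕ}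
    (hi : i < W.length) (hc : W.getD i 0 ≤ c) :
    i + 1 ≤ W.countP (fun w => w ≤ c) := by
  have hsplit : W = W.take (i+1) ++ W.drop (i+1) := (List.take_append_drop _ _).symm
  rw [hsplit, List.countP_append]
  have h1 : (W.take (i+1)).countP (fun w => w ≤ c) = (W.take (i+1)).length := by
    rw [List.countP_eq_length]
    intro a ha
    simp only [decide_eq_true_eq]
    -- a = W[j] for some j ≤ i
    rw [List.mem_iff_getElem] at ha
    rcases ha with ⟨j, hj, rfl⟩
    have hjle : j < i + 1 ∧ j < W.length := by simpa using hj
    have hj' : j < W.length := hjle.2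
    rw [List.getElem_take]
    have hji : j ≤ i := by omega
    calc W[j] = W.getD j 0 := by
          rw [List.getD_eq_getElem?_getD, List.getElem?_eq_getElem hj', Option.getD_some]
    _ ≤ W.getD i 0 := sorted_getD_le hs hji hi
    _ ≤ c := hc
  have h2 : (W.take (i+1)).length = i + 1 := by
    rw [List.length_take]
    omega
  omega

lemma pairwise_disjoint_flatMap {rows : List (Finset ℕ)} (f : Finset ℕ → List (Finset ℕ))
    (h1 : rows.Pairwise (fun a b => Disjoint a b))
    (h2 : ∀ r ∈ rows, (f r).Pairwise (fun a b => Disjoint a b))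
    (h3 : ∀ r ∈ rows, ∀ p ∈ f r, p ⊆ r) :
    (rows.flatMap f).Pairwise (fun a b => Disjoint a b) := by
  induction rows with
  | nil => simp
  | cons r rest ih =>
    rw [List.flatMap_cons, List.pairwise_append]
    refine ⟨h2 r (by simp), ih h1.of_cons (fun r' hr' => h2 r' (by simp [hr']))
        (fun r' hr' => h3 r' (by simp [hr'])), ?_⟩
    intro p hp q hq
    rcases List.mem_flatMap.1 hq with ⟨r', hr', hq'⟩
    have hdisj : Disjoint r r' := List.rel_of_pairwise_cons h1 hr'
    exact Finset.disjoint_of_subset_left (h3 r (by simp) p hp)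
      (Finset.disjoint_of_subset_right (h3 r' (by simp [hr']) q hq') hdisj)

lemma usum_flatMap {rows : List (Finset ℕ)} {f : Finset ℕ → List (Finset ℕ)}
    (h : ∀ r ∈ rows, usum (f r) = r) : usum (rows.flatMap f) = usum rows := by
  induction rows with
  | nil => simp
  | cons r rest ih =>
    rw [List.flatMap_cons, usum_append, usum_cons, h r (by simp),
      ih (fun r' hr' => h r' (by simp [hr']))]

-- all elements of blocks of a chain'-list are ≥ mn of the head
lemma head_mn_le_all {G : List (Finset ℕ)} (hne : ∀ g ∈ G, g.Nonempty)
    (hc : G.IsChain finLT) (hG : G ≠ []) :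
    ∀ e ∈ usum G, mn (G.getD 0 ∅) ≤ e := by
  cases G with
  | nil => simp at hG
  | cons g rest =>
    intro e he
    have h1 := mn_usum_head (b := g) (l := rest) hne hc
    have h0 : ((g :: rest).getD 0 ∅) = g := rfl
    rw [h0, ← h1]
    exact mn_le he

lemma chunk_lemma (F : Set (Finset ℕ)) :
    ∀ (V : List ℕ) (G : List (Finset ℕ)),
    (∀ v ∈ V, 1 ≤ v) →
    (∀ g ∈ G, g ∈ F) → (∀ g ∈ G, g.Nonempty) → G.IsChain finLT →
    G.length ≤ V.sum →
    (∀ t, t < V.length → (V.take t).sum < G.length →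
        V.getD t 0 ≤ mn (G.getD ((V.take t).sum) ∅)) →
    ∃ out : List (Finset ℕ), out.length ≤ V.length ∧
      (∀ f ∈ out, f ∈ succStep F) ∧ (∀ f ∈ out, f.Nonempty) ∧ out.IsChain finLT ∧
      usum out = usum G ∧
      List.Forall₂ (fun (v : ℕ) (f : Finset ℕ) => v ≤ mn f) (V.take out.length) out := by
  intro V
  induction V with
  | nil =>
    intro G _ _ _ _ hlen _
    have : G = [] := by
      simpa using List.length_eq_zero_iff.1 (by simpa using hlen)
    subst this
    exact ⟨[], by simp, by simp, by simp, by simp, by simp, by simp⟩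
  | cons v V' ih =>
    intro G hv1 hF hne hc hlen hcap
    by_cases hG : G = []
    · subst hG
      exact ⟨[], by simp, by simp, by simp, by simp, by simp, by simp⟩
    · have hGlen : 0 < G.length := List.length_pos_iff.2 hG
      have hv : 1 ≤ v := hv1 v (by simp)
      have hcap0 : v ≤ mn (G.getD 0 ∅) := by
        have := hcap 0 (by simp) (by simpa using hGlen)
        simpa using this
      have hheadall := head_mn_le_all hne hc hG
      -- the first chunk
      set chunk := usum (G.take v) with hchunk
      have htake_ne : G.take v ≠ [] := by
        cases G with
        | nil => simp at hG
        | cons g rest =>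
          cases v with
          | zero => omega
          | succ m => simp
      have hchunk_ne : chunk.Nonempty :=
        usum_nonempty htake_ne (fun b hb => hne b (List.mem_of_mem_take hb))
      have htd : G = G.take v ++ G.drop v := (List.take_append_drop _ _).symm
      have hpairG : G.Pairwise finLT := chain'_pairwise hne hc
      have hcross : ∀ a ∈ G.take v, ∀ b ∈ G.drop v, finLT a b := by
        have := hpairG
        rw [htd, List.pairwise_append] at this
        exact this.2.2
      have hchunk_mem : chunk ∈ succStep F := by
        apply mem_succStep_list.2
        refine ⟨G.take v, fun b hb => hF b (List.mem_of_mem_take hb),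
          fun b hb => hne b (List.mem_of_mem_take hb), hc.take v, ?_, rfl⟩
        intro b hb a ha
        have : a ∈ usum G := by
          rw [htd, usum_append]
          exact Finset.mem_union_left _ (mem_usum.2 ⟨b, hb, ha⟩)
        calc (G.take v).length ≤ v := by simp
        _ ≤ mn (G.getD 0 ∅) := hcap0
        _ ≤ a := hheadall a this
      -- recursive call on the rest
      obtain ⟨out', hlen', hmem', hne', hc', husum', hdom'⟩ :=
        ih (G.drop v) (fun w hw => hv1 w (by simp [hw]))
          (fun g hg => hF g (List.mem_of_mem_drop hg))
          (fun g hg => hne g (List.mem_of_mem_drop hg))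
          (hc.drop v)
          (by
            have : (G.drop v).length = G.length - v := by simp
            simp only [List.sum_cons] at hlen
            omega)
          (by
            intro t ht hlt
            have h1 := hcap (t+1) (by simpa using ht)
            have hsum : ((v :: V').take (t+1)).sum = v + (V'.take t).sum := by
              simp
            rw [getD_drop']
            have h2 : (V'.take t).sum < (G.drop v).length → v + (V'.take t).sum < G.length := by
              intro h
              have : (G.drop v).length = G.length - v := by simp
              omega
            have := h1 (by rw [hsum]; exact h2 hlt)
            rw [hsum] at this
            simpa using this)
      refine ⟨chunk :: out', by simp only [List.length_cons]; exact Nat.succ_le_succ hlen', ?_, ?_, ?_, ?_, ?_⟩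
      · intro f hf
        rcases List.mem_cons.1 hf with rfl | hf'
        · exact hchunk_mem
        · exact hmem' f hf'
      · intro f hf
        rcases List.mem_cons.1 hf with rfl | hf'
        · exact hchunk_ne
        · exact hne' f hf'
      · -- chain'
        apply List.Pairwise.isChain
        refine List.Pairwise.cons ?_ (chain'_pairwise hne' hc')
        intro f hf a ha e he
        have hfe : e ∈ usum out' := mem_usum.2 ⟨f, hf, he⟩
        rw [husum'] at hfe
        rcases mem_usum.1 hfe with ⟨b, hb, heb⟩
        rcases mem_usum.1 ha with ⟨b', hb', hab'⟩
        exact hcross b' hb' b hb a hab' e heb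
      · rw [usum_cons, husum', ← usum_append, ← htd]
      · -- Forall₂
        have htake : (v :: V').take (chunk :: out').length
            = v :: V'.take out'.length := by simp
        rw [htake]
        refine List.Forall₂.cons ?_ hdom'
        -- v ≤ mn chunk
        have hmnchunk : mn chunk = mn (G.getD 0 ∅) := by
          cases G with
          | nil => simp at hG
          | cons g rest =>
            cases v with
            | zero => omega
            | succ m =>
              have h1 : (g :: rest).take (m+1) = g :: rest.take m := by simp
              have hne2 : ∀ b ∈ g :: rest.take m, b.Nonempty := by
                intro b hb
                apply hne
                rw [← h1] at hb
                exact List.mem_of_mem_take hb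
              have hc2 : (g :: rest.take m).IsChain finLT := by
                rw [← h1]; exact hc.take (m+1)
              rw [hchunk, h1, mn_usum_head hne2 hc2]
              simp [List.getD]
        rw [hmnchunk]
        exact hcap0

-- ===== the rearrangement statement =====

def RConcl (𝒮 : SchreierSystem) (γ : Ordinal) (rows : List (Finset ℕ)) (V : List ℕ) : Prop :=
  ∃ out : List (Finset ℕ), out.length ≤ rows.length ∧
    (∀ f ∈ out, f.Nonempty) ∧ (∀ f ∈ out, f ∈ 𝒮.S γ) ∧ out.IsChain finLT ∧
    usum out = usum rows ∧
    List.Forall₂ (fun (v : ℕ) (f : Finset ℕ) => v ≤ mn f) (V.take out.length) out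

def R0Stmt (𝒮 : SchreierSystem) (γ : Ordinal) : Prop := ∀ rows : List (Finset ℕ),
  List.Sorted (· ≤ ·) (rows.map mn) → rows.Pairwise (fun a b => Disjoint a b) →
  (∀ r ∈ rows, r.Nonempty) → (∀ r ∈ rows, r ∈ 𝒮.S γ) → RConcl 𝒮 γ rows (rows.map mn)

def RStmt (𝒮 : SchreierSystem) (γ : Ordinal) : Prop := ∀ rows : List (Finset ℕ),
  rows.Pairwise (fun a b => Disjoint a b) →
  (∀ r ∈ rows, r.Nonempty) → (∀ r ∈ rows, r ∈ 𝒮.S γ) →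
  RConcl 𝒮 γ rows ((rows.map mn).mergeSort (· ≤ ·))

lemma sortKey_trans : ∀ (a b c : Finset ℕ), (decide (mn a ≤ mn b)) = true →
    (decide (mn b ≤ mn c)) = true → (decide (mn a ≤ mn c)) = true := by
  intro a b c h1 h2; simp at *; omega

lemma sortKey_total : ∀ (a b : Finset ℕ), ((decide (mn a ≤ mn b)) || (decide (mn b ≤ mn a))) = true := by
  intro a b; simp; omega

lemma R0_to_R {𝒮 : SchreierSystem} {γ : Ordinal} (h : R0Stmt 𝒮 γ) : RStmt 𝒮 γ := by
  intro rows hdisj hne hmem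
  set rows' := rows.mergeSort (fun a b => decide (mn a ≤ mn b)) with hrows'
  have hperm : rows'.Perm rows := List.mergeSort_perm rows _
  have hsorted' : List.Pairwise (fun a b => mn a ≤ mn b) rows' := by
    have := List.pairwise_mergeSort (le := fun a b : Finset ℕ => decide (mn a ≤ mn b))
      sortKey_trans sortKey_total rows
    exact this.imp (by intro a b h; simpa using h)
  have hkey : rows'.map mn = (rows.map mn).mergeSort (· ≤ ·) := by
    apply (fun hp h1 h2 => List.Perm.eq_of_pairwise' (r := (· ≤ · : ℕ → ℕ → Prop)) h1 h2 hp)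
    · exact (hperm.map mn).trans (List.mergeSort_perm (rows.map mn) _).symm
    · exact List.pairwise_map.2 hsorted'
    · exact sortedN_mergeSort _
  obtain ⟨out, hlen, hone, htwo, hthree, hfour, hfive⟩ :=
    h rows' (List.pairwise_map.2 hsorted')
      ((hperm.pairwise_iff (fun h => h.symm)).2 hdisj)
      (fun r hr => hne r (hperm.mem_iff.1 hr))
      (fun r hr => hmem r (hperm.mem_iff.1 hr))
  refine ⟨out, ?_, hone, htwo, hthree, ?_, ?_⟩
  · calc out.length ≤ rows'.length := hlen
    _ = rows.length := hperm.length_eq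
  · rw [hfour]; exact usum_perm hperm
  · rwa [hkey] at hfive

namespace SchreierSystem
variable (𝒮 : SchreierSystem)

-- zero case
lemma R0_zero : R0Stmt 𝒮 0 := by
  intro rows hsort hdisj hne hmem
  have hsing : ∀ r ∈ rows, ∃ n : ℕ, r = {n} := by
    intro r hr
    have := hmem r hr
    rw [𝒮.S_zero] at this
    rcases this with he | h
    · exfalso
      have hno := hne r hr
      rw [he] at hno
      simp at hno
    · exact h
  refine ⟨rows, le_rfl, hne, hmem, ?_, rfl, ?_⟩
  · apply List.Pairwise.isChain
    have hp1 : rows.Pairwise (fun a b => mn a ≤ mn b) := List.pairwise_map.1 hsort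
    refine (hp1.and hdisj).imp_of_mem ?_
    intro a b ha hb hab
    rcases hsing a ha with ⟨n, rfl⟩
    rcases hsing b hb with ⟨m, rfl⟩
    have h1 : mn {n} = n := by simp [mn]
    have h2 : mn {m} = m := by simp [mn]
    have hle : n ≤ m := by rw [← h1, ← h2]; exact hab.1
    have hnm : n ≠ m := by
      intro h; subst h
      exact absurd rfl (Finset.disjoint_singleton.1 hab.2)
    intro x hx y hy
    simp only [Finset.mem_singleton] at hx hy
    subst hx; subst hy
    omega
  · have : (rows.map mn).take rows.length = rows.map mn := by
      apply List.take_of_length_le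
      simp
    rw [this]
    rw [List.forall₂_map_left_iff]
    exact List.forall₂_same.2 (fun r _ => le_rfl)

end SchreierSystem

namespace SchreierSystem
variable (𝒮 : SchreierSystem)

lemma R0_succ (β : Ordinal) (HRβ : RStmt 𝒮 β) : R0Stmt 𝒮 (β + 1) := by
  intro rows hsort hdisj hne hmem
  classical
  set V : List ℕ := rows.map mn with hV
  -- block decomposition of each row
  set blk : Finset ℕ → List (Finset ℕ) := fun r =>
    if h : r ∈ succStep (𝒮.S β) then Classical.choose (mem_succStep_list.1 h) else [] with hblk
  have hblkspec : ∀ r ∈ rows, (∀ b ∈ blk r, b ∈ 𝒮.S β) ∧ (∀ b ∈ blk r, b.Nonempty) ∧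
      (blk r).IsChain finLT ∧ (∀ b ∈ blk r, finLE (blk r).length b) ∧ r = usum (blk r) := by
    intro r hr
    have hmem' : r ∈ succStep (𝒮.S β) := by
      have := hmem r hr
      rwa [𝒮.S_succ] at this
    have := Classical.choose_spec (mem_succStep_list.1 hmem')
    rw [hblk]
    simp only [dif_pos hmem']
    exact this
  have hblk_sub : ∀ r ∈ rows, ∀ p ∈ blk r, p ⊆ r := by
    intro r hr p hp e he
    rw [(hblkspec r hr).2.2.2.2]
    exact mem_usum.2 ⟨p, hp, he⟩
  have hblk_len : ∀ r ∈ rows, (blk r).length ≤ mn r := by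
    intro r hr
    obtain ⟨e, he⟩ := hne r hr
    have h1 : e ∈ usum (blk r) := by rw [← (hblkspec r hr).2.2.2.2]; exact he
    rcases mem_usum.1 h1 with ⟨b, hb, heb⟩
    apply le_mn (hne r hr)
    intro a ha
    have h2 : a ∈ usum (blk r) := by rw [← (hblkspec r hr).2.2.2.2]; exact ha
    rcases mem_usum.1 h2 with ⟨b', hb', hab⟩
    exact (hblkspec r hr).2.2.2.1 b' hb' a hab
  have hblk_ne : ∀ r ∈ rows, blk r ≠ [] := by
    intro r hr h
    obtain ⟨e, he⟩ := hne r hr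
    have h1 : e ∈ usum (blk r) := by rw [← (hblkspec r hr).2.2.2.2]; exact he
    rw [h] at h1
    simp at h1
  have hV1 : ∀ v ∈ V, 1 ≤ v := by
    rw [hV]
    intro v hv
    rcases List.mem_map.1 hv with ⟨r, hr, rfl⟩
    have h1 : 1 ≤ (blk r).length := List.length_pos_iff.2 (hblk_ne r hr)
    exact le_trans h1 (hblk_len r hr)
  -- pool the pieces
  set pieces : List (Finset ℕ) := rows.flatMap blk with hpieces
  have hpiece_mem : ∀ p ∈ pieces, p ∈ 𝒮.S β := by
    intro p hp
    rcases List.mem_flatMap.1 hp with ⟨r, hr, hpr⟩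
    exact (hblkspec r hr).1 p hpr
  have hpiece_ne : ∀ p ∈ pieces, p.Nonempty := by
    intro p hp
    rcases List.mem_flatMap.1 hp with ⟨r, hr, hpr⟩
    exact (hblkspec r hr).2.1 p hpr
  have hpiece_disj : pieces.Pairwise (fun a b => Disjoint a b) := by
    apply pairwise_disjoint_flatMap blk hdisj
    · intro r hr
      exact (chain'_pairwise ((hblkspec r hr).2.1) ((hblkspec r hr).2.2.1)).imp_of_mem
        (fun _ _ h => h.disjoint)
    · exact hblk_sub
  have husum_pieces : usum pieces = usum rows :=
    usum_flatMap (fun r hr => ((hblkspec r hr).2.2.2.2).symm)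
  have hlen_pieces : pieces.length ≤ V.sum := by
    rw [hpieces, List.length_flatMap, hV]
    exact List.sum_le_sum (fun r hr => hblk_len r hr)
  -- rearrange the pieces at level β
  obtain ⟨Gs, hGlen, hGne, hGmem, hGc, hGusum, hGdom⟩ :=
    HRβ pieces hpiece_disj hpiece_ne hpiece_mem
  set W : List ℕ := (pieces.map mn).mergeSort (· ≤ ·) with hW
  have hWsorted : List.Sorted (· ≤ ·) W := sortedN_mergeSort _
  have hWlen : W.length = pieces.length := by
    rw [hW, List.length_mergeSort, List.length_map]
  have hWperm : W.Perm (pieces.map mn) := List.mergeSort_perm _ _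
  -- the capacity claim
  have hcap : ∀ t, t < V.length → (V.take t).sum < Gs.length →
      V.getD t 0 ≤ mn (Gs.getD ((V.take t).sum) ∅) := by
    intro t ht hslt
    by_contra hcon
    push_neg at hcon
    set st := (V.take t).sum with hst
    set c := mn (Gs.getD st ∅) with hc
    -- lower bound on the count
    have hforall := List.forall₂_iff_get.1 hGdom
    have hstW : st < W.length := by
      rw [hWlen]; exact lt_of_lt_of_le hslt hGlen
    have htakelen : (W.take Gs.length).length = Gs.length := by
      rw [List.length_take]
      have : Gs.length ≤ W.length := by rw [hWlen]; exact hGlen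
      omega
    have hstlt : st < (W.take Gs.length).length := by
      rw [htakelen]; exact hslt
    have hget := hforall.2 st hstlt hslt
    have hgetW : (W.take Gs.length).get ⟨st, hstlt⟩ = W[st] := by
      simp [List.getElem_take]
    have hgetG : Gs.get ⟨st, hslt⟩ = Gs.getD st ∅ := by
      rw [List.getD_eq_getElem?_getD, List.getElem?_eq_getElem hslt]
      simp
    have hWc : W.getD st 0 ≤ c := by
      rw [List.getD_eq_getElem?_getD, List.getElem?_eq_getElem hstW]
      simp only [Option.getD_some]
      calc W[st] = (W.take Gs.length).get ⟨st, hstlt⟩ := hgetW.symm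
      _ ≤ mn (Gs.get ⟨st, hslt⟩) := hget
      _ = c := by rw [hgetG]
    have hlow : st + 1 ≤ W.countP (fun w => w ≤ c) := sorted_countP_ge hWsorted hstW hWc
    -- transfer the count to pieces
    have hcnt1 : W.countP (fun w => w ≤ c) = pieces.countP (fun p => mn p ≤ c) := by
      rw [hWperm.countP_eq, List.countP_map]
      rfl
    -- upper bound on the count
    have hsplit : pieces = (rows.take t).flatMap blk ++ (rows.drop t).flatMap blk := by
      rw [hpieces, ← List.flatMap_append, List.take_append_drop]
    have hcnt2 : ((rows.drop t).flatMap blk).countP (fun p => mn p ≤ c) = 0 := by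
      rw [List.countP_eq_zero]
      intro p hp
      rcases List.mem_flatMap.1 hp with ⟨r, hr, hpr⟩
      simp only [decide_eq_true_eq, not_le]
      -- mn p ≥ mn r ≥ V.getD t 0 > c
      have h1 : mn r ≤ mn p := mn_subset (hblk_sub r (List.mem_of_mem_drop hr) p hpr)
        ((hblkspec r (List.mem_of_mem_drop hr)).2.1 p hpr)
      have h2 : V.getD t 0 ≤ mn r := by
        rw [List.mem_iff_getElem] at hr
        rcases hr with ⟨j, hj, hrj⟩
        have hjrows : t + j < rows.length := by
          simp only [List.length_drop] at hj
          omega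
        have hjV : t + j < V.length := by
          rw [hV, List.length_map]; exact hjrows
        have h3 : V.getD (t + j) 0 = mn r := by
          rw [hV, List.getD_eq_getElem?_getD,
            List.getElem?_eq_getElem (by rw [List.length_map]; exact hjrows)]
          simp only [Option.getD_some, List.getElem_map]
          rw [← hrj, List.getElem_drop]
        rw [← h3]
        exact sorted_getD_le hsort (by omega) hjV
      omega
    have hcnt3 : ((rows.take t).flatMap blk).countP (fun p => mn p ≤ c) ≤ st := by
      calc ((rows.take t).flatMap blk).countP (fun p => mn p ≤ c)
          ≤ ((rows.take t).flatMap blk).length := List.countP_le_length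
      _ = ((rows.take t).map (List.length ∘ blk)).sum := List.length_flatMap
      _ ≤ ((rows.take t).map mn).sum := List.sum_le_sum (fun r hr =>
            hblk_len r (List.mem_of_mem_take hr))
      _ = (V.take t).sum := by rw [hV, List.map_take]
      _ = st := rfl
    rw [hcnt1, hsplit, List.countP_append] at hlow
    omega
  -- chunk the rearranged pieces
  have hGlenV : Gs.length ≤ V.sum := le_trans hGlen hlen_pieces
  obtain ⟨out, holen, homem, hone, hoc, housum, hodom⟩ :=
    chunk_lemma (𝒮.S β) V Gs hV1 hGmem hGne hGc hGlenV hcap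
  refine ⟨out, by rwa [hV, List.length_map] at holen, hone, ?_, hoc, ?_, hodom⟩
  · intro f hf
    rw [𝒮.S_succ]
    exact homem f hf
  · rw [housum, hGusum, husum_pieces]

end SchreierSystem

namespace SchreierSystem
variable (𝒮 : SchreierSystem)

lemma mem_S_one_of_one_mem {A : Finset ℕ} (hA : A ∈ 𝒮.S 1) (h1 : 1 ∈ A) : A = {1} := by
  have h0 : (1 : Ordinal) = 0 + 1 := (zero_add 1).symm
  rw [h0, 𝒮.S_succ] at hA
  rcases mem_succStep_list.1 hA with ⟨l, hF, hne, hc, hle, rfl⟩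
  rcases mem_usum.1 h1 with ⟨b, hb, h1b⟩
  have hlen : l.length ≤ 1 := hle b hb 1 h1b
  cases l with
  | nil => simp at hb
  | cons b₀ rest =>
    cases rest with
    | nil =>
      simp only [List.mem_singleton] at hb
      subst hb
      have hb0 := hF b (by simp)
      rw [𝒮.S_zero] at hb0
      rcases hb0 with he | ⟨m, rfl⟩
      · rw [he] at h1b; simp at h1b
      · simp only [Finset.mem_singleton] at h1b
        subst h1b
        simp [usum]
    | cons b₁ rest' => simp at hlen

lemma merge_two (ξ : Ordinal) (hlim : Order.IsSuccLimit ξ) (hξ : ξ < omegaOne)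
    (HR : ∀ δ, δ < ξ → RStmt 𝒮 δ) (w : ℕ) (hw : 1 ≤ w) (X Y : Finset ℕ)
    (hX : X ∈ 𝒮.S (𝒮.α ξ w)) (hY : Y ∈ 𝒮.S (𝒮.α ξ w))
    (hdisj : Disjoint X Y) (h2 : finLE 2 (X ∪ Y)) :
    X ∪ Y ∈ 𝒮.S (𝒮.α ξ (w + 1)) := by
  have hαlt : 𝒮.α ξ w < ξ := 𝒮.α_lt ξ hlim hξ w hw
  by_cases hYe : Y = ∅
  · subst hYe
    rw [Finset.union_empty]
    exact 𝒮.raise ξ hlim hξ (by intro a ha; exact h2 a (Finset.mem_union_left _ ha))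
      hw (Nat.le_succ w) hX
  by_cases hXe : X = ∅
  · subst hXe
    rw [Finset.empty_union]
    exact 𝒮.raise ξ hlim hξ (by intro a ha; exact h2 a (Finset.mem_union_right _ ha))
      hw (Nat.le_succ w) hY
  obtain ⟨out, hlen, hone, hmemo, hco, husum, -⟩ :=
    HR _ hαlt [X, Y] (by
      refine List.Pairwise.cons ?_ (List.Pairwise.cons (fun b hb => by simp at hb) List.Pairwise.nil)
      intro b hb
      simp only [List.mem_singleton] at hb
      subst hb; exact hdisj) (by
      intro r hr
      rcases List.mem_cons.1 hr with rfl | hr'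
      · exact Finset.nonempty_iff_ne_empty.2 hXe
      · simp only [List.mem_singleton] at hr'; subst hr'
        exact Finset.nonempty_iff_ne_empty.2 hYe) (by
      intro r hr
      rcases List.mem_cons.1 hr with rfl | hr'
      · exact hX
      · simp only [List.mem_singleton] at hr'; subst hr'; exact hY)
  have husum2 : usum out = X ∪ Y := by
    rw [husum]; simp [usum_cons]
  cases out with
  | nil =>
    exfalso
    obtain ⟨e, he⟩ := Finset.nonempty_iff_ne_empty.2 hXe
    have : e ∈ usum ([] : List (Finset ℕ)) := by
      rw [husum2]; exact Finset.mem_union_left _ he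
    simp at this
  | cons H rest =>
    cases rest with
    | nil =>
      have hH : H = X ∪ Y := by
        rw [← husum2]; simp [usum]
      have hHmem : H ∈ 𝒮.S (𝒮.α ξ w) := hmemo H (by simp)
      rw [← hH]
      exact 𝒮.raise ξ hlim hξ (by intro a ha; rw [hH] at ha; exact h2 a ha)
        hw (Nat.le_succ w) hHmem
    | cons H₂ rest2 =>
      cases rest2 with
      | nil =>
        have hu : H ∪ H₂ = X ∪ Y := by
          rw [← husum2]; simp [usum, Finset.union_assoc]
        have hfin : finLT H H₂ := by
          rcases List.isChain_cons_cons.1 hco with ⟨h, -⟩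
          exact h
        have h2H : finLE 2 H := by
          intro a ha
          apply h2
          rw [← hu]
          exact Finset.mem_union_left _ ha
        rw [← hu]
        exact 𝒮.α_union ξ hlim hξ w hw H H₂ (hmemo H (by simp)) (hmemo H₂ (by simp)) h2H hfin
      | cons H₃ t =>
        exfalso
        simp at hlen

lemma limit_loop (ξ : Ordinal) (hlim : Order.IsSuccLimit ξ) (hξ : ξ < omegaOne)
    (HR : ∀ δ, δ < ξ → RStmt 𝒮 δ) :
    ∀ (Gs : List (Finset ℕ)) (A : Finset ℕ) (q : ℕ),
    A.Nonempty → A ∈ 𝒮.S (𝒮.α ξ q) → 1 ≤ q → finLE q A → finLE 2 A →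
    (∀ g ∈ Gs, g.Nonempty) → (∀ g ∈ Gs, g ∈ 𝒮.S ξ) → Gs.IsChain finLT →
    Disjoint A (usum Gs) → (∀ g ∈ Gs, q ≤ mn g) → (∀ g ∈ Gs, 2 ≤ mn g) →
    ∃ out : List (Finset ℕ), out ≠ [] ∧ out.length ≤ Gs.length + 1 ∧
      (∀ f ∈ out, f.Nonempty) ∧ (∀ f ∈ out, f ∈ 𝒮.S ξ) ∧ out.IsChain finLT ∧
      usum out = A ∪ usum Gs ∧
      List.Forall₂ (fun g f => mn g ≤ mn f) (Gs.take (out.length - 1)) out.tail := by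
  have hSeq := 𝒮.S_limit ξ hlim hξ
  intro Gs
  induction Gs with
  | nil =>
    intro A q hAne hA hq1 hqA h2A _ _ _ _ _ _
    refine ⟨[A], by simp, by simp, ?_, ?_, by simp, by simp, by simp⟩
    · intro f hf; simp only [List.mem_singleton] at hf; subst hf; exact hAne
    · intro f hf; simp only [List.mem_singleton] at hf; subst hf
      rw [hSeq]
      exact ⟨q, hq1, hqA, hA⟩
  | cons g rest ih =>
    intro A q hAne hA hq1 hqA h2A hGne hGmem hGc hAdisj h9 h10
    have hgne : g.Nonempty := hGne g (by simp)
    set w : ℕ := mn g with hwdef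
    have hw2 : 2 ≤ w := h10 g (by simp)
    have hwg : w ∈ g := mn_mem hgne
    have hwus : w ∈ usum (g :: rest) := mem_usum.2 ⟨g, by simp, hwg⟩
    have hwA : w ∉ A := fun h => (Finset.disjoint_left.1 hAdisj h) hwus
    have hqw : q ≤ w := h9 g (by simp)
    have hαq_lt : 𝒮.α ξ q < ξ := 𝒮.α_lt ξ hlim hξ q hq1
    have hαq_ω : 𝒮.α ξ q < omegaOne := lt_trans hαq_lt hξ
    -- elements of rest are all > w
    have hrest_gt : ∀ e ∈ usum rest, w < e := by
      intro e he
      rcases mem_usum.1 he with ⟨r, hr, her⟩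
      have hp := chain'_pairwise hGne hGc
      exact (List.rel_of_pairwise_cons hp hr) w hwg e her
    by_cases hterm : ∀ a ∈ A, a < w
    · -- terminal case : A is entirely below g
      refine ⟨A :: g :: rest, by simp, by simp, ?_, ?_, ?_, by simp [usum_cons], ?_⟩
      · intro f hf
        rcases List.mem_cons.1 hf with rfl | hf'
        · exact hAne
        · exact hGne f hf'
      · intro f hf
        rcases List.mem_cons.1 hf with rfl | hf'
        · rw [hSeq]; exact ⟨q, hq1, hqA, hA⟩
        · exact hGmem f hf'
      · rw [List.isChain_cons_cons]
        refine ⟨?_, hGc⟩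
        intro x hx y hy
        exact lt_of_lt_of_le (hterm x hx) (mn_le hy)
      · have h1 : (A :: g :: rest).length - 1 = (g :: rest).length := by simp
        rw [h1, List.take_length]
        exact List.forall₂_same.2 (fun x _ => le_rfl)
    · -- main case : A extends past w
      push_neg at hterm
      obtain ⟨a, haA, haw⟩ := hterm
      have haw' : w < a := by
        rcases lt_or_eq_of_le (not_lt.1 (by simpa using haw)) with h | h
        · exact h
        · exact absurd (h ▸ haA) hwA
      -- the chunk
      set chunk : Finset ℕ := A.filter (· < w) ∪ {w} with hchunkdef
      have hchunk_mem : chunk ∈ 𝒮.S (𝒮.α ξ q) :=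
        𝒮.tailswap (𝒮.α ξ q) hαq_ω A hA w (by omega) hwA ⟨a, haA, haw'⟩
      have hchunk_Sξ : chunk ∈ 𝒮.S ξ := by
        rw [hSeq]
        refine ⟨q, hq1, ?_, hchunk_mem⟩
        intro e he
        rcases Finset.mem_union.1 he with h | h
        · exact hqA e (Finset.mem_filter.1 h).1
        · simp only [Finset.mem_singleton] at h; omega
      have hchunk_ne : chunk.Nonempty := ⟨w, Finset.mem_union_right _ (by simp)⟩
      have hchunk_le : ∀ e ∈ chunk, e ≤ w := by
        intro e he
        rcases Finset.mem_union.1 he with h | h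
        · exact le_of_lt (Finset.mem_filter.1 h).2
        · simp only [Finset.mem_singleton] at h; omega
      -- the tail of A and the rest of g
      set Atail : Finset ℕ := A.filter (fun x => w < x) with hAtaildef
      have hAtail_ne : Atail.Nonempty := ⟨a, Finset.mem_filter.2 ⟨haA, haw'⟩⟩
      have hAtail_mem : Atail ∈ 𝒮.S (𝒮.α ξ q) :=
        𝒮.hered (𝒮.α ξ q) hαq_ω A Atail hA (Finset.filter_subset _ _)
      have hAtail_gt : ∀ e ∈ Atail, w < e := fun e he => (Finset.mem_filter.1 he).2
      set g' : Finset ℕ := g.erase w with hg'def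
      obtain ⟨pg, hpg1, hpgle, hpgmem⟩ : ∃ p, 1 ≤ p ∧ finLE p g ∧ g ∈ 𝒮.S (𝒮.α ξ p) := by
        have := hGmem g (by simp)
        rw [hSeq] at this
        exact this
      have hpgw : pg ≤ w := le_mn hgne hpgle
      have hαpg_ω : 𝒮.α ξ pg < omegaOne := lt_trans (𝒮.α_lt ξ hlim hξ pg hpg1) hξ
      have hg'_mem : g' ∈ 𝒮.S (𝒮.α ξ pg) :=
        𝒮.hered (𝒮.α ξ pg) hαpg_ω g g' hpgmem (Finset.erase_subset _ _)
      have hg'_gt : ∀ e ∈ g', w < e := by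
        intro e he
        rcases Finset.mem_erase.1 he with ⟨hne', heg⟩
        exact lt_of_le_of_ne (mn_le heg) (Ne.symm hne')
      -- raise both to level w and merge
      have hXw : Atail ∈ 𝒮.S (𝒮.α ξ w) :=
        𝒮.raise ξ hlim hξ (fun e he => by have := hAtail_gt e he; omega) hq1 hqw hAtail_mem
      have hYw : g' ∈ 𝒮.S (𝒮.α ξ w) :=
        𝒮.raise ξ hlim hξ (fun e he => by have := hg'_gt e he; omega) hpg1 hpgw hg'_mem
      have hXYdisj : Disjoint Atail g' := by
        apply Finset.disjoint_of_subset_left (Finset.filter_subset _ _)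
        apply Finset.disjoint_of_subset_right (Finset.erase_subset _ _)
        exact Finset.disjoint_of_subset_right
          (fun e (he : e ∈ g) => mem_usum.2 ⟨g, by simp, he⟩) hAdisj
      set carry : Finset ℕ := Atail ∪ g' with hcarrydef
      have hcarry_gt : ∀ e ∈ carry, w < e := by
        intro e he
        rcases Finset.mem_union.1 he with h | h
        · exact hAtail_gt e h
        · exact hg'_gt e h
      have hcarry_mem : carry ∈ 𝒮.S (𝒮.α ξ (w + 1)) :=
        𝒮.merge_two ξ hlim hξ HR w (by omega) Atail g' hXw hYw hXYdisj
          (fun e he => by have := hcarry_gt e he; omega)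
      have hcarry_ne : carry.Nonempty := hAtail_ne.mono Finset.subset_union_left
      -- recursive call
      obtain ⟨out', hne', hlen', hone', hmem', hc', husum', hdom'⟩ :=
        ih carry (w + 1) hcarry_ne hcarry_mem (by omega)
          (fun e he => hcarry_gt e he)
          (fun e he => by have := hcarry_gt e he; omega)
          (fun r hr => hGne r (by simp [hr]))
          (fun r hr => hGmem r (by simp [hr]))
          hGc.tail
          (by
            apply Finset.disjoint_left.2
            intro e he hus
            have hgt := hrest_gt e hus
            rcases Finset.mem_union.1 he with h | h
            · exact (Finset.disjoint_left.1 hAdisj (Finset.mem_filter.1 h).1)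
                (mem_usum.2 (by
                  rcases mem_usum.1 hus with ⟨r, hr, her⟩
                  exact ⟨r, by simp [hr], her⟩))
            · rcases mem_usum.1 hus with ⟨r, hr, her⟩
              have hp := chain'_pairwise hGne hGc
              have : finLT g r := List.rel_of_pairwise_cons hp hr
              have h1 : e ∈ g := Finset.mem_of_mem_erase h
              exact lt_irrefl e (this e h1 e her))
          (by
            intro r hr
            apply le_mn (hGne r (by simp [hr]))
            intro e he
            have : w < e := hrest_gt e (mem_usum.2 ⟨r, hr, he⟩)
            omega)
          (fun r hr => h10 r (by simp [hr]))
      -- assemble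
      refine ⟨chunk :: out', by simp, ?_, ?_, ?_, ?_, ?_, ?_⟩
      · simp only [List.length_cons]
        have : rest.length + 1 + 1 = (g :: rest).length + 1 := by simp
        omega
      · intro f hf
        rcases List.mem_cons.1 hf with rfl | hf'
        · exact hchunk_ne
        · exact hone' f hf'
      · intro f hf
        rcases List.mem_cons.1 hf with rfl | hf'
        · exact hchunk_Sξ
        · exact hmem' f hf'
      · rw [List.isChain_cons]
        refine ⟨?_, hc'⟩
        intro y hy
        have hyo : y ∈ out' := by
          cases out' with
          | nil => simp at hy
          | cons f₀ t => simp only [List.head?_cons, Option.mem_some_iff] at hy; subst hy; simp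
        intro e he e' he'
        have h1 : e ≤ w := hchunk_le e he
        have h2 : w < e' := by
          have : e' ∈ usum out' := mem_usum.2 ⟨y, hyo, he'⟩
          rw [husum'] at this
          rcases Finset.mem_union.1 this with h | h
          · exact hcarry_gt e' h
          · exact hrest_gt e' h
        omega
      · -- usum
        rw [usum_cons, husum']
        ext e
        simp only [Finset.mem_union, usum_cons]
        constructor
        · rintro (hc | hc | hc)
          · rcases Finset.mem_union.1 hc with h | h
            · exact Or.inl (Finset.mem_filter.1 h).1
            · simp only [Finset.mem_singleton] at h; subst h
              exact Or.inr (Or.inl hwg)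
          · rcases Finset.mem_union.1 hc with h | h
            · exact Or.inl (Finset.mem_filter.1 h).1
            · exact Or.inr (Or.inl (Finset.mem_of_mem_erase h))
          · exact Or.inr (Or.inr hc)
        · rintro (hc | hc | hc)
          · rcases lt_trichotomy e w with h | h | h
            · exact Or.inl (Finset.mem_union_left _ (Finset.mem_filter.2 ⟨hc, h⟩))
            · exact absurd (h ▸ hc) hwA
            · exact Or.inr (Or.inl (Finset.mem_union_left _ (Finset.mem_filter.2 ⟨hc, h⟩)))
          · by_cases hew : e = w
            · exact Or.inl (Finset.mem_union_right _ (by simp [hew]))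
            · exact Or.inr (Or.inl (Finset.mem_union_right _ (Finset.mem_erase.2 ⟨hew, hc⟩)))
          · exact Or.inr (Or.inr hc)
      · -- Forall₂
        cases out' with
        | nil => exact absurd rfl hne'
        | cons f₀ out'' =>
          have h1 : (chunk :: f₀ :: out'').length - 1 = out''.length + 1 := by simp
          rw [h1]
          have h2 : (g :: rest).take (out''.length + 1) = g :: rest.take out''.length := by simp
          rw [h2]
          simp only [List.tail_cons]
          refine List.Forall₂.cons ?_ ?_
          · -- mn g ≤ mn f₀
            have hf₀ne : f₀.Nonempty := hone' f₀ (by simp)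
            have : w < mn f₀ := by
              have hm : mn f₀ ∈ usum (f₀ :: out'') := mem_usum.2 ⟨f₀, by simp, mn_mem hf₀ne⟩
              rw [husum'] at hm
              rcases Finset.mem_union.1 hm with h | h
              · exact hcarry_gt _ h
              · exact hrest_gt _ h
            omega
          · have h3 : (f₀ :: out'').length - 1 = out''.length := by simp
            rw [h3] at hdom'
            simpa using hdom'

end SchreierSystem

namespace SchreierSystem
variable (𝒮 : SchreierSystem)

lemma R0_limit (ξ : Ordinal) (hlim : Order.IsSuccLimit ξ) (hξ : ξ < omegaOne)
    (HR : ∀ δ, δ < ξ → RStmt 𝒮 δ) : R0Stmt 𝒮 ξ := by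
  have hSeq := 𝒮.S_limit ξ hlim hξ
  intro rows
  induction rows with
  | nil =>
    intro _ _ _ _
    exact ⟨[], by simp, by simp, by simp, by simp, by simp, by simp⟩
  | cons r₀ tail ih =>
    intro hsort hdisj hne hmem
    rw [List.map_cons, List.Sorted, List.pairwise_cons] at hsort
    obtain ⟨hsort0, hsortt⟩ := hsort
    obtain ⟨Gs, hGlen, hGne, hGmem, hGc, hGusum, hGdom⟩ :=
      ih hsortt hdisj.of_cons (fun r hr => hne r (by simp [hr]))
        (fun r hr => hmem r (by simp [hr]))
    obtain ⟨p, hp1, hple, hpmem⟩ : ∃ p, 1 ≤ p ∧ finLE p r₀ ∧ r₀ ∈ 𝒮.S (𝒮.α ξ p) := by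
      have := hmem r₀ (by simp)
      rw [hSeq] at this
      exact this
    have hr0ne : r₀.Nonempty := hne r₀ (by simp)
    have hppv : p ≤ mn r₀ := le_mn hr0ne hple
    have hv01 : 1 ≤ mn r₀ := le_trans hp1 hppv
    -- every element of every row is ≥ mn r₀
    have hall_ge : ∀ e ∈ usum (r₀ :: tail), mn r₀ ≤ e := by
      intro e he
      rcases mem_usum.1 he with ⟨r, hr, her⟩
      rcases List.mem_cons.1 hr with rfl | hr'
      · exact mn_le her
      · calc mn r₀ ≤ mn r := hsort0 (mn r) (List.mem_map_of_mem (f := mn) hr')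
        _ ≤ e := mn_le her
    have htail_ge : ∀ e ∈ usum tail, mn r₀ ≤ e := by
      intro e he
      apply hall_ge
      rcases mem_usum.1 he with ⟨r, hr, her⟩
      exact mem_usum.2 ⟨r, by simp [hr], her⟩
    have hdisj0 : Disjoint r₀ (usum tail) := by
      apply Finset.disjoint_left.2
      intro e he hus
      rcases mem_usum.1 hus with ⟨r, hr, her⟩
      exact Finset.disjoint_left.1 (List.rel_of_pairwise_cons hdisj hr) he her
    by_cases h1 : mn r₀ = 1
    · -- the first row is {1}
      have h1r : (1 : ℕ) ∈ r₀ := h1 ▸ mn_mem hr0ne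
      have hp1' : p = 1 := by omega
      have hr0mem : r₀ ∈ 𝒮.S 1 := by
        have := hpmem
        rw [hp1', 𝒮.α_one ξ hlim hξ] at this
        exact this
      have hr0eq : r₀ = {1} := 𝒮.mem_S_one_of_one_mem hr0mem h1r
      have h1S : ({1} : Finset ℕ) ∈ 𝒮.S ξ := by
        rw [hSeq]
        refine ⟨1, le_rfl, ?_, ?_⟩
        · intro e he; simp only [Finset.mem_singleton] at he; omega
        · exact 𝒮.singleton_mem _ (lt_trans (𝒮.α_lt ξ hlim hξ 1 le_rfl) hξ) 1 le_rfl
      refine ⟨{1} :: Gs, by simpa using Nat.succ_le_succ hGlen, ?_, ?_, ?_, ?_, ?_⟩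
      · intro f hf
        rcases List.mem_cons.1 hf with rfl | hf'
        · simp
        · exact hGne f hf'
      · intro f hf
        rcases List.mem_cons.1 hf with rfl | hf'
        · exact h1S
        · exact hGmem f hf'
      · rw [List.isChain_cons]
        refine ⟨?_, hGc⟩
        intro y hy
        have hyo : y ∈ Gs := by
          cases Gs with
          | nil => simp at hy
          | cons f₀ t => simp only [List.head?_cons, Option.mem_some_iff] at hy; subst hy; simp
        intro e he e' he'
        simp only [Finset.mem_singleton] at he; subst he
        have h2 : e' ∈ usum tail := by rw [← hGusum]; exact mem_usum.2 ⟨y, hyo, he'⟩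
        have h3 := htail_ge e' h2
        have h4 : e' ≠ 1 := by
          intro hc
          subst hc
          exact Finset.disjoint_left.1 hdisj0 h1r h2
        omega
      · rw [usum_cons, usum_cons, hGusum, hr0eq]
      · have ht : ((r₀ :: tail).map mn).take (({1} :: Gs).length)
            = mn r₀ :: (tail.map mn).take Gs.length := by simp
        rw [ht]
        refine List.Forall₂.cons ?_ hGdom
        have : mn ({1} : Finset ℕ) = 1 := by
          have : (1:ℕ) ∈ ({1} : Finset ℕ) := by simp
          have h5 := mn_le this
          have h6 : 1 ≤ mn ({1} : Finset ℕ) := le_mn (by simp) (by simp)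
          omega
        rw [h1, this]
    · -- mn r₀ ≥ 2 : use the carrying loop
      have hv02 : 2 ≤ mn r₀ := by omega
      obtain ⟨out, hone0, holen, hone, homem, hoc, housum, hodom⟩ :=
        𝒮.limit_loop ξ hlim hξ HR Gs r₀ p hr0ne hpmem hp1 hple
          (fun e he => le_trans hv02 (mn_le he))
          hGne hGmem hGc
          (by rw [hGusum]; exact hdisj0)
          (by
            intro g hg
            apply le_mn (hGne g hg)
            intro e he
            have : e ∈ usum tail := by rw [← hGusum]; exact mem_usum.2 ⟨g, hg, he⟩
            exact le_trans hppv (htail_ge e this))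
          (by
            intro g hg
            apply le_mn (hGne g hg)
            intro e he
            have : e ∈ usum tail := by rw [← hGusum]; exact mem_usum.2 ⟨g, hg, he⟩
            exact le_trans hv02 (htail_ge e this))
      have housum' : usum out = usum (r₀ :: tail) := by
        rw [housum, hGusum, usum_cons]
      refine ⟨out, ?_, hone, homem, hoc, housum', ?_⟩
      · calc out.length ≤ Gs.length + 1 := holen
        _ ≤ tail.length + 1 := Nat.succ_le_succ hGlen
        _ = (r₀ :: tail).length := by simp
      · -- domination
        cases out with
        | nil => exact absurd rfl hone0
        | cons o₀ out_t =>
          have hlent : out_t.length ≤ Gs.length := by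
            simp only [List.length_cons] at holen
            omega
          have ht : ((r₀ :: tail).map mn).take ((o₀ :: out_t).length)
              = mn r₀ :: (tail.map mn).take out_t.length := by simp
          rw [ht]
          refine List.Forall₂.cons ?_ ?_
          · -- mn r₀ ≤ mn o₀
            have ho₀ne : o₀.Nonempty := hone o₀ (by simp)
            have : mn o₀ ∈ usum (r₀ :: tail) := by
              rw [← housum']
              exact mem_usum.2 ⟨o₀, by simp, mn_mem ho₀ne⟩
            exact hall_ge _ this
          · -- compose the two Forall₂'s
            simp only [List.length_cons, Nat.add_sub_cancel, List.tail_cons] at hodom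
            rw [List.forall₂_iff_get]
            have hGdget := List.forall₂_iff_get.1 hGdom
            have hodget := List.forall₂_iff_get.1 hodom
            have hlen1 : ((tail.map mn).take out_t.length).length = out_t.length := by
              rw [List.length_take]
              have h5 : out_t.length ≤ (tail.map mn).length := by
                rw [List.length_map]
                exact le_trans hlent hGlen
              omega
            refine ⟨hlen1, ?_⟩
            intro i hi1 hi2
            have hiG : i < Gs.length := lt_of_lt_of_le hi2 hlent
            have hto : i < (Gs.take out_t.length).length := by
              rw [List.length_take]; omega
            have htG : i < ((tail.map mn).take Gs.length).length := by
              rw [List.length_take, List.length_map]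
              have := hGlen
              omega
            have h6 := hGdget.2 i htG hiG
            have h7 := hodget.2 i hto hi2
            have e1 : ((tail.map mn).take out_t.length).get ⟨i, hi1⟩
                = ((tail.map mn).take Gs.length).get ⟨i, htG⟩ := by
              simp [List.getElem_take]
            have e2 : (Gs.take out_t.length).get ⟨i, hto⟩ = Gs.get ⟨i, hiG⟩ := by
              simp [List.getElem_take]
            rw [e1]
            calc ((tail.map mn).take Gs.length).get ⟨i, htG⟩
                ≤ mn (Gs.get ⟨i, hiG⟩) := h6
            _ = mn ((Gs.take out_t.length).get ⟨i, hto⟩) := by rw [e2]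
            _ ≤ mn (out_t.get ⟨i, hi2⟩) := h7

lemma R_all : ∀ γ : Ordinal, γ < omegaOne → RStmt 𝒮 γ := by
  intro γ
  induction γ using Ordinal.induction with
  | _ γ IH =>
    intro hγ
    apply R0_to_R
    rcases Ordinal.zero_or_succ_or_isSuccLimit γ with h0 | ⟨β, hβ⟩ | hlim
    · subst h0; exact 𝒮.R0_zero
    · subst hβ
      rw [← Ordinal.add_one_eq_succ] at *
      have hβlt : β < β + 1 := by rw [Ordinal.add_one_eq_succ]; exact Order.lt_succ β
      exact 𝒮.R0_succ β (IH β hβlt (lt_trans hβlt hγ))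
    · exact 𝒮.R0_limit γ hlim hγ (fun δ hδ => IH δ hδ (lt_trans hδ hγ))

end SchreierSystem


namespace SchreierSystem
variable (𝒮 : SchreierSystem)

lemma succStepM_sub (γ : Ordinal) (hγ : γ < omegaOne) :
    succStepM (𝒮.S γ) ⊆ 𝒮.S (γ + 1) := by
  rintro A ⟨n, E, hmem, hne, hdisj, hle, rfl⟩
  have hrows : ∀ b ∈ List.ofFn E, ∃ i : Fin n, E i = b := by
    intro b hb
    rcases (List.mem_ofFn).1 hb with ⟨i, hi⟩
    exact ⟨i, hi⟩
  obtain ⟨out, holen, hone, homem, hoc, housum, -⟩ :=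
    𝒮.R_all γ hγ (List.ofFn E)
      (by
        apply List.pairwise_ofFn.2
        intro i j hij
        exact hdisj i j (ne_of_lt hij))
      (by intro b hb; rcases hrows b hb with ⟨i, rfl⟩; exact hne i)
      (by intro b hb; rcases hrows b hb with ⟨i, rfl⟩; exact hmem i)
  rw [𝒮.S_succ]
  apply mem_succStep_list.2
  refine ⟨out, homem, hone, hoc, ?_, by rw [housum, usum_ofFn]⟩
  intro b hb a ha
  have h1 : a ∈ usum out := mem_usum.2 ⟨b, hb, ha⟩
  rw [housum, usum_ofFn] at h1
  rcases Finset.mem_biUnion.1 h1 with ⟨i, -, hai⟩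
  have h2 : n ≤ a := hle i a hai
  have h3 : out.length ≤ n := by
    calc out.length ≤ (List.ofFn E).length := holen
    _ = n := by simp
  omega

lemma succStep_sub_M (F : Set (Finset ℕ)) : succStep F ⊆ succStepM F := by
  rintro A ⟨n, E, hmem, hne, hlt, hle, rfl⟩
  refine ⟨n, E, hmem, hne, ?_, hle, rfl⟩
  intro i j hij
  rcases lt_or_gt_of_ne hij with h | h
  · exact (hlt i j h).disjoint
  · exact ((hlt j i h).disjoint).symm

end SchreierSystem

theorem schreier_eq_modified' (𝒮 : ModSchreierSystem) (ξ : Ordinal)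
    (h1 : 1 ≤ ξ) (hξ : ξ < omegaOne) :
    𝒮.S ξ = 𝒮.SM ξ := by
  induction ξ using Ordinal.induction with
  | _ ξ IH =>
    rcases Ordinal.zero_or_succ_or_isSuccLimit ξ with h0 | ⟨γ, hγ⟩ | hlim
    · subst h0
      exact absurd h1 (by simp)
    · subst hγ
      rw [← Ordinal.add_one_eq_succ] at *
      have hγlt : γ < γ + 1 := by rw [Ordinal.add_one_eq_succ]; exact Order.lt_succ γ
      have hγω : γ < omegaOne := lt_trans hγlt hξ
      have hSMγ : 𝒮.S γ = 𝒮.SM γ := by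
        rcases eq_or_ne γ 0 with rfl | hγ0
        · rw [𝒮.S_zero, 𝒮.SM_zero]
        · exact IH γ hγlt (Ordinal.one_le_iff_ne_zero.2 hγ0) hγω
      apply Set.Subset.antisymm
      · rw [𝒮.S_succ, 𝒮.SM_succ, hSMγ]
        exact SchreierSystem.succStep_sub_M _
      · rw [𝒮.SM_succ, ← hSMγ]
        exact 𝒮.succStepM_sub γ hγω
    · rw [𝒮.S_limit ξ hlim hξ, 𝒮.SM_limit ξ hlim hξ]
      ext E
      simp only [Set.mem_setOf_eq]
      constructor
      · rintro ⟨n, hn1, hnle, hE⟩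
        refine ⟨n, hn1, hnle, ?_⟩
        rw [← IH (𝒮.α ξ n) (𝒮.α_lt ξ hlim hξ n hn1) (𝒮.α_pos ξ hlim hξ n hn1)
          (lt_trans (𝒮.α_lt ξ hlim hξ n hn1) hξ)]
        exact hE
      · rintro ⟨n, hn1, hnle, hE⟩
        refine ⟨n, hn1, hnle, ?_⟩
        rw [IH (𝒮.α ξ n) (𝒮.α_lt ξ hlim hξ n hn1) (𝒮.α_pos ξ hlim hξ n hn1)
          (lt_trans (𝒮.α_lt ξ hlim hξ n hn1) hξ)]
        exact hE

/-- For every countable ordinal `1 ≤ ξ < ω₁`, the Schreier family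
coincides with its modified version: `S_ξ = S^M_ξ`. -/
theorem schreier_eq_modified (𝒮 : ModSchreierSystem) (ξ : Ordinal)
    (h1 : 1 ≤ ξ) (hξ : ξ < omegaOne) :
    𝒮.S ξ = 𝒮.SM ξ := by
  exact schreier_eq_modified' 𝒮 ξ h1 hξ
end
end
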